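/- arXiv:1702.00781 — 10 statements merged into one kernel-verified Lean document; each statement's English description precedes it below -/
import Mathlib

section
/- Let g ∈ ℕ³ and let P_g = {c ∈ ℕ³ : c ≤ g componentwise}. Let U be a nonempty up set of P_g (i.e., if c ∈ U and c ≤ d ≤ g then d ∈ U) whose complement D = P_g \ U is also nonempty. Then sdepth_g(U) > sdepth_g(D). (This is the combinatorial form, via Herzog–Vladoiu–Zheng, of: for every monomial ideal I of S = K[x₁,x₂,x₃], sdepth I > sdepth S/I.) -/
open Finset

/-- An interval partition of a finite family `Q ⊆ ℕ³` (with the componentwise order):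
a finite collection of nonempty intervals `[a,b]`, each contained in `Q`, pairwise
disjoint, and covering `Q`. -/
structure IntervalPartitionN3 (Q : Finset (Fin 3 → ℕ)) where
  pairs : Finset ((Fin 3 → ℕ) × (Fin 3 → ℕ))
  le : ∀ p ∈ pairs, p.1 ≤ p.2
  sub : ∀ p ∈ pairs, Finset.Icc p.1 p.2 ⊆ Q
  disj : ∀ p ∈ pairs, ∀ q ∈ pairs, p ≠ q →
    Disjoint (Finset.Icc p.1 p.2) (Finset.Icc q.1 q.2)
  covers : ∀ c ∈ Q, ∃ p ∈ pairs, c ∈ Finset.Icc p.1 p.2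

/-- `α_g(b)`: the number of coordinates where `b` agrees with `g`. -/
def alphaG (g b : Fin 3 → ℕ) : ℕ := (Finset.univ.filter (fun i => b i = g i)).card

/-- The Stanley depth relative to `g`: the largest `k` such that some interval
partition of `Q` has `α_g(b) ≥ k` for the upper bound `b` of every interval. -/
noncomputable def sdepthG (g : Fin 3 → ℕ) (Q : Finset (Fin 3 → ℕ)) : ℕ :=
  sSup {k | ∃ P : IntervalPartitionN3 Q, ∀ p ∈ P.pairs, k ≤ alphaG g p.2}

/-! ### Auxiliary infrastructure -/

namespace SdepthAux

/-- The point `(x, y, z) ∈ ℕ³`. -/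
def pt (x y z : ℕ) : Fin 3 → ℕ := fun i => if i = 0 then x else if i = 1 then y else z

@[simp] lemma pt0 (x y z : ℕ) : pt x y z 0 = x := rfl
@[simp] lemma pt1 (x y z : ℕ) : pt x y z 1 = y := rfl
@[simp] lemma pt2 (x y z : ℕ) : pt x y z 2 = z := rfl

lemma pt_ext (c : Fin 3 → ℕ) : pt (c 0) (c 1) (c 2) = c := by
  funext i; fin_cases i <;> rfl

lemma le3 {a b : Fin 3 → ℕ} : a ≤ b ↔ a 0 ≤ b 0 ∧ a 1 ≤ b 1 ∧ a 2 ≤ b 2 := by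
  constructor
  · intro h; exact ⟨h 0, h 1, h 2⟩
  · rintro ⟨h0, h1, h2⟩ i; fin_cases i <;> assumption

lemma mem_Icc3 {c a b : Fin 3 → ℕ} : c ∈ Finset.Icc a b ↔
    (a 0 ≤ c 0 ∧ a 1 ≤ c 1 ∧ a 2 ≤ c 2) ∧ (c 0 ≤ b 0 ∧ c 1 ≤ b 1 ∧ c 2 ≤ b 2) := by
  rw [Finset.mem_Icc, le3, le3]

lemma alpha_le_three (g b : Fin 3 → ℕ) : alphaG g b ≤ 3 := by
  have := Finset.card_filter_le (Finset.univ : Finset (Fin 3)) (fun i => b i = g i)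
  exact this.trans (by simp)

lemma alpha_eq_three (g b : Fin 3 → ℕ) (h : 3 ≤ alphaG g b) : b = g := by
  have hcard : (Finset.univ : Finset (Fin 3)).card = 3 := by simp
  have heq : Finset.univ.filter (fun i => b i = g i) = Finset.univ := by
    apply Finset.eq_of_subset_of_card_le (Finset.filter_subset _ _)
    unfold alphaG at h; omega
  funext i
  have : i ∈ Finset.univ.filter (fun i => b i = g i) := by rw [heq]; exact Finset.mem_univ i
  exact (Finset.mem_filter.mp this).2

lemma alpha_exists_one (g b : Fin 3 → ℕ) (h : 1 ≤ alphaG g b) : ∃ i, b i = g i := by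
  obtain ⟨i, hi⟩ := Finset.card_pos.mp h
  exact ⟨i, (Finset.mem_filter.mp hi).2⟩

/-- From `α ≥ 2`: at most one bad coordinate. -/
lemma alpha_ge_two (g b : Fin 3 → ℕ) (h : 2 ≤ alphaG g b) : ∃ k, ∀ i, i ≠ k → b i = g i := by
  classical
  set S := Finset.univ.filter (fun i => ¬ b i = g i) with hS
  have hcard : (Finset.univ.filter (fun i => b i = g i)).card + S.card = 3 := by
    rw [hS, Finset.card_filter_add_card_filter_not]; simp
  have hScard : S.card ≤ 1 := by unfold alphaG at h; omega
  rcases S.eq_empty_or_nonempty with he | ⟨k, hk⟩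
  · refine ⟨0, fun i _ => ?_⟩
    by_contra hb
    have : i ∈ S := by rw [hS]; simp [hb]
    simp [he] at this
  · refine ⟨k, fun i hik => ?_⟩
    by_contra hb
    have hi : i ∈ S := by rw [hS]; simp [hb]
    have : ({i, k} : Finset (Fin 3)).card ≤ S.card := by
      apply Finset.card_le_card
      intro j hj
      rcases Finset.mem_insert.mp hj with rfl | hj
      · exact hi
      · rwa [Finset.mem_singleton.mp hj]
    rw [Finset.card_insert_of_notMem (by simpa using hik), Finset.card_singleton] at this
    omega

lemma alpha_of_two_coords (g b : Fin 3 → ℕ) (i j : Fin 3) (hij : i ≠ j)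
    (hi : b i = g i) (hj : b j = g j) : 2 ≤ alphaG g b := by
  have hsub : ({i, j} : Finset (Fin 3)) ⊆ Finset.univ.filter (fun k => b k = g k) := by
    intro k hk
    rcases Finset.mem_insert.mp hk with rfl | hk
    · simp [hi]
    · rw [Finset.mem_singleton.mp hk]; simp [hj]
  have := Finset.card_le_card hsub
  rwa [Finset.card_insert_of_notMem (by simpa using hij), Finset.card_singleton] at this

lemma alpha_self (g : Fin 3 → ℕ) : alphaG g g = 3 := by
  unfold alphaG; simp

lemma alpha_of_one_coord (g b : Fin 3 → ℕ) (i : Fin 3) (hi : b i = g i) : 1 ≤ alphaG g b := by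
  refine Finset.card_pos.mpr ⟨i, ?_⟩
  simp [hi]

end SdepthAux

open SdepthAux

section Main

variable (g : Fin 3 → ℕ) (U : Finset (Fin 3 → ℕ))

/-- The set of values whose sup is `sdepthG`. -/
def sdSet (Q : Finset (Fin 3 → ℕ)) : Set ℕ :=
  {k | ∃ P : IntervalPartitionN3 Q, ∀ p ∈ P.pairs, k ≤ alphaG g p.2}

lemma sdepthG_eq (Q : Finset (Fin 3 → ℕ)) : sdepthG g Q = sSup (sdSet g Q) := rfl

lemma sdSet_bddAbove (Q : Finset (Fin 3 → ℕ)) (hQ : Q.Nonempty) : BddAbove (sdSet g Q) := by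
  refine ⟨3, fun k hk => ?_⟩
  obtain ⟨P, hP⟩ := hk
  obtain ⟨c, hc⟩ := hQ
  obtain ⟨p, hp, _⟩ := P.covers c hc
  exact (hP p hp).trans (alpha_le_three g p.2)

lemma le_sdepthG {Q : Finset (Fin 3 → ℕ)} (hQ : Q.Nonempty) {k : ℕ} (hk : k ∈ sdSet g Q) :
    k ≤ sdepthG g Q := le_csSup (sdSet_bddAbove g Q hQ) hk

lemma sdepthG_mem {Q : Finset (Fin 3 → ℕ)} (hQ : Q.Nonempty) (h : sdepthG g Q ≠ 0) :
    sdepthG g Q ∈ sdSet g Q := by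
  have hne : (sdSet g Q).Nonempty := by
    by_contra he
    rw [Set.not_nonempty_iff_eq_empty] at he
    rw [sdepthG_eq, he, csSup_empty] at h
    exact h rfl
  exact Nat.sSup_mem hne (sdSet_bddAbove g Q hQ)

lemma sdSet_down {Q : Finset (Fin 3 → ℕ)} {k l : ℕ} (hl : l ≤ k) (hk : k ∈ sdSet g Q) :
    l ∈ sdSet g Q := by
  obtain ⟨P, hP⟩ := hk
  exact ⟨P, fun p hp => hl.trans (hP p hp)⟩

end Main


/-! ### The fiber partition: `sdepth U ≥ 1` for a nonempty up set `U`. -/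

section Fiber

variable (g : Fin 3 → ℕ) (U : Finset (Fin 3 → ℕ))

lemma memU_le (hUsub : U ⊆ Finset.Icc 0 g) {c : Fin 3 → ℕ} (hc : c ∈ U) (i : Fin 3) :
    c i ≤ g i := ((Finset.mem_Icc.mp (hUsub hc)).2) i

lemma up3 (hup : ∀ c ∈ U, ∀ d, c ≤ d → d ≤ g → d ∈ U)
    {x y t x' y' t' : ℕ} (h : pt x y t ∈ U) (hx : x ≤ x') (hy : y ≤ y') (ht : t ≤ t')
    (hx' : x' ≤ g 0) (hy' : y' ≤ g 1) (ht' : t' ≤ g 2) : pt x' y' t' ∈ U := by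
  refine hup _ h _ (le3.mpr ?_) (le3.mpr ?_) <;> simp_all

/-- The fiber of `U` in direction `0` over `(x2, t)`. -/
def fibSet (x2 t : ℕ) : Finset ℕ := (Finset.range (g 0 + 1)).filter fun x => pt x x2 t ∈ U

noncomputable def fmin (x2 t : ℕ) : ℕ :=
  if h : (fibSet g U x2 t).Nonempty then (fibSet g U x2 t).min' h else 0

lemma fmin_mem {x2 t : ℕ} (h : (fibSet g U x2 t).Nonempty) :
    fmin g U x2 t ∈ fibSet g U x2 t := by
  rw [fmin, dif_pos h]; exact Finset.min'_mem _ h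

lemma fmin_le {x2 t x : ℕ} (hx : x ∈ fibSet g U x2 t) : fmin g U x2 t ≤ x := by
  rw [fmin, dif_pos ⟨x, hx⟩]; exact Finset.min'_le _ _ hx

noncomputable def fibPieces : Finset ((Fin 3 → ℕ) × (Fin 3 → ℕ)) :=
  ((Finset.range (g 1 + 1) ×ˢ Finset.range (g 2 + 1)).filter
      fun q => (fibSet g U q.1 q.2).Nonempty).image
    fun q => (pt (fmin g U q.1 q.2) q.1 q.2, pt (g 0) q.1 q.2)

lemma mem_fibPieces {p : (Fin 3 → ℕ) × (Fin 3 → ℕ)} :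
    p ∈ fibPieces g U ↔ ∃ x2 t, x2 ≤ g 1 ∧ t ≤ g 2 ∧ (fibSet g U x2 t).Nonempty ∧
      p = (pt (fmin g U x2 t) x2 t, pt (g 0) x2 t) := by
  constructor
  · intro hp
    obtain ⟨q, hq, hqp⟩ := Finset.mem_image.mp hp
    obtain ⟨hq1, hq2⟩ := Finset.mem_filter.mp hq
    obtain ⟨ha, hb⟩ := Finset.mem_product.mp hq1
    exact ⟨q.1, q.2, Nat.lt_succ_iff.mp (Finset.mem_range.mp ha),
      Nat.lt_succ_iff.mp (Finset.mem_range.mp hb), hq2, hqp.symm⟩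
  · rintro ⟨x2, t, h1, h2, h3, rfl⟩
    refine Finset.mem_image.mpr ⟨(x2, t), Finset.mem_filter.mpr ⟨?_, h3⟩, rfl⟩
    exact Finset.mem_product.mpr ⟨Finset.mem_range.mpr (Nat.lt_succ_iff.mpr h1),
      Finset.mem_range.mpr (Nat.lt_succ_iff.mpr h2)⟩

/-- The fiber partition shows `1 ∈ sdSet g U`. -/
lemma one_mem_sdSet (hUsub : U ⊆ Finset.Icc 0 g)
    (hup : ∀ c ∈ U, ∀ d, c ≤ d → d ≤ g → d ∈ U) : 1 ∈ sdSet g U := by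
  refine ⟨⟨fibPieces g U, ?_, ?_, ?_, ?_⟩, ?_⟩
  · -- le
    intro p hp
    obtain ⟨x2, t, h1, h2, h3, rfl⟩ := (mem_fibPieces g U).mp hp
    have := fmin_mem g U h3
    rw [fibSet, Finset.mem_filter, Finset.mem_range, Nat.lt_succ_iff] at this
    refine le3.mpr ?_; simp [this.1]
  · -- sub
    intro p hp c hc
    obtain ⟨x2, t, h1, h2, h3, rfl⟩ := (mem_fibPieces g U).mp hp
    rw [mem_Icc3] at hc
    simp only [pt0, pt1, pt2] at hc
    obtain ⟨⟨ha0, ha1, ha2⟩, ⟨hb0, hb1, hb2⟩⟩ := hc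
    have hmin := fmin_mem g U h3
    rw [fibSet, Finset.mem_filter] at hmin
    have : pt (c 0) (c 1) (c 2) ∈ U := by
      have h12 : c 1 = x2 := le_antisymm hb1 ha1
      have h22 : c 2 = t := le_antisymm hb2 ha2
      rw [h12, h22]
      exact up3 g U hup hmin.2 ha0 le_rfl le_rfl hb0 h1 h2
    rwa [pt_ext] at this
  · -- disj
    intro p hp q hq hpq
    obtain ⟨x2, t, h1, h2, h3, rfl⟩ := (mem_fibPieces g U).mp hp
    obtain ⟨x2', t', h1', h2', h3', rfl⟩ := (mem_fibPieces g U).mp hq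
    rw [Finset.disjoint_left]
    intro c hc hc'
    rw [mem_Icc3] at hc hc'
    simp only [pt0, pt1, pt2] at hc hc'
    have e1 : x2 = x2' := by
      have := hc.1.2.1; have := hc.2.2.1; have := hc'.1.2.1; have := hc'.2.2.1; omega
    have e2 : t = t' := by
      have := hc.1.2.2; have := hc.2.2.2; have := hc'.1.2.2; have := hc'.2.2.2; omega
    exact hpq (by rw [e1, e2])
  · -- covers
    intro c hc
    have hc0 : c 0 ≤ g 0 := memU_le g U hUsub hc 0
    have hc1 : c 1 ≤ g 1 := memU_le g U hUsub hc 1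
    have hc2 : c 2 ≤ g 2 := memU_le g U hUsub hc 2
    have hfib : c 0 ∈ fibSet g U (c 1) (c 2) := by
      rw [fibSet, Finset.mem_filter, Finset.mem_range, Nat.lt_succ_iff]
      exact ⟨hc0, by rwa [pt_ext]⟩
    refine ⟨_, (mem_fibPieces g U).mpr ⟨c 1, c 2, hc1, hc2, ⟨_, hfib⟩, rfl⟩, ?_⟩
    rw [mem_Icc3]
    simp only [pt0, pt1, pt2]
    exact ⟨⟨fmin_le g U hfib, le_rfl, le_rfl⟩, ⟨hc0, le_rfl, le_rfl⟩⟩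
  · -- alpha bound
    intro p hp
    obtain ⟨x2, t, h1, h2, h3, rfl⟩ := (mem_fibPieces g U).mp hp
    exact alpha_of_one_coord g _ 0 rfl

end Fiber

/-! ### The column/row partition: `sdepth U ≥ 2` under the necessary condition NC. -/

section ColRow

variable (g : Fin 3 → ℕ) (U : Finset (Fin 3 → ℕ))

/-- The column of `U` at `(x1, ·, t)`. -/
def colSet (x1 t : ℕ) : Finset ℕ := (Finset.range (g 1 + 1)).filter fun y => pt x1 y t ∈ U
/-- The row of `U` at `(·, x2, t)`. -/
def rowSet (x2 t : ℕ) : Finset ℕ := (Finset.range (g 0 + 1)).filter fun x => pt x x2 t ∈ U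
/-- The top row of `U` at level `t`. -/
def topSet (t : ℕ) : Finset ℕ := (Finset.range (g 0 + 1)).filter fun x => pt x (g 1) t ∈ U

noncomputable def cmin (x1 t : ℕ) : ℕ :=
  if h : (colSet g U x1 t).Nonempty then (colSet g U x1 t).min' h else 0
noncomputable def rmin (x2 t : ℕ) : ℕ :=
  if h : (rowSet g U x2 t).Nonempty then (rowSet g U x2 t).min' h else 0
noncomputable def amin (t : ℕ) : ℕ :=
  if h : (topSet g U t).Nonempty then (topSet g U t).min' h else 0

lemma cmin_mem {x1 t : ℕ} (h : (colSet g U x1 t).Nonempty) :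
    cmin g U x1 t ∈ colSet g U x1 t := by
  rw [cmin, dif_pos h]; exact Finset.min'_mem _ h
lemma cmin_le {x1 t y : ℕ} (hy : y ∈ colSet g U x1 t) : cmin g U x1 t ≤ y := by
  rw [cmin, dif_pos ⟨y, hy⟩]; exact Finset.min'_le _ _ hy
lemma rmin_le {x2 t x : ℕ} (hx : x ∈ rowSet g U x2 t) : rmin g U x2 t ≤ x := by
  rw [rmin, dif_pos ⟨x, hx⟩]; exact Finset.min'_le _ _ hx
lemma rmin_mem {x2 t : ℕ} (h : (rowSet g U x2 t).Nonempty) :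
    rmin g U x2 t ∈ rowSet g U x2 t := by
  rw [rmin, dif_pos h]; exact Finset.min'_mem _ h
lemma amin_mem {t : ℕ} (h : (topSet g U t).Nonempty) : amin g U t ∈ topSet g U t := by
  rw [amin, dif_pos h]; exact Finset.min'_mem _ h
lemma amin_le {t x : ℕ} (hx : x ∈ topSet g U t) : amin g U t ≤ x := by
  rw [amin, dif_pos ⟨x, hx⟩]; exact Finset.min'_le _ _ hx

/-- A column is fresh at time `t` if it is nonempty but was empty at time `t-1`. -/
def ColFresh (x1 t : ℕ) : Prop :=
  (colSet g U x1 t).Nonempty ∧ (t = 0 ∨ ¬ (colSet g U x1 (t - 1)).Nonempty)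

/-- A row is fresh at time `t ≥ 1` if it is nonempty but was empty at time `t-1`,
and the top row at time `t-1` is nonempty. -/
def RowFresh (x2 t : ℕ) : Prop :=
  (rowSet g U x2 t).Nonempty ∧ t ≠ 0 ∧ ¬ (rowSet g U x2 (t - 1)).Nonempty ∧
    (topSet g U (t - 1)).Nonempty

open Classical in
noncomputable def colPieces : Finset ((Fin 3 → ℕ) × (Fin 3 → ℕ)) :=
  ((Finset.range (g 0 + 1) ×ˢ Finset.range (g 2 + 1)).filter
      fun q => ColFresh g U q.1 q.2).image
    fun q => (pt q.1 (cmin g U q.1 q.2) q.2, pt q.1 (g 1) (g 2))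

open Classical in
noncomputable def rowPieces : Finset ((Fin 3 → ℕ) × (Fin 3 → ℕ)) :=
  ((Finset.range (g 1 + 1) ×ˢ Finset.range (g 2 + 1)).filter
      fun q => RowFresh g U q.1 q.2).image
    fun q => (pt (max (rmin g U q.1 q.2) (amin g U (q.2 - 1))) q.1 q.2, pt (g 0) q.1 (g 2))

lemma mem_colPieces {p : (Fin 3 → ℕ) × (Fin 3 → ℕ)} :
    p ∈ colPieces g U ↔ ∃ x1 t, x1 ≤ g 0 ∧ t ≤ g 2 ∧ ColFresh g U x1 t ∧
      p = (pt x1 (cmin g U x1 t) t, pt x1 (g 1) (g 2)) := by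
  classical
  constructor
  · intro hp
    obtain ⟨q, hq, hqp⟩ := Finset.mem_image.mp hp
    obtain ⟨hq1, hq2⟩ := Finset.mem_filter.mp hq
    obtain ⟨ha, hb⟩ := Finset.mem_product.mp hq1
    exact ⟨q.1, q.2, Nat.lt_succ_iff.mp (Finset.mem_range.mp ha),
      Nat.lt_succ_iff.mp (Finset.mem_range.mp hb), hq2, hqp.symm⟩
  · rintro ⟨x1, t, h1, h2, h3, rfl⟩
    refine Finset.mem_image.mpr ⟨(x1, t), Finset.mem_filter.mpr ⟨?_, h3⟩, rfl⟩
    exact Finset.mem_product.mpr ⟨Finset.mem_range.mpr (Nat.lt_succ_iff.mpr h1),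
      Finset.mem_range.mpr (Nat.lt_succ_iff.mpr h2)⟩

lemma mem_rowPieces {p : (Fin 3 → ℕ) × (Fin 3 → ℕ)} :
    p ∈ rowPieces g U ↔ ∃ x2 t, x2 ≤ g 1 ∧ t ≤ g 2 ∧ RowFresh g U x2 t ∧
      p = (pt (max (rmin g U x2 t) (amin g U (t - 1))) x2 t, pt (g 0) x2 (g 2)) := by
  classical
  constructor
  · intro hp
    obtain ⟨q, hq, hqp⟩ := Finset.mem_image.mp hp
    obtain ⟨hq1, hq2⟩ := Finset.mem_filter.mp hq
    obtain ⟨ha, hb⟩ := Finset.mem_product.mp hq1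
    exact ⟨q.1, q.2, Nat.lt_succ_iff.mp (Finset.mem_range.mp ha),
      Nat.lt_succ_iff.mp (Finset.mem_range.mp hb), hq2, hqp.symm⟩
  · rintro ⟨x2, t, h1, h2, h3, rfl⟩
    refine Finset.mem_image.mpr ⟨(x2, t), Finset.mem_filter.mpr ⟨?_, h3⟩, rfl⟩
    exact Finset.mem_product.mpr ⟨Finset.mem_range.mpr (Nat.lt_succ_iff.mpr h1),
      Finset.mem_range.mpr (Nat.lt_succ_iff.mpr h2)⟩

variable (hUsub : U ⊆ Finset.Icc 0 g) (hup : ∀ c ∈ U, ∀ d, c ≤ d → d ≤ g → d ∈ U)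

section WithUp
include hUsub hup

lemma colSet_mono {x1 t t' : ℕ} (h : t ≤ t') (ht' : t' ≤ g 2) :
    colSet g U x1 t ⊆ colSet g U x1 t' := by
  intro y hy
  rw [colSet, Finset.mem_filter, Finset.mem_range, Nat.lt_succ_iff] at hy ⊢
  have hx1 : x1 ≤ g 0 := by have := memU_le g U hUsub hy.2 0; simpa using this
  exact ⟨hy.1, up3 g U hup hy.2 le_rfl le_rfl h hx1 hy.1 ht'⟩

lemma rowSet_mono {x2 t t' : ℕ} (h : t ≤ t') (ht' : t' ≤ g 2) :
    rowSet g U x2 t ⊆ rowSet g U x2 t' := by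
  intro x hx
  rw [rowSet, Finset.mem_filter, Finset.mem_range, Nat.lt_succ_iff] at hx ⊢
  have hx2 : x2 ≤ g 1 := by have := memU_le g U hUsub hx.2 1; simpa using this
  exact ⟨hx.1, up3 g U hup hx.2 le_rfl le_rfl h hx.1 hx2 ht'⟩

lemma colFresh_unique {x1 t t' : ℕ} (h : ColFresh g U x1 t) (h' : ColFresh g U x1 t')
    (ht : t ≤ g 2) (ht' : t' ≤ g 2) : t = t' := by
  rcases Nat.lt_trichotomy t t' with hlt | heq | hlt
  · exfalso
    rcases h'.2 with h0 | hempty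
    · omega
    · exact hempty ((h.1).mono (colSet_mono g U hUsub hup (by omega) (by omega)))
  · exact heq
  · exfalso
    rcases h.2 with h0 | hempty
    · omega
    · exact hempty ((h'.1).mono (colSet_mono g U hUsub hup (by omega) (by omega)))

lemma rowFresh_unique {x2 t t' : ℕ} (h : RowFresh g U x2 t) (h' : RowFresh g U x2 t')
    (ht : t ≤ g 2) (ht' : t' ≤ g 2) : t = t' := by
  rcases Nat.lt_trichotomy t t' with hlt | heq | hlt
  · exfalso
    exact h'.2.2.1 ((h.1).mono (rowSet_mono g U hUsub hup (by omega) (by omega)))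
  · exact heq
  · exfalso
    exact h.2.2.1 ((h'.1).mono (rowSet_mono g U hUsub hup (by omega) (by omega)))

/-- Core disjointness: a column piece and a row piece can never share a cell. -/
lemma colRow_nocommon {x1 t x2 t' : ℕ} (hx1 : x1 ≤ g 0) (ht : t ≤ g 2)
    (hx2 : x2 ≤ g 1) (ht' : t' ≤ g 2)
    (hcf : ColFresh g U x1 t) (hrf : RowFresh g U x2 t')
    {c : Fin 3 → ℕ}
    (hc : c ∈ Finset.Icc (pt x1 (cmin g U x1 t) t) (pt x1 (g 1) (g 2)))
    (hc' : c ∈ Finset.Icc (pt (max (rmin g U x2 t') (amin g U (t' - 1))) x2 t')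
      (pt (g 0) x2 (g 2))) : False := by
  rw [mem_Icc3] at hc hc'
  simp only [pt0, pt1, pt2] at hc hc'
  have hc0 : c 0 = x1 := le_antisymm hc.2.1 hc.1.1
  have hc1 : c 1 = x2 := le_antisymm hc'.2.2.1 hc'.1.2.1
  -- the cell (x1, x2, t) is in U
  have hmem : pt x1 x2 t ∈ U := by
    have h1 := cmin_mem g U hcf.1
    rw [colSet, Finset.mem_filter] at h1
    have hle : cmin g U x1 t ≤ x2 := by
      have := hc.1.2.1; omega
    exact up3 g U hup h1.2 le_rfl hle le_rfl hx1 hx2 ht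
  rcases Nat.lt_or_ge t t' with hlt | hge
  · -- t < t' : row x2 was nonempty at t'-1, contradiction with row freshness
    have : pt x1 x2 (t' - 1) ∈ U :=
      up3 g U hup hmem le_rfl le_rfl (by omega) hx1 hx2 (by omega)
    refine hrf.2.2.1 ⟨x1, ?_⟩
    rw [rowSet, Finset.mem_filter, Finset.mem_range, Nat.lt_succ_iff]
    exact ⟨hx1, this⟩
  · -- t' ≤ t : column x1 was nonempty at t-1, contradiction with column freshness
    have ht'0 : t' ≠ 0 := hrf.2.1
    have ht0 : t ≠ 0 := by omega
    rcases hcf.2 with h0 | hempty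
    · omega
    · -- amin (t'-1) ≤ c 0 = x1, so (x1, g 1, t'-1) ∈ U, hence column x1 nonempty at t-1
      have hamem := amin_mem g U hrf.2.2.2
      rw [topSet, Finset.mem_filter] at hamem
      have hale : amin g U (t' - 1) ≤ x1 := by
        have := hc'.1.1; omega
      have : pt x1 (g 1) (t - 1) ∈ U :=
        up3 g U hup hamem.2 hale le_rfl (by omega) hx1 le_rfl (by omega)
      refine hempty ⟨g 1, ?_⟩
      rw [colSet, Finset.mem_filter, Finset.mem_range, Nat.lt_succ_iff]
      exact ⟨le_rfl, this⟩

end WithUp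

/-- The set of times at which the cell `(x, y, ·)` belongs to `U`. -/
def appSet (x y : ℕ) : Finset ℕ := (Finset.range (g 2 + 1)).filter fun t => pt x y t ∈ U

noncomputable def appT (x y : ℕ) : ℕ :=
  if h : (appSet g U x y).Nonempty then (appSet g U x y).min' h else 0

lemma appT_mem {x y : ℕ} (h : (appSet g U x y).Nonempty) : appT g U x y ∈ appSet g U x y := by
  rw [appT, dif_pos h]; exact Finset.min'_mem _ h
lemma appT_le {x y t : ℕ} (ht : t ∈ appSet g U x y) : appT g U x y ≤ t := by
  rw [appT, dif_pos ⟨t, ht⟩]; exact Finset.min'_le _ _ ht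

/-- The column/row partition shows `2 ∈ sdSet g U`, assuming the necessary condition. -/
lemma two_mem_sdSet (hUsub : U ⊆ Finset.Icc 0 g)
    (hup : ∀ c ∈ U, ∀ d, c ≤ d → d ≤ g → d ∈ U)
    (hNC : ∀ x y t, x ≤ g 0 → y ≤ g 1 → t ≤ g 2 → pt x y t ∉ U → pt x y (g 2) ∈ U →
      pt (g 0) y t ∉ U ∨ pt x (g 1) t ∉ U) :
    2 ∈ sdSet g U := by
  refine ⟨⟨colPieces g U ∪ rowPieces g U, ?_, ?_, ?_, ?_⟩, ?_⟩
  · -- le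
    intro p hp
    rcases Finset.mem_union.mp hp with hp | hp
    · obtain ⟨x1, t, h1, h2, h3, rfl⟩ := (mem_colPieces g U).mp hp
      have hm := cmin_mem g U h3.1
      rw [colSet, Finset.mem_filter, Finset.mem_range, Nat.lt_succ_iff] at hm
      exact le3.mpr (by simp [hm.1, h2])
    · obtain ⟨x2, t, h1, h2, h3, rfl⟩ := (mem_rowPieces g U).mp hp
      have hm := rmin_mem g U h3.1
      rw [rowSet, Finset.mem_filter, Finset.mem_range, Nat.lt_succ_iff] at hm
      have ham := amin_mem g U h3.2.2.2
      rw [topSet, Finset.mem_filter, Finset.mem_range, Nat.lt_succ_iff] at ham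
      refine le3.mpr ?_
      simp only [pt0, pt1, pt2]
      exact ⟨max_le hm.1 ham.1, le_rfl, h2⟩
  · -- sub
    intro p hp c hc
    rcases Finset.mem_union.mp hp with hp | hp
    · obtain ⟨x1, t, h1, h2, h3, rfl⟩ := (mem_colPieces g U).mp hp
      rw [mem_Icc3] at hc
      simp only [pt0, pt1, pt2] at hc
      have hc0 : c 0 = x1 := le_antisymm hc.2.1 hc.1.1
      have hm := cmin_mem g U h3.1
      rw [colSet, Finset.mem_filter] at hm
      have : pt (c 0) (c 1) (c 2) ∈ U := by
        rw [hc0]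
        exact up3 g U hup hm.2 le_rfl hc.1.2.1 hc.1.2.2 h1 hc.2.2.1 hc.2.2.2
      rwa [pt_ext] at this
    · obtain ⟨x2, t, h1, h2, h3, rfl⟩ := (mem_rowPieces g U).mp hp
      rw [mem_Icc3] at hc
      simp only [pt0, pt1, pt2] at hc
      have hc1 : c 1 = x2 := le_antisymm hc.2.2.1 hc.1.2.1
      have hm := rmin_mem g U h3.1
      rw [rowSet, Finset.mem_filter] at hm
      have : pt (c 0) (c 1) (c 2) ∈ U := by
        rw [hc1]
        refine up3 g U hup hm.2 ?_ le_rfl hc.1.2.2 hc.2.1 h1 hc.2.2.2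
        have := hc.1.1; omega
      rwa [pt_ext] at this
  · -- disj
    intro p hp q hq hpq
    rw [Finset.disjoint_left]
    intro c hcp hcq
    rcases Finset.mem_union.mp hp with hp' | hp' <;> rcases Finset.mem_union.mp hq with hq' | hq'
    · obtain ⟨x1, t, h1, h2, h3, rfl⟩ := (mem_colPieces g U).mp hp'
      obtain ⟨x1', t', h1', h2', h3', rfl⟩ := (mem_colPieces g U).mp hq'
      rw [mem_Icc3] at hcp hcq
      simp only [pt0, pt1, pt2] at hcp hcq
      have e1 : x1 = x1' := by
        have := hcp.1.1; have := hcp.2.1; have := hcq.1.1; have := hcq.2.1; omega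
      subst e1
      have e2 : t = t' := colFresh_unique g U hUsub hup h3 h3' h2 h2'
      subst e2
      exact hpq rfl
    · obtain ⟨x1, t, h1, h2, h3, rfl⟩ := (mem_colPieces g U).mp hp'
      obtain ⟨x2, t', h1', h2', h3', rfl⟩ := (mem_rowPieces g U).mp hq'
      exact colRow_nocommon g U hUsub hup h1 h2 h1' h2' h3 h3' hcp hcq
    · obtain ⟨x2, t', h1', h2', h3', rfl⟩ := (mem_rowPieces g U).mp hp'
      obtain ⟨x1, t, h1, h2, h3, rfl⟩ := (mem_colPieces g U).mp hq'
      exact colRow_nocommon g U hUsub hup h1 h2 h1' h2' h3 h3' hcq hcp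
    · obtain ⟨x2, t, h1, h2, h3, rfl⟩ := (mem_rowPieces g U).mp hp'
      obtain ⟨x2', t', h1', h2', h3', rfl⟩ := (mem_rowPieces g U).mp hq'
      rw [mem_Icc3] at hcp hcq
      simp only [pt0, pt1, pt2] at hcp hcq
      have e1 : x2 = x2' := by
        have := hcp.1.2.1; have := hcp.2.2.1; have := hcq.1.2.1; have := hcq.2.2.1; omega
      subst e1
      have e2 : t = t' := rowFresh_unique g U hUsub hup h3 h3' h2 h2'
      subst e2
      exact hpq rfl
  · -- covers
    intro c hc
    have hc0 : c 0 ≤ g 0 := memU_le g U hUsub hc 0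
    have hc1 : c 1 ≤ g 1 := memU_le g U hUsub hc 1
    have hc2 : c 2 ≤ g 2 := memU_le g U hUsub hc 2
    have happ : c 2 ∈ appSet g U (c 0) (c 1) := by
      rw [appSet, Finset.mem_filter, Finset.mem_range, Nat.lt_succ_iff]
      exact ⟨hc2, by rwa [pt_ext]⟩
    set s := appT g U (c 0) (c 1) with hs
    have hsmem := appT_mem g U ⟨_, happ⟩
    rw [appSet, Finset.mem_filter, Finset.mem_range, Nat.lt_succ_iff] at hsmem
    obtain ⟨hsg2, hsU⟩ := hsmem
    have hsc2 : s ≤ c 2 := appT_le g U happ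
    by_cases hcase : s ≠ 0 ∧ (colSet g U (c 0) (s - 1)).Nonempty
    · -- row piece case
      obtain ⟨hs0, ⟨y0, hy0⟩⟩ := hcase
      rw [colSet, Finset.mem_filter, Finset.mem_range, Nat.lt_succ_iff] at hy0
      have htop : pt (c 0) (g 1) (s - 1) ∈ U :=
        up3 g U hup hy0.2 le_rfl hy0.1 le_rfl hc0 le_rfl (by omega)
      have hnot : pt (c 0) (c 1) (s - 1) ∉ U := by
        intro hmem
        have : s ≤ s - 1 := appT_le g U (by
          rw [appSet, Finset.mem_filter, Finset.mem_range, Nat.lt_succ_iff]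
          exact ⟨by omega, hmem⟩)
        omega
      have hctop : pt (c 0) (c 1) (g 2) ∈ U := by
        have : pt (c 0) (c 1) (c 2) ∈ U := by rwa [pt_ext]
        exact up3 g U hup this le_rfl le_rfl hc2 hc0 hc1 le_rfl
      have hrowempty : pt (g 0) (c 1) (s - 1) ∉ U := by
        rcases hNC (c 0) (c 1) (s - 1) hc0 hc1 (by omega) hnot hctop with h | h
        · exact h
        · exact absurd htop h
      have hrf : RowFresh g U (c 1) s := by
        refine ⟨⟨c 0, ?_⟩, hs0, ?_, ⟨c 0, ?_⟩⟩
        · rw [rowSet, Finset.mem_filter, Finset.mem_range, Nat.lt_succ_iff]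
          exact ⟨hc0, hsU⟩
        · rintro ⟨x, hx⟩
          rw [rowSet, Finset.mem_filter, Finset.mem_range, Nat.lt_succ_iff] at hx
          exact hrowempty (up3 g U hup hx.2 (by omega) le_rfl le_rfl le_rfl hc1 (by omega))
        · rw [topSet, Finset.mem_filter, Finset.mem_range, Nat.lt_succ_iff]
          exact ⟨hc0, htop⟩
      refine ⟨_, Finset.mem_union_right _ ((mem_rowPieces g U).mpr
        ⟨c 1, s, hc1, hsg2, hrf, rfl⟩), ?_⟩
      rw [mem_Icc3]
      simp only [pt0, pt1, pt2]
      refine ⟨⟨?_, le_rfl, hsc2⟩, ⟨hc0, le_rfl, hc2⟩⟩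
      refine max_le ?_ ?_
      · exact rmin_le g U (by
          rw [rowSet, Finset.mem_filter, Finset.mem_range, Nat.lt_succ_iff]
          exact ⟨hc0, hsU⟩)
      · exact amin_le g U (by
          rw [topSet, Finset.mem_filter, Finset.mem_range, Nat.lt_succ_iff]
          exact ⟨hc0, htop⟩)
    · -- column piece case
      have hcf : ColFresh g U (c 0) s := by
        refine ⟨⟨c 1, ?_⟩, ?_⟩
        · rw [colSet, Finset.mem_filter, Finset.mem_range, Nat.lt_succ_iff]
          exact ⟨hc1, hsU⟩
        · by_cases hs0 : s = 0
          · exact Or.inl hs0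
          · refine Or.inr fun hne => hcase ⟨hs0, hne⟩
      refine ⟨_, Finset.mem_union_left _ ((mem_colPieces g U).mpr
        ⟨c 0, s, hc0, hsg2, hcf, rfl⟩), ?_⟩
      rw [mem_Icc3]
      simp only [pt0, pt1, pt2]
      refine ⟨⟨le_rfl, ?_, hsc2⟩, ⟨le_rfl, hc1, hc2⟩⟩
      exact cmin_le g U (by
        rw [colSet, Finset.mem_filter, Finset.mem_range, Nat.lt_succ_iff]
        exact ⟨hc1, hsU⟩)
  · -- alpha bound
    intro p hp
    rcases Finset.mem_union.mp hp with hp | hp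
    · obtain ⟨x1, t, h1, h2, h3, rfl⟩ := (mem_colPieces g U).mp hp
      exact alpha_of_two_coords g _ 1 2 (by decide) rfl rfl
    · obtain ⟨x2, t, h1, h2, h3, rfl⟩ := (mem_rowPieces g U).mp hp
      exact alpha_of_two_coords g _ 0 2 (by decide) rfl rfl

end ColRow

/-! ### Lemmas about the complement `D` and the final theorem -/

section DSide

variable (g : Fin 3 → ℕ) (U : Finset (Fin 3 → ℕ))

lemma mem_D_iff {d : Fin 3 → ℕ} :
    d ∈ Finset.Icc 0 g \ U ↔ d ≤ g ∧ d ∉ U := by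
  rw [Finset.mem_sdiff, Finset.mem_Icc]
  constructor
  · rintro ⟨⟨_, h⟩, hn⟩; exact ⟨h, hn⟩
  · rintro ⟨h, hn⟩
    exact ⟨⟨fun i => Nat.zero_le _, h⟩, hn⟩

/-- From a face partition of `D` (witnessing `1 ∈ sdSet g D`), the necessary condition NC. -/
lemma NC_of_one_mem (h1 : 1 ∈ sdSet g (Finset.Icc 0 g \ U)) :
    ∀ x y t, x ≤ g 0 → y ≤ g 1 → t ≤ g 2 → pt x y t ∉ U → pt x y (g 2) ∈ U →
      pt (g 0) y t ∉ U ∨ pt x (g 1) t ∉ U := by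
  intro x y t hx hy ht hnot htop
  obtain ⟨P, hP⟩ := h1
  have hd : pt x y t ∈ Finset.Icc 0 g \ U :=
    (mem_D_iff g U).mpr ⟨le3.mpr (by simp [hx, hy, ht]), hnot⟩
  obtain ⟨p, hp, hdp⟩ := P.covers _ hd
  obtain ⟨i, hi⟩ := alpha_exists_one g p.2 (hP p hp)
  rw [mem_Icc3] at hdp
  simp only [pt0, pt1, pt2] at hdp
  obtain ⟨⟨ha0, ha1, ha2⟩, ⟨hb0, hb1, hb2⟩⟩ := hdp
  have hsub := P.sub p hp
  fin_cases i
  · -- p.2 0 = g 0 : the point (g 0, y, t) lies in the piece, hence in D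
    left
    have hmem : pt (g 0) y t ∈ Finset.Icc p.1 p.2 := by
      rw [mem_Icc3]
      simp only [pt0, pt1, pt2]
      exact ⟨⟨ha0.trans hx, ha1, ha2⟩, ⟨hi.ge, hb1, hb2⟩⟩
    exact ((mem_D_iff g U).mp (hsub hmem)).2
  · -- p.2 1 = g 1
    right
    have hmem : pt x (g 1) t ∈ Finset.Icc p.1 p.2 := by
      rw [mem_Icc3]
      simp only [pt0, pt1, pt2]
      exact ⟨⟨ha0, ha1.trans hy, ha2⟩, ⟨hb0, hi.ge, hb2⟩⟩
    exact ((mem_D_iff g U).mp (hsub hmem)).2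
  · -- p.2 2 = g 2 : then the point (x, y, g 2) would be in D, contradiction
    exfalso
    have hmem : pt x y (g 2) ∈ Finset.Icc p.1 p.2 := by
      rw [mem_Icc3]
      simp only [pt0, pt1, pt2]
      exact ⟨⟨ha0, ha1, ha2.trans ht⟩, ⟨hb0, hb1, hi.ge⟩⟩
    exact ((mem_D_iff g U).mp (hsub hmem)).2 htop

/-- From an edge partition of `D` (witnessing `2 ∈ sdSet g D`), `U` is an interval,
so `3 ∈ sdSet g U`. -/
lemma three_mem_of_two_mem (hUsub : U ⊆ Finset.Icc 0 g)
    (hup : ∀ c ∈ U, ∀ d, c ≤ d → d ≤ g → d ∈ U) (hUne : U.Nonempty)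
    (h2 : 2 ∈ sdSet g (Finset.Icc 0 g \ U)) : 3 ∈ sdSet g U := by
  classical
  set a : Fin 3 → ℕ := fun i => ((U.image fun c => c i).min'
    (hUne.image _)) with ha_def
  have ha_le : ∀ c ∈ U, a ≤ c := by
    intro c hc i
    exact Finset.min'_le _ _ (Finset.mem_image_of_mem _ hc)
  have ha_ex : ∀ i : Fin 3, ∃ u ∈ U, u i = a i := by
    intro i
    have := Finset.min'_mem (U.image fun c => c i) (hUne.image _)
    obtain ⟨u, hu, hui⟩ := Finset.mem_image.mp this
    exact ⟨u, hu, hui⟩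
  have hag : a ≤ g := by
    intro i
    obtain ⟨u, hu, hui⟩ := ha_ex i
    rw [← hui]
    exact memU_le g U hUsub hu i
  by_cases haU : a ∈ U
  · -- U = [a, g]
    refine ⟨⟨{(a, g)}, ?_, ?_, ?_, ?_⟩, ?_⟩
    · intro p hp
      rw [Finset.mem_singleton] at hp
      subst hp
      exact hag
    · intro p hp c hc
      rw [Finset.mem_singleton] at hp
      subst hp
      rw [Finset.mem_Icc] at hc
      exact hup a haU c hc.1 hc.2
    · intro p hp q hq hpq
      rw [Finset.mem_singleton] at hp hq
      exact absurd (hp.trans hq.symm) hpq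
    · intro c hc
      refine ⟨(a, g), Finset.mem_singleton_self _, ?_⟩
      rw [Finset.mem_Icc]
      exact ⟨ha_le c hc, (Finset.mem_Icc.mp (hUsub hc)).2⟩
    · intro p hp
      rw [Finset.mem_singleton] at hp
      subst hp
      rw [alpha_self]
  · -- a ∈ D leads to a contradiction with the edge partition of D
    exfalso
    obtain ⟨P, hP⟩ := h2
    have haD : a ∈ Finset.Icc 0 g \ U := (mem_D_iff g U).mpr ⟨hag, haU⟩
    obtain ⟨p, hp, hap⟩ := P.covers _ haD
    obtain ⟨k, hk⟩ := alpha_ge_two g p.2 (hP p hp)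
    obtain ⟨u, hu, huk⟩ := ha_ex k
    set w : Fin 3 → ℕ := fun i => if i = k then a k else g i with hw_def
    have hwU : w ∈ U := by
      refine hup u hu w (fun i => ?_) (fun i => ?_)
      · by_cases hik : i = k
        · subst hik; simp [hw_def, huk.le]
        · simp only [hw_def, if_neg hik]
          exact memU_le g U hUsub hu i
      · by_cases hik : i = k
        · subst hik; simp [hw_def, hag i]
        · simp [hw_def, if_neg hik]
    have hwD : w ∈ Finset.Icc p.1 p.2 := by
      rw [Finset.mem_Icc] at hap ⊢
      constructor
      · intro i
        by_cases hik : i = k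
        · subst hik; simp only [hw_def, if_pos rfl]; exact hap.1 i
        · simp only [hw_def, if_neg hik]
          exact (hap.1 i).trans (hag i)
      · intro i
        by_cases hik : i = k
        · subst hik; simp only [hw_def, if_pos rfl]; exact hap.2 i
        · simp only [hw_def, if_neg hik]
          exact (hk i hik).ge
    exact ((mem_D_iff g U).mp (P.sub p hp hwD)).2 hwU

end DSide

/-- If `U` is a nonempty up set of `P_g = {c ∈ ℕ³ : c ≤ g}` whose complement
`D = P_g \ U` is also nonempty, then `sdepth_g(U) > sdepth_g(D)`. -/
theorem sdepth_upset_gt_sdepth_downset_three (g : Fin 3 → ℕ)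
    (U : Finset (Fin 3 → ℕ)) (hUsub : U ⊆ Finset.Icc 0 g)
    (hup : ∀ c ∈ U, ∀ d, c ≤ d → d ≤ g → d ∈ U)
    (hUne : U.Nonempty) (hDne : (Finset.Icc 0 g \ U).Nonempty) :
    sdepthG g (Finset.Icc 0 g \ U) < sdepthG g U := by
  have hgU : g ∈ U := by
    obtain ⟨u, hu⟩ := hUne
    exact hup u hu g (Finset.mem_Icc.mp (hUsub hu)).2 le_rfl
  -- sdepth of the complement is at most 2
  have hD2 : sdepthG g (Finset.Icc 0 g \ U) ≤ 2 := by
    rw [sdepthG_eq]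
    rcases (sdSet g (Finset.Icc 0 g \ U)).eq_empty_or_nonempty with he | hne
    · rw [he, csSup_empty]; exact Nat.zero_le _
    · refine csSup_le hne ?_
      rintro k ⟨P, hP⟩
      obtain ⟨d, hd⟩ := hDne
      obtain ⟨p, hp, _⟩ := P.covers d hd
      have hb : p.2 ∈ Finset.Icc 0 g \ U :=
        P.sub p hp (Finset.mem_Icc.mpr ⟨P.le p hp, le_rfl⟩)
      have halpha : alphaG g p.2 ≤ 2 := by
        by_contra h
        push_neg at h
        have : p.2 = g := alpha_eq_three g p.2 h
        rw [this] at hb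
        exact ((mem_D_iff g U).mp hb).2 hgU
      exact (hP p hp).trans halpha
  have h1U : 1 ∈ sdSet g U := one_mem_sdSet g U hUsub hup
  rcases Nat.lt_or_ge (sdepthG g (Finset.Icc 0 g \ U)) 1 with h0 | h1
  · exact h0.trans_le (le_sdepthG g hUne h1U)
  · have hmem : sdepthG g (Finset.Icc 0 g \ U) ∈ sdSet g (Finset.Icc 0 g \ U) :=
      sdepthG_mem g hDne (by omega)
    rcases Nat.lt_or_ge (sdepthG g (Finset.Icc 0 g \ U)) 2 with hlt2 | hge2
    · have h1D : 1 ∈ sdSet g (Finset.Icc 0 g \ U) := sdSet_down g h1 hmem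
      have h2U : 2 ∈ sdSet g U := two_mem_sdSet g U hUsub hup (NC_of_one_mem g U h1D)
      exact hlt2.trans_le (le_sdepthG g hUne h2U)
    · have h2D : 2 ∈ sdSet g (Finset.Icc 0 g \ U) := sdSet_down g hge2 hmem
      have h3U : 3 ∈ sdSet g U := three_mem_of_two_mem g U hUsub hup hUne h2D
      have h3 : 3 ≤ sdepthG g U := le_sdepthG g hUne h3U
      omega
end

section
/- Suppose there exist an integer n ≥ 1 and a down set D ⊆ 2^[n] with ∅ ∈ D and nonempty complement U = 2^[n] \ D such that sdepth(U) ≤ sdepth(D). Then there exist an integer n' ≤ n and a down set D' ⊆ 2^[n'] with ∅ ∈ D' and nonempty complement U' = 2^[n'] \ D' such that, setting k = sdepth(D'): (1) sdepth(U') ≤ sdepth(D') and every maximal element of D' has exactly k elements (D' is a pure simplicial complex of dimension k−1); (2) the union of the maximal elements of D' equals [n']; and (3) the intersection of the maximal elements of D' is empty. -/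
open Finset

/-- An interval partition of a family `Q` of subsets of `[n]` (identified with `Fin n`):
a finite collection of nonempty intervals `[A,B]`, each contained in `Q`, pairwise
disjoint, and covering `Q`. -/
structure IntervalPartition (n : ℕ) (Q : Finset (Finset (Fin n))) where
  pairs : Finset (Finset (Fin n) × Finset (Fin n))
  le : ∀ p ∈ pairs, p.1 ⊆ p.2
  sub : ∀ p ∈ pairs, Finset.Icc p.1 p.2 ⊆ Q
  disj : ∀ p ∈ pairs, ∀ q ∈ pairs, p ≠ q →
    Disjoint (Finset.Icc p.1 p.2) (Finset.Icc q.1 q.2)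
  covers : ∀ C ∈ Q, ∃ p ∈ pairs, C ∈ Finset.Icc p.1 p.2

/-- The Stanley depth of a family `Q`: the largest `k` such that some interval
partition of `Q` has every interval's maximal element of size at least `k`. -/
noncomputable def sdepth {n : ℕ} (Q : Finset (Finset (Fin n))) : ℕ :=
  sSup {k | ∃ P : IntervalPartition n Q, ∀ p ∈ P.pairs, k ≤ p.2.card}

/-- `D` is a down set in `2^[n]`. -/
def IsDownSet {n : ℕ} (D : Finset (Finset (Fin n))) : Prop :=
  ∀ B ∈ D, ∀ A, A ⊆ B → A ∈ D

/-- `B` is a maximal element of the family `D`. -/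
def MaxElt {n : ℕ} (D : Finset (Finset (Fin n))) (B : Finset (Fin n)) : Prop :=
  B ∈ D ∧ ∀ C ∈ D, B ⊆ C → B = C

section Basic
variable {n : ℕ} {Q : Finset (Finset (Fin n))}

/-- the trivial interval partition -/
def trivPart (Q : Finset (Finset (Fin n))) : IntervalPartition n Q where
  pairs := Q.image (fun S => (S, S))
  le := by intro p hp; simp only [mem_image] at hp; obtain ⟨S, _, rfl⟩ := hp; exact subset_rfl
  sub := by
    intro p hp; simp only [mem_image] at hp; obtain ⟨S, hS, rfl⟩ := hp
    intro C hC; simp only [Finset.Icc_self, mem_singleton] at hC; subst hC; exact hS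
  disj := by
    intro p hp q hq hpq
    simp only [mem_image] at hp hq
    obtain ⟨S, hS, rfl⟩ := hp; obtain ⟨T, hT, rfl⟩ := hq
    simp only [Finset.Icc_self, disjoint_singleton]
    intro h; subst h; exact hpq rfl
  covers := by
    intro C hC; exact ⟨(C, C), mem_image_of_mem _ hC, by simp⟩

lemma sdepth_set_nonempty : Set.Nonempty {k | ∃ P : IntervalPartition n Q, ∀ p ∈ P.pairs, k ≤ p.2.card} :=
  ⟨0, trivPart Q, fun _ _ => Nat.zero_le _⟩

lemma sdepth_set_bdd (hQ : Q.Nonempty) :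
    BddAbove {k | ∃ P : IntervalPartition n Q, ∀ p ∈ P.pairs, k ≤ p.2.card} := by
  refine ⟨n, fun k hk => ?_⟩
  obtain ⟨P, hP⟩ := hk
  obtain ⟨C, hC⟩ := hQ
  obtain ⟨p, hp, -⟩ := P.covers C hC
  exact (hP p hp).trans ((card_le_univ p.2).trans_eq (by simp))

lemma le_sdepth (hQ : Q.Nonempty) (P : IntervalPartition n Q) {k : ℕ}
    (h : ∀ p ∈ P.pairs, k ≤ p.2.card) : k ≤ sdepth Q :=
  le_csSup (sdepth_set_bdd hQ) ⟨P, h⟩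

lemma sdepth_le {m : ℕ} (h : ∀ P : IntervalPartition n Q, ∃ p ∈ P.pairs, p.2.card ≤ m) :
    sdepth Q ≤ m := by
  refine csSup_le sdepth_set_nonempty ?_
  rintro k ⟨P, hP⟩
  obtain ⟨p, hp, hc⟩ := h P
  exact (hP p hp).trans hc

lemma sdepth_witness (hQ : Q.Nonempty) :
    ∃ P : IntervalPartition n Q, ∀ p ∈ P.pairs, sdepth Q ≤ p.2.card :=
  Nat.sSup_mem sdepth_set_nonempty (sdepth_set_bdd hQ)

lemma sdepth_le_card_top (hQ : Q.Nonempty) : sdepth Q ≤ n := by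
  refine sdepth_le fun P => ?_
  obtain ⟨C, hC⟩ := hQ
  obtain ⟨p, hp, -⟩ := P.covers C hC
  exact ⟨p, hp, (card_le_univ p.2).trans_eq (by simp)⟩

lemma exists_maxElt {D : Finset (Finset (Fin n))} {S : Finset (Fin n)} (hS : S ∈ D) :
    ∃ F, MaxElt D F ∧ S ⊆ F := by
  obtain ⟨F, hF, hmax⟩ := (D.filter (fun T => S ⊆ T)).exists_max_image card
    ⟨S, by simp [hS]⟩
  simp only [mem_filter] at hF
  refine ⟨F, ⟨hF.1, fun C hC hFC => ?_⟩, hF.2⟩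
  exact (eq_of_subset_of_card_le hFC (hmax C (by simp [hC, hF.2.trans hFC])))

lemma sdepth_le_maxElt {D : Finset (Finset (Fin n))} {F : Finset (Fin n)}
    (hF : MaxElt D F) : sdepth D ≤ F.card := by
  refine sdepth_le fun P => ?_
  obtain ⟨p, hp, hFp⟩ := P.covers F hF.1
  simp only [Finset.mem_Icc] at hFp
  have hp2 : p.2 ∈ D := P.sub p hp (by simp [Finset.mem_Icc, P.le p hp])
  exact ⟨p, hp, le_of_eq (congrArg card (hF.2 p.2 hp2 hFp.2)).symm⟩

end Basic

section Shrink
variable {m : ℕ} (x : Fin (m + 1))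

def liftF (T : Finset (Fin m)) : Finset (Fin (m + 1)) := T.map x.succAboveEmb

def shrinkF (S : Finset (Fin (m + 1))) : Finset (Fin m) :=
  univ.filter (fun i => x.succAbove i ∈ S)

variable {x}

@[simp] lemma mem_liftF {T : Finset (Fin m)} {y : Fin (m+1)} :
    y ∈ liftF x T ↔ ∃ i ∈ T, x.succAbove i = y := by
  simp [liftF, Fin.succAboveEmb]

@[simp] lemma mem_shrinkF {S : Finset (Fin (m+1))} {i : Fin m} :
    i ∈ shrinkF x S ↔ x.succAbove i ∈ S := by simp [shrinkF]

lemma not_mem_liftF (T : Finset (Fin m)) : x ∉ liftF x T := by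
  simp only [mem_liftF]
  rintro ⟨i, -, h⟩
  exact Fin.succAbove_ne x i h

lemma shrinkF_liftF (T : Finset (Fin m)) : shrinkF x (liftF x T) = T := by
  ext i
  simp only [mem_shrinkF, mem_liftF]
  constructor
  · rintro ⟨j, hj, hji⟩; rwa [Fin.succAbove_right_injective hji] at hj
  · exact fun h => ⟨i, h, rfl⟩

lemma liftF_shrinkF (S : Finset (Fin (m+1))) : liftF x (shrinkF x S) = S.erase x := by
  ext y
  simp only [mem_liftF, mem_shrinkF, mem_erase]
  constructor
  · rintro ⟨i, hi, rfl⟩; exact ⟨Fin.succAbove_ne x i, hi⟩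
  · rintro ⟨hyx, hy⟩
    obtain ⟨i, rfl⟩ := Fin.exists_succAbove_eq (Ne.symm hyx).symm
    exact ⟨i, hy, rfl⟩

lemma liftF_mono {T T' : Finset (Fin m)} (h : T ⊆ T') : liftF x T ⊆ liftF x T' :=
  Finset.map_subset_map.2 h

lemma shrinkF_mono {S S' : Finset (Fin (m+1))} (h : S ⊆ S') : shrinkF x S ⊆ shrinkF x S' := by
  intro i hi; simp only [mem_shrinkF] at *; exact h hi

@[simp] lemma card_liftF (T : Finset (Fin m)) : (liftF x T).card = T.card := card_map _

lemma card_shrinkF (S : Finset (Fin (m+1))) : (shrinkF x S).card = (S.erase x).card := by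
  rw [← card_liftF (x := x) (shrinkF x S), liftF_shrinkF]

lemma liftF_shrinkF_of_not_mem {S : Finset (Fin (m+1))} (h : x ∉ S) :
    liftF x (shrinkF x S) = S := by rw [liftF_shrinkF, erase_eq_of_notMem h]

lemma shrinkF_insert_self (S : Finset (Fin (m+1))) :
    shrinkF x (insert x S) = shrinkF x S := by
  ext i
  simp only [mem_shrinkF, mem_insert]
  have := Fin.succAbove_ne x i
  tauto

end Shrink

section Transfer
variable {m : ℕ} {x : Fin (m + 1)}

/-- Deleting a coordinate: from a partition of `Q ⊆ 2^[m+1]` get one of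
`Q₀ = {T : liftF x T ∈ Q}`. -/
lemma del_partition (Q : Finset (Finset (Fin (m+1)))) (Q₀ : Finset (Finset (Fin m)))
    (hQ₀ : ∀ T, T ∈ Q₀ ↔ liftF x T ∈ Q) (P : IntervalPartition (m+1) Q) (c : ℕ)
    (hc : ∀ p ∈ P.pairs, c ≤ (p.2.erase x).card) :
    ∃ P₀ : IntervalPartition m Q₀, ∀ q ∈ P₀.pairs, c ≤ q.2.card := by
  classical
  -- key: membership of lifted set in original interval
  have key : ∀ p ∈ P.pairs, x ∉ p.1 → ∀ T', T' ∈ Finset.Icc (shrinkF x p.1) (shrinkF x (p.2.erase x)) →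
      liftF x T' ∈ Finset.Icc p.1 p.2 := by
    intro p hp hxp T' hT'
    simp only [Finset.mem_Icc] at hT' ⊢
    constructor
    · calc p.1 = liftF x (shrinkF x p.1) := (liftF_shrinkF_of_not_mem hxp).symm
        _ ⊆ liftF x T' := liftF_mono hT'.1
    · calc liftF x T' ⊆ liftF x (shrinkF x (p.2.erase x)) := liftF_mono hT'.2
        _ = (p.2.erase x).erase x := liftF_shrinkF _
        _ ⊆ p.2 := (erase_subset _ _).trans (erase_subset _ _)
  refine ⟨⟨(P.pairs.filter (fun p => x ∉ p.1)).image
      (fun p => (shrinkF x p.1, shrinkF x (p.2.erase x))), ?_, ?_, ?_, ?_⟩, ?_⟩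
  · rintro q hq
    simp only [mem_image, mem_filter] at hq
    obtain ⟨p, ⟨hp, hxp⟩, rfl⟩ := hq
    exact shrinkF_mono (subset_erase.2 ⟨P.le p hp, hxp⟩)
  · rintro q hq T' hT'
    simp only [mem_image, mem_filter] at hq
    obtain ⟨p, ⟨hp, hxp⟩, rfl⟩ := hq
    exact (hQ₀ T').2 (P.sub p hp (key p hp hxp T' hT'))
  · rintro q hq q' hq' hne
    simp only [mem_image, mem_filter] at hq hq'
    obtain ⟨p, ⟨hp, hxp⟩, rfl⟩ := hq
    obtain ⟨p', ⟨hp', hxp'⟩, rfl⟩ := hq'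
    have hpp' : p ≠ p' := by rintro rfl; exact hne rfl
    rw [Finset.disjoint_left]
    intro T' h1 h2
    exact Finset.disjoint_left.1 (P.disj p hp p' hp' hpp') (key p hp hxp T' h1)
      (key p' hp' hxp' T' h2)
  · intro T hT
    have hlT : liftF x T ∈ Q := (hQ₀ T).1 hT
    obtain ⟨p, hp, hTp⟩ := P.covers _ hlT
    simp only [Finset.mem_Icc] at hTp
    have hxT : x ∉ liftF x T := not_mem_liftF T
    have hxp1 : x ∉ p.1 := fun h => hxT (hTp.1 h)
    refine ⟨(shrinkF x p.1, shrinkF x (p.2.erase x)), ?_, ?_⟩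
    · exact mem_image_of_mem _ (mem_filter.2 ⟨hp, hxp1⟩)
    · simp only [Finset.mem_Icc]
      constructor
      · have := shrinkF_mono (x := x) hTp.1; rwa [shrinkF_liftF] at this
      · have h2 : liftF x T ⊆ p.2.erase x := subset_erase.2 ⟨hTp.2, hxT⟩
        have := shrinkF_mono (x := x) h2; rwa [shrinkF_liftF] at this
  · rintro q hq
    simp only [mem_image, mem_filter] at hq
    obtain ⟨p, ⟨hp, hxp⟩, rfl⟩ := hq
    rw [card_shrinkF, erase_idem]
    exact hc p hp

/-- Lifting a partition in the cone case: if `S ∈ U ↔ shrinkF x S ∈ U₀`, lift a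
partition of `U₀` to one of `U` with tops one bigger. -/
lemma cone_lift_partition (U : Finset (Finset (Fin (m+1)))) (U₀ : Finset (Finset (Fin m)))
    (hU : ∀ S, S ∈ U ↔ shrinkF x S ∈ U₀) (P₀ : IntervalPartition m U₀) (c : ℕ)
    (hc : ∀ q ∈ P₀.pairs, c ≤ q.2.card) :
    ∃ P : IntervalPartition (m+1) U, ∀ p ∈ P.pairs, c + 1 ≤ p.2.card := by
  classical
  have key : ∀ q : Finset (Fin m) × Finset (Fin m), ∀ S, S ∈ Finset.Icc (liftF x q.1) (insert x (liftF x q.2)) →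
      shrinkF x S ∈ Finset.Icc q.1 q.2 := by
    intro q S hS
    simp only [Finset.mem_Icc] at hS ⊢
    constructor
    · have := shrinkF_mono (x := x) hS.1; rwa [shrinkF_liftF] at this
    · have := shrinkF_mono (x := x) hS.2
      rwa [shrinkF_insert_self, shrinkF_liftF] at this
  refine ⟨⟨P₀.pairs.image (fun q => (liftF x q.1, insert x (liftF x q.2))), ?_, ?_, ?_, ?_⟩, ?_⟩
  · rintro p hp
    simp only [mem_image] at hp
    obtain ⟨q, hq, rfl⟩ := hp
    exact (liftF_mono (P₀.le q hq)).trans (subset_insert _ _)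
  · rintro p hp S hS
    simp only [mem_image] at hp
    obtain ⟨q, hq, rfl⟩ := hp
    exact (hU S).2 (P₀.sub q hq (key q S hS))
  · rintro p hp p' hp' hne
    simp only [mem_image] at hp hp'
    obtain ⟨q, hq, rfl⟩ := hp
    obtain ⟨q', hq', rfl⟩ := hp'
    have hqq' : q ≠ q' := by rintro rfl; exact hne rfl
    rw [Finset.disjoint_left]
    intro S h1 h2
    exact Finset.disjoint_left.1 (P₀.disj q hq q' hq' hqq') (key q S h1) (key q' S h2)
  · intro S hS
    obtain ⟨q, hq, hSq⟩ := P₀.covers _ ((hU S).1 hS)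
    simp only [Finset.mem_Icc] at hSq
    refine ⟨(liftF x q.1, insert x (liftF x q.2)), mem_image_of_mem _ hq, ?_⟩
    simp only [Finset.mem_Icc]
    constructor
    · calc liftF x q.1 ⊆ liftF x (shrinkF x S) := liftF_mono hSq.1
        _ = S.erase x := liftF_shrinkF _
        _ ⊆ S := erase_subset _ _
    · intro y hy
      by_cases hyx : y = x
      · subst hyx; exact mem_insert_self _ _
      · refine mem_insert_of_mem ?_
        have : y ∈ S.erase x := mem_erase.2 ⟨hyx, hy⟩
        rw [← liftF_shrinkF (x := x) S] at this
        exact liftF_mono hSq.2 this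
  · rintro p hp
    simp only [mem_image] at hp
    obtain ⟨q, hq, rfl⟩ := hp
    rw [card_insert_of_notMem (not_mem_liftF _), card_liftF]
    exact Nat.add_le_add_right (hc q hq) 1

end Transfer

section UnusedLift
variable {m : ℕ} {x : Fin (m + 1)}

/-- Lifting a partition in the unused-variable case. -/
lemma unused_lift_partition (D : Finset (Finset (Fin (m+1)))) (U₀ : Finset (Finset (Fin m)))
    (hx : ∀ S ∈ D, x ∉ S) (hU₀ : ∀ T, T ∈ U₀ ↔ liftF x T ∉ D)
    (P₀ : IntervalPartition m U₀) (c : ℕ) (hcm : c ≤ m + 1)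
    (hc : ∀ q ∈ P₀.pairs, c ≤ q.2.card) :
    ∃ P : IntervalPartition (m+1) (univ \ D), ∀ p ∈ P.pairs, c ≤ p.2.card := by
  classical
  have key : ∀ q : Finset (Fin m) × Finset (Fin m), ∀ S,
      S ∈ Finset.Icc (liftF x q.1) (liftF x q.2) →
      x ∉ S ∧ shrinkF x S ∈ Finset.Icc q.1 q.2 ∧ liftF x (shrinkF x S) = S := by
    intro q S hS
    simp only [Finset.mem_Icc] at hS
    have hxS : x ∉ S := fun h => not_mem_liftF q.2 (hS.2 h)
    refine ⟨hxS, ?_, liftF_shrinkF_of_not_mem hxS⟩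
    simp only [Finset.mem_Icc]
    constructor
    · have := shrinkF_mono (x := x) hS.1; rwa [shrinkF_liftF] at this
    · have := shrinkF_mono (x := x) hS.2; rwa [shrinkF_liftF] at this
  have hxuniv : Finset.Icc ({x} : Finset (Fin (m+1))) univ ⊆ univ \ D := by
    intro S hS
    simp only [Finset.mem_Icc, singleton_subset_iff] at hS
    simp only [mem_sdiff, mem_univ, true_and]
    exact fun hSD => hx S hSD hS.1
  refine ⟨⟨insert ({x}, univ) (P₀.pairs.image (fun q => (liftF x q.1, liftF x q.2))), ?_, ?_, ?_, ?_⟩, ?_⟩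
  · rintro p hp
    simp only [mem_insert, mem_image] at hp
    rcases hp with rfl | ⟨q, hq, rfl⟩
    · exact subset_univ _
    · exact liftF_mono (P₀.le q hq)
  · rintro p hp S hS
    simp only [mem_insert, mem_image] at hp
    rcases hp with rfl | ⟨q, hq, rfl⟩
    · exact hxuniv hS
    · obtain ⟨hxS, hsh, hls⟩ := key q S hS
      have : shrinkF x S ∈ U₀ := P₀.sub q hq hsh
      rw [hU₀, hls] at this
      simp [this]
  · rintro p hp p' hp' hne
    simp only [mem_insert, mem_image] at hp hp'
    have xdisj : ∀ q : Finset (Fin m) × Finset (Fin m),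
        Disjoint (Finset.Icc ({x} : Finset (Fin (m+1))) univ)
          (Finset.Icc (liftF x q.1) (liftF x q.2)) := by
      intro q
      rw [Finset.disjoint_left]
      intro S h1 h2
      simp only [Finset.mem_Icc, singleton_subset_iff] at h1
      exact (key q S h2).1 h1.1
    rcases hp with rfl | ⟨q, hq, rfl⟩
    · rcases hp' with rfl | ⟨q', hq', rfl⟩
      · exact absurd rfl hne
      · exact xdisj q'
    rcases hp' with rfl | ⟨q', hq', rfl⟩
    · exact (xdisj q).symm
    · have hqq' : q ≠ q' := by rintro rfl; exact hne rfl
      rw [Finset.disjoint_left]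
      intro S h1 h2
      exact Finset.disjoint_left.1 (P₀.disj q hq q' hq' hqq') (key q S h1).2.1 (key q' S h2).2.1
  · intro S hS
    simp only [mem_sdiff, mem_univ, true_and] at hS
    by_cases hxS : x ∈ S
    · exact ⟨({x}, univ), mem_insert_self _ _, by
        simp [Finset.mem_Icc, singleton_subset_iff, hxS]⟩
    · have hT : shrinkF x S ∈ U₀ := by rw [hU₀, liftF_shrinkF_of_not_mem hxS]; exact hS
      obtain ⟨q, hq, hTq⟩ := P₀.covers _ hT
      simp only [Finset.mem_Icc] at hTq
      refine ⟨(liftF x q.1, liftF x q.2), mem_insert_of_mem (mem_image_of_mem _ hq), ?_⟩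
      simp only [Finset.mem_Icc]
      rw [← liftF_shrinkF_of_not_mem hxS]
      exact ⟨liftF_mono hTq.1, liftF_mono hTq.2⟩
  · rintro p hp
    simp only [mem_insert, mem_image] at hp
    rcases hp with rfl | ⟨q, hq, rfl⟩
    · simpa using hcm
    · rw [card_liftF]; exact hc q hq

end UnusedLift

section Cube
variable {n : ℕ}

/-- Partition of the truncation `{S ∈ [A,B] : |S| ≤ k}` into intervals with tops of size `k`. -/
lemma trunc_partition : ∀ (d : ℕ) (A B : Finset (Fin n)) (k : ℕ), (B \ A).card = d →
    A ⊆ B → A.card ≤ k → k ≤ B.card →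
    ∃ P : Finset (Finset (Fin n) × Finset (Fin n)),
      (∀ p ∈ P, A ⊆ p.1 ∧ p.1 ⊆ p.2 ∧ p.2 ⊆ B ∧ p.2.card = k) ∧
      (∀ p ∈ P, ∀ q ∈ P, p ≠ q → Disjoint (Finset.Icc p.1 p.2) (Finset.Icc q.1 q.2)) ∧
      (∀ S, (∃ p ∈ P, S ∈ Finset.Icc p.1 p.2) ↔ (S ∈ Finset.Icc A B ∧ S.card ≤ k)) := by
  intro d
  induction d using Nat.strong_induction_on with
  | _ d ih =>
  intro A B k hd hAB hAk hkB
  by_cases hBk : B.card = k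
  · refine ⟨{(A, B)}, ?_, ?_, ?_⟩
    · intro p hp; simp only [mem_singleton] at hp; subst hp
      exact ⟨subset_rfl, hAB, subset_rfl, hBk⟩
    · intro p hp q hq hpq
      simp only [mem_singleton] at hp hq; subst hp; subst hq; exact absurd rfl hpq
    · intro S
      simp only [mem_singleton, exists_eq_left, Finset.mem_Icc, iff_self_and]
      exact fun hS => hBk ▸ card_le_card hS.2
  by_cases hAkeq : A.card = k
  · refine ⟨{(A, A)}, ?_, ?_, ?_⟩
    · intro p hp; simp only [mem_singleton] at hp; subst hp
      exact ⟨subset_rfl, subset_rfl, hAB, hAkeq⟩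
    · intro p hp q hq hpq
      simp only [mem_singleton] at hp hq; subst hp; subst hq; exact absurd rfl hpq
    · intro S
      constructor
      · rintro ⟨p, hp, hSp⟩
        simp only [mem_singleton] at hp; subst hp
        simp only [Finset.Icc_self, mem_singleton] at hSp; subst hSp
        exact ⟨Finset.mem_Icc.2 ⟨subset_rfl, hAB⟩, le_of_eq hAkeq⟩
      · rintro ⟨hS, hSk⟩
        rw [Finset.mem_Icc] at hS
        have hSA : A = S := eq_of_subset_of_card_le hS.1 (hSk.trans hAkeq.symm.le)
        exact ⟨(A, A), mem_singleton_self _, by simp [Finset.Icc_self, ← hSA]⟩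
  -- now A.card < k < B.card, so there is y ∈ B \ A
  have hAcard : A.card < B.card := lt_of_le_of_lt (lt_of_le_of_ne hAk hAkeq).le
      (lt_of_le_of_ne hkB (fun h => hBk h.symm))
  have hne : A ≠ B := fun h => absurd (congrArg card h) (Nat.ne_of_lt hAcard)
  obtain ⟨y, hyB, hyA⟩ := exists_of_ssubset (ssubset_of_subset_of_ne hAB hne)
  have hymem : y ∈ B \ A := mem_sdiff.2 ⟨hyB, hyA⟩
  have hd1 : d ≠ 0 := by rintro rfl; rw [card_eq_zero] at hd; rw [hd] at hymem; simp at hymem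
  -- recursive call 1 : sets containing y
  have m1 : (B \ insert y A).card < d := by
    rw [← hd]
    refine card_lt_card ?_
    rw [Finset.ssubset_iff_of_subset (sdiff_subset_sdiff subset_rfl (subset_insert _ _))]
    exact ⟨y, hymem, by simp⟩
  have c1 := ih _ m1 (insert y A) B k rfl (insert_subset hyB hAB)
    (by rw [card_insert_of_notMem hyA]; omega) hkB
  -- recursive call 2 : sets avoiding y
  have m2 : (B.erase y \ A).card < d := by
    rw [← hd]
    refine card_lt_card ?_
    rw [Finset.ssubset_iff_of_subset (sdiff_subset_sdiff (erase_subset _ _) subset_rfl)]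
    exact ⟨y, hymem, by simp⟩
  have c2 := ih _ m2 A (B.erase y) k rfl (subset_erase.2 ⟨hAB, hyA⟩) hAk
    (by rw [card_erase_of_mem hyB]; omega)
  obtain ⟨P₁, hP₁p, hP₁d, hP₁c⟩ := c1
  obtain ⟨P₂, hP₂p, hP₂d, hP₂c⟩ := c2
  have hy1 : ∀ p ∈ P₁, ∀ S ∈ Finset.Icc p.1 p.2, y ∈ S := by
    intro p hp S hS
    simp only [Finset.mem_Icc] at hS
    exact hS.1 ((hP₁p p hp).1 (mem_insert_self _ _))
  have hy2 : ∀ p ∈ P₂, ∀ S ∈ Finset.Icc p.1 p.2, y ∉ S := by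
    intro p hp S hS
    simp only [Finset.mem_Icc] at hS
    intro hyS
    exact (mem_erase.1 ((hP₂p p hp).2.2.1 (hS.2 hyS))).1 rfl
  refine ⟨P₁ ∪ P₂, ?_, ?_, ?_⟩
  · intro p hp
    rcases mem_union.1 hp with h | h
    · obtain ⟨h1, h2, h3, h4⟩ := hP₁p p h
      exact ⟨(subset_insert _ _).trans h1, h2, h3, h4⟩
    · obtain ⟨h1, h2, h3, h4⟩ := hP₂p p h
      exact ⟨h1, h2, h3.trans (erase_subset _ _), h4⟩
  · intro p hp q hq hpq
    rcases mem_union.1 hp with h | h <;> rcases mem_union.1 hq with h' | h'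
    · exact hP₁d p h q h' hpq
    · rw [Finset.disjoint_left]; intro S s1 s2; exact hy2 q h' S s2 (hy1 p h S s1)
    · rw [Finset.disjoint_left]; intro S s1 s2; exact hy2 p h S s1 (hy1 q h' S s2)
    · exact hP₂d p h q h' hpq
  · intro S
    constructor
    · rintro ⟨p, hp, hSp⟩
      rcases mem_union.1 hp with h | h
      · have := (hP₁c S).1 ⟨p, h, hSp⟩
        simp only [Finset.mem_Icc] at this ⊢
        exact ⟨⟨(subset_insert _ _).trans this.1.1, this.1.2⟩, this.2⟩
      · have := (hP₂c S).1 ⟨p, h, hSp⟩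
        simp only [Finset.mem_Icc] at this ⊢
        exact ⟨⟨this.1.1, this.1.2.trans (erase_subset _ _)⟩, this.2⟩
    · rintro ⟨hS, hSk⟩
      simp only [Finset.mem_Icc] at hS
      by_cases hyS : y ∈ S
      · obtain ⟨p, hp, hSp⟩ := (hP₁c S).2 ⟨by
          simp only [Finset.mem_Icc]
          exact ⟨insert_subset hyS hS.1, hS.2⟩, hSk⟩
        exact ⟨p, mem_union_left _ hp, hSp⟩
      · obtain ⟨p, hp, hSp⟩ := (hP₂c S).2 ⟨by
          simp only [Finset.mem_Icc]
          exact ⟨hS.1, subset_erase.2 ⟨hS.2, hyS⟩⟩, hSk⟩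
        exact ⟨p, mem_union_right _ hp, hSp⟩

end Cube

section DelBot
variable {n : ℕ}

/-- Partition of `[A,B] \ {A}` into intervals whose tops are strictly bigger than `A`. -/
lemma delbot_partition : ∀ (d : ℕ) (A B : Finset (Fin n)), (B \ A).card = d → A ⊆ B →
    ∃ P : Finset (Finset (Fin n) × Finset (Fin n)),
      (∀ p ∈ P, A ⊆ p.1 ∧ p.1 ⊆ p.2 ∧ p.2 ⊆ B ∧ A.card < p.2.card) ∧
      (∀ p ∈ P, ∀ q ∈ P, p ≠ q → Disjoint (Finset.Icc p.1 p.2) (Finset.Icc q.1 q.2)) ∧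
      (∀ S, (∃ p ∈ P, S ∈ Finset.Icc p.1 p.2) ↔ (S ∈ Finset.Icc A B ∧ S ≠ A)) := by
  intro d
  induction d using Nat.strong_induction_on with
  | _ d ih =>
  intro A B hd hAB
  by_cases hne : A = B
  · subst hne
    refine ⟨∅, by simp, by simp, ?_⟩
    intro S
    simp only [notMem_empty, false_and, exists_false, false_iff, Finset.Icc_self,
      mem_singleton, not_and]
    rintro rfl h; exact h rfl
  obtain ⟨y, hyB, hyA⟩ := exists_of_ssubset (ssubset_of_subset_of_ne hAB hne)
  have m2 : (B.erase y \ A).card < d := by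
    rw [← hd]
    refine card_lt_card ?_
    rw [Finset.ssubset_iff_of_subset (sdiff_subset_sdiff (erase_subset _ _) subset_rfl)]
    exact ⟨y, mem_sdiff.2 ⟨hyB, hyA⟩, by simp⟩
  obtain ⟨P₂, hP₂p, hP₂d, hP₂c⟩ := ih _ m2 A (B.erase y) rfl (subset_erase.2 ⟨hAB, hyA⟩)
  have hy2 : ∀ p ∈ P₂, ∀ S ∈ Finset.Icc p.1 p.2, y ∉ S := by
    intro p hp S hS hyS
    simp only [Finset.mem_Icc] at hS
    exact (mem_erase.1 ((hP₂p p hp).2.2.1 (hS.2 hyS))).1 rfl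
  have hnewmem : (insert y A, B) ∉ P₂ := by
    intro h
    exact hy2 _ h (insert y A) (Finset.mem_Icc.2 ⟨subset_rfl, (hP₂p _ h).2.1⟩)
      (mem_insert_self _ _)
  refine ⟨insert (insert y A, B) P₂, ?_, ?_, ?_⟩
  · intro p hp
    rcases mem_insert.1 hp with rfl | h
    · exact ⟨subset_insert _ _, insert_subset hyB hAB, subset_rfl,
        card_lt_card (ssubset_of_subset_of_ne hAB hne)⟩
    · obtain ⟨h1, h2, h3, h4⟩ := hP₂p p h
      exact ⟨h1, h2, h3.trans (erase_subset _ _), h4⟩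
  · intro p hp q hq hpq
    rcases mem_insert.1 hp with rfl | h
    · rcases mem_insert.1 hq with rfl | h'
      · exact absurd rfl hpq
      · rw [Finset.disjoint_left]
        intro S s1 s2
        simp only [Finset.mem_Icc] at s1
        exact hy2 q h' S s2 (s1.1 (mem_insert_self _ _))
    rcases mem_insert.1 hq with rfl | h'
    · rw [Finset.disjoint_left]
      intro S s1 s2
      simp only [Finset.mem_Icc] at s2
      exact hy2 p h S s1 (s2.1 (mem_insert_self _ _))
    · exact hP₂d p h q h' hpq
  · intro S
    constructor
    · rintro ⟨p, hp, hSp⟩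
      rcases mem_insert.1 hp with rfl | h
      · simp only [Finset.mem_Icc] at hSp ⊢
        refine ⟨⟨(subset_insert _ _).trans hSp.1, hSp.2⟩, ?_⟩
        rintro rfl
        exact hyA (hSp.1 (mem_insert_self _ _))
      · have := (hP₂c S).1 ⟨p, h, hSp⟩
        simp only [Finset.mem_Icc] at this ⊢
        exact ⟨⟨this.1.1, this.1.2.trans (erase_subset _ _)⟩, this.2⟩
    · rintro ⟨hS, hSA⟩
      simp only [Finset.mem_Icc] at hS
      by_cases hyS : y ∈ S
      · exact ⟨(insert y A, B), mem_insert_self _ _,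
          Finset.mem_Icc.2 ⟨insert_subset hyS hS.1, hS.2⟩⟩
      · obtain ⟨p, hp, hSp⟩ := (hP₂c S).2
          ⟨Finset.mem_Icc.2 ⟨hS.1, subset_erase.2 ⟨hS.2, hyS⟩⟩, hSA⟩
        exact ⟨p, mem_insert_of_mem hp, hSp⟩

end DelBot

section Assemble
variable {n : ℕ}

lemma trunc_assemble (Q : Finset (Finset (Fin n))) (P : IntervalPartition n Q) (k : ℕ)
    (hk : ∀ p ∈ P.pairs, k ≤ p.2.card) :
    ∃ P' : IntervalPartition n (Q.filter (fun S => S.card ≤ k)),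
      ∀ q ∈ P'.pairs, k ≤ q.2.card := by
  classical
  set f : Finset (Fin n) × Finset (Fin n) → Finset (Finset (Fin n) × Finset (Fin n)) :=
    fun p => if h : p.1 ⊆ p.2 ∧ p.1.card ≤ k ∧ k ≤ p.2.card then
      (trunc_partition (p.2 \ p.1).card p.1 p.2 k rfl h.1 h.2.1 h.2.2).choose
    else ∅ with hfdef
  have hspec : ∀ p : Finset (Fin n) × Finset (Fin n),
      ∀ h : p.1 ⊆ p.2 ∧ p.1.card ≤ k ∧ k ≤ p.2.card,
      (∀ q ∈ f p, p.1 ⊆ q.1 ∧ q.1 ⊆ q.2 ∧ q.2 ⊆ p.2 ∧ q.2.card = k) ∧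
      (∀ q ∈ f p, ∀ r ∈ f p, q ≠ r → Disjoint (Finset.Icc q.1 q.2) (Finset.Icc r.1 r.2)) ∧
      (∀ S, (∃ q ∈ f p, S ∈ Finset.Icc q.1 q.2) ↔ (S ∈ Finset.Icc p.1 p.2 ∧ S.card ≤ k)) := by
    intro p h
    have := (trunc_partition (p.2 \ p.1).card p.1 p.2 k rfl h.1 h.2.1 h.2.2).choose_spec
    rw [hfdef]
    simpa [dif_pos h] using this
  -- any q in f p has its interval inside Icc p.1 p.2 with card ≤ k
  have hIcc : ∀ p : Finset (Fin n) × Finset (Fin n), ∀ q ∈ f p, ∀ S ∈ Finset.Icc q.1 q.2,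
      S ∈ Finset.Icc p.1 p.2 ∧ S.card ≤ k := by
    intro p q hq S hS
    by_cases h : p.1 ⊆ p.2 ∧ p.1.card ≤ k ∧ k ≤ p.2.card
    · exact ((hspec p h).2.2 S).1 ⟨q, hq, hS⟩
    · rw [hfdef] at hq; simp [dif_neg h] at hq
  refine ⟨⟨P.pairs.biUnion f, ?_, ?_, ?_, ?_⟩, ?_⟩
  · intro q hq
    obtain ⟨p, hp, hqp⟩ := mem_biUnion.1 hq
    by_cases h : p.1 ⊆ p.2 ∧ p.1.card ≤ k ∧ k ≤ p.2.card
    · exact ((hspec p h).1 q hqp).2.1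
    · rw [hfdef] at hqp; simp [dif_neg h] at hqp
  · intro q hq S hS
    obtain ⟨p, hp, hqp⟩ := mem_biUnion.1 hq
    obtain ⟨h1, h2⟩ := hIcc p q hqp S hS
    exact mem_filter.2 ⟨P.sub p hp h1, h2⟩
  · intro q hq r hr hqr
    obtain ⟨p, hp, hqp⟩ := mem_biUnion.1 hq
    obtain ⟨p', hp', hrp⟩ := mem_biUnion.1 hr
    by_cases hpp' : p = p'
    · subst hpp'
      by_cases h : p.1 ⊆ p.2 ∧ p.1.card ≤ k ∧ k ≤ p.2.card
      · exact (hspec p h).2.1 q hqp r hrp hqr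
      · rw [hfdef] at hqp; simp [dif_neg h] at hqp
    · rw [Finset.disjoint_left]
      intro S s1 s2
      exact Finset.disjoint_left.1 (P.disj p hp p' hp' hpp')
        (hIcc p q hqp S s1).1 (hIcc p' r hrp S s2).1
  · intro S hS
    obtain ⟨hSQ, hSk⟩ := mem_filter.1 hS
    obtain ⟨p, hp, hSp⟩ := P.covers S hSQ
    have h : p.1 ⊆ p.2 ∧ p.1.card ≤ k ∧ k ≤ p.2.card := by
      refine ⟨P.le p hp, ?_, hk p hp⟩
      rw [Finset.mem_Icc] at hSp
      exact (card_le_card hSp.1).trans hSk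
    obtain ⟨q, hq, hSq⟩ := ((hspec p h).2.2 S).2 ⟨hSp, hSk⟩
    exact ⟨q, mem_biUnion.2 ⟨p, hp, hq⟩, hSq⟩
  · intro q hq
    obtain ⟨p, hp, hqp⟩ := mem_biUnion.1 hq
    by_cases h : p.1 ⊆ p.2 ∧ p.1.card ≤ k ∧ k ≤ p.2.card
    · exact le_of_eq ((hspec p h).1 q hqp).2.2.2.symm
    · rw [hfdef] at hqp; simp [dif_neg h] at hqp

end Assemble

section Ladder
variable {n : ℕ}

/-- one rung of the ladder : from a good partition of `U_j` get one of `U_{j+1}`. -/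
lemma ladder_step (D : Finset (Finset (Fin n))) (hD : IsDownSet D) (j k : ℕ) (hkj : k ≤ j)
    (P : IntervalPartition n (univ \ D.filter (fun S => S.card ≤ j)))
    (hP : ∀ p ∈ P.pairs, k + 1 ≤ p.2.card) :
    ∃ P' : IntervalPartition n (univ \ D.filter (fun S => S.card ≤ j + 1)),
      ∀ q ∈ P'.pairs, k + 1 ≤ q.2.card := by
  classical
  have hUjmem : ∀ S : Finset (Fin n), S ∈ univ \ D.filter (fun S => S.card ≤ j) ↔
      ¬(S ∈ D ∧ S.card ≤ j) := by
    intro S; simp [mem_sdiff, mem_filter]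
  have hUj1mem : ∀ S : Finset (Fin n), S ∈ univ \ D.filter (fun S => S.card ≤ j + 1) ↔
      ¬(S ∈ D ∧ S.card ≤ j + 1) := by
    intro S; simp [mem_sdiff, mem_filter]
  set f : Finset (Fin n) × Finset (Fin n) → Finset (Finset (Fin n) × Finset (Fin n)) :=
    fun p => if h : p.1 ⊆ p.2 ∧ p.1 ∈ D ∧ p.1.card = j + 1 then
      (delbot_partition (p.2 \ p.1).card p.1 p.2 rfl h.1).choose
    else {p} with hfdef
  have hspec : ∀ p : Finset (Fin n) × Finset (Fin n),
      ∀ h : p.1 ⊆ p.2 ∧ p.1 ∈ D ∧ p.1.card = j + 1,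
      (∀ q ∈ f p, p.1 ⊆ q.1 ∧ q.1 ⊆ q.2 ∧ q.2 ⊆ p.2 ∧ p.1.card < q.2.card) ∧
      (∀ q ∈ f p, ∀ r ∈ f p, q ≠ r → Disjoint (Finset.Icc q.1 q.2) (Finset.Icc r.1 r.2)) ∧
      (∀ S, (∃ q ∈ f p, S ∈ Finset.Icc q.1 q.2) ↔ (S ∈ Finset.Icc p.1 p.2 ∧ S ≠ p.1)) := by
    intro p h
    have := (delbot_partition (p.2 \ p.1).card p.1 p.2 rfl h.1).choose_spec
    rw [hfdef]
    simpa [dif_pos h] using this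
  -- claim A
  have claimA : ∀ p ∈ P.pairs, ∀ S ∈ Finset.Icc p.1 p.2, S ∈ D → S.card ≤ j + 1 →
      S = p.1 ∧ p.1 ∈ D ∧ p.1.card = j + 1 := by
    intro p hp S hS hSD hScard
    rw [Finset.mem_Icc] at hS
    have hp1D : p.1 ∈ D := hD S hSD p.1 hS.1
    have hp1U : p.1 ∈ univ \ D.filter (fun S => S.card ≤ j) := P.sub p hp (Finset.mem_Icc.2 ⟨subset_rfl, P.le p hp⟩)
    have hp1card : ¬ p.1.card ≤ j := fun hc => (hUjmem p.1).1 hp1U ⟨hp1D, hc⟩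
    have hcards : p.1.card = j + 1 := le_antisymm ((card_le_card hS.1).trans hScard) (by omega)
    have : S = p.1 := (eq_of_subset_of_card_le hS.1 (by omega)).symm
    exact ⟨this, hp1D, hcards⟩
  have hIcc : ∀ p ∈ P.pairs, ∀ q ∈ f p, ∀ S ∈ Finset.Icc q.1 q.2,
      S ∈ Finset.Icc p.1 p.2 ∧ S ∈ univ \ D.filter (fun S => S.card ≤ j + 1) := by
    intro p hp q hq S hS
    by_cases h : p.1 ⊆ p.2 ∧ p.1 ∈ D ∧ p.1.card = j + 1
    · obtain ⟨hSp, hSne⟩ := ((hspec p h).2.2 S).1 ⟨q, hq, hS⟩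
      refine ⟨hSp, (hUj1mem S).2 ?_⟩
      rintro ⟨hSD, hSc⟩
      exact hSne (claimA p hp S hSp hSD hSc).1
    · rw [hfdef] at hq
      simp only [dif_neg h, mem_singleton] at hq
      rw [hq] at hS
      refine ⟨hS, (hUj1mem S).2 ?_⟩
      rintro ⟨hSD, hSc⟩
      exact h ⟨P.le p hp, (claimA p hp S hS hSD hSc).2⟩
  refine ⟨⟨P.pairs.biUnion f, ?_, ?_, ?_, ?_⟩, ?_⟩
  · intro q hq
    obtain ⟨p, hp, hqp⟩ := mem_biUnion.1 hq
    by_cases h : p.1 ⊆ p.2 ∧ p.1 ∈ D ∧ p.1.card = j + 1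
    · exact ((hspec p h).1 q hqp).2.1
    · rw [hfdef] at hqp; simp only [dif_neg h, mem_singleton] at hqp
      rw [hqp]; exact P.le p hp
  · intro q hq S hS
    obtain ⟨p, hp, hqp⟩ := mem_biUnion.1 hq
    exact (hIcc p hp q hqp S hS).2
  · intro q hq r hr hqr
    obtain ⟨p, hp, hqp⟩ := mem_biUnion.1 hq
    obtain ⟨p', hp', hrp⟩ := mem_biUnion.1 hr
    by_cases hpp' : p = p'
    · subst hpp'
      by_cases h : p.1 ⊆ p.2 ∧ p.1 ∈ D ∧ p.1.card = j + 1
      · exact (hspec p h).2.1 q hqp r hrp hqr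
      · rw [hfdef] at hqp hrp
        simp only [dif_neg h, mem_singleton] at hqp hrp
        exact absurd (hqp.trans hrp.symm) hqr
    · rw [Finset.disjoint_left]
      intro S s1 s2
      exact Finset.disjoint_left.1 (P.disj p hp p' hp' hpp')
        (hIcc p hp q hqp S s1).1 (hIcc p' hp' r hrp S s2).1
  · intro S hS
    have hSUj : S ∈ univ \ D.filter (fun S => S.card ≤ j) := by
      rw [hUjmem]
      rw [hUj1mem] at hS
      rintro ⟨h1, h2⟩; exact hS ⟨h1, by omega⟩
    obtain ⟨p, hp, hSp⟩ := P.covers S hSUj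
    by_cases h : p.1 ⊆ p.2 ∧ p.1 ∈ D ∧ p.1.card = j + 1
    · have hSne : S ≠ p.1 := by
        intro hSp1
        rw [hSp1] at hS
        exact (hUj1mem p.1).1 hS ⟨h.2.1, le_of_eq h.2.2⟩
      obtain ⟨q, hq, hSq⟩ := ((hspec p h).2.2 S).2 ⟨hSp, hSne⟩
      exact ⟨q, mem_biUnion.2 ⟨p, hp, hq⟩, hSq⟩
    · refine ⟨p, mem_biUnion.2 ⟨p, hp, ?_⟩, hSp⟩
      rw [hfdef]; simp [dif_neg h]
  · intro q hq
    obtain ⟨p, hp, hqp⟩ := mem_biUnion.1 hq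
    by_cases h : p.1 ⊆ p.2 ∧ p.1 ∈ D ∧ p.1.card = j + 1
    · have := ((hspec p h).1 q hqp).2.2.2
      omega
    · rw [hfdef] at hqp; simp only [dif_neg h, mem_singleton] at hqp
      subst hqp
      exact hP q hp

end Ladder

section OneLe
variable {n : ℕ}

lemma one_le_sdepth (D : Finset (Finset (Fin n))) (hD : IsDownSet D) (h0 : ∅ ∈ D)
    {x₀ : Fin n} (hx₀ : ({x₀} : Finset (Fin n)) ∈ D) : 1 ≤ sdepth D := by
  classical
  have hsub : ∀ S : Finset (Fin n), S ⊆ {x₀} → S ∈ D := fun S hS => hD _ hx₀ S hS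
  refine le_sdepth ⟨∅, h0⟩
    ⟨insert (∅, ({x₀} : Finset (Fin n)))
        ((D.filter (fun S => S ≠ ∅ ∧ S ≠ {x₀})).image (fun S => (S, S))), ?_, ?_, ?_, ?_⟩ ?_
  · intro p hp
    rcases mem_insert.1 hp with rfl | h
    · exact empty_subset _
    · obtain ⟨S, hS, rfl⟩ := mem_image.1 h
      exact subset_rfl
  · intro p hp S hS
    rcases mem_insert.1 hp with rfl | h
    · rw [Finset.mem_Icc] at hS
      exact hsub S hS.2
    · obtain ⟨T, hT, rfl⟩ := mem_image.1 h
      rw [Finset.Icc_self, mem_singleton] at hS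
      subst hS
      exact (mem_filter.1 hT).1
  · intro p hp q hq hpq
    have hIx : ∀ S : Finset (Fin n), S ∈ Finset.Icc (∅ : Finset (Fin n)) {x₀} ↔ S ⊆ {x₀} := by
      intro S; rw [Finset.mem_Icc]; exact ⟨fun h => h.2, fun h => ⟨empty_subset _, h⟩⟩
    rcases mem_insert.1 hp with rfl | h
    · have hq' : q ∈ (D.filter (fun S => S ≠ ∅ ∧ S ≠ {x₀})).image (fun S => (S, S)) :=
        (mem_insert.1 hq).resolve_left (fun h => hpq h.symm)
      obtain ⟨T, hT, rfl⟩ := mem_image.1 hq'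
      rw [Finset.disjoint_left]
      intro S s1 s2
      rw [Finset.Icc_self, mem_singleton] at s2
      subst s2
      rcases subset_singleton_iff.1 ((hIx S).1 s1) with rfl | rfl
      · exact (mem_filter.1 hT).2.1 rfl
      · exact (mem_filter.1 hT).2.2 rfl
    rcases mem_insert.1 hq with rfl | h'
    · obtain ⟨T, hT, rfl⟩ := mem_image.1 h
      rw [Finset.disjoint_left]
      intro S s1 s2
      rw [Finset.Icc_self, mem_singleton] at s1
      subst s1
      rcases subset_singleton_iff.1 ((hIx S).1 s2) with rfl | rfl
      · exact (mem_filter.1 hT).2.1 rfl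
      · exact (mem_filter.1 hT).2.2 rfl
    · obtain ⟨T, hT, rfl⟩ := mem_image.1 h
      obtain ⟨T', hT', rfl⟩ := mem_image.1 h'
      rw [Finset.disjoint_left]
      intro S s1 s2
      rw [Finset.Icc_self, mem_singleton] at s1 s2
      subst s1; subst s2
      exact hpq rfl
  · intro C hC
    by_cases h : C = ∅ ∨ C = {x₀}
    · refine ⟨(∅, {x₀}), mem_insert_self _ _, ?_⟩
      rw [Finset.mem_Icc]
      rcases h with rfl | rfl
      · exact ⟨subset_rfl, empty_subset _⟩
      · exact ⟨empty_subset _, subset_rfl⟩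
    · push_neg at h
      refine ⟨(C, C), mem_insert_of_mem (mem_image_of_mem _ (mem_filter.2 ⟨hC, ⟨h.1.ne_empty, h.2⟩⟩)), ?_⟩
      simp
  · intro p hp
    rcases mem_insert.1 hp with rfl | h
    · simp
    · obtain ⟨T, hT, rfl⟩ := mem_image.1 h
      have : T ≠ ∅ := (mem_filter.1 hT).2.1
      simpa [Nat.one_le_iff_ne_zero] using this

end OneLe

lemma aux_reduction : ∀ n : ℕ, 1 ≤ n → ∀ D : Finset (Finset (Fin n)), IsDownSet D → ∅ ∈ D →
    ((Finset.univ : Finset (Finset (Fin n))) \ D).Nonempty →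
    sdepth ((Finset.univ : Finset (Finset (Fin n))) \ D) ≤ sdepth D →
    ∃ (n' : ℕ), n' ≤ n ∧ ∃ D' : Finset (Finset (Fin n')),
      IsDownSet D' ∧ ∅ ∈ D' ∧
      ((Finset.univ : Finset (Finset (Fin n'))) \ D').Nonempty ∧
      sdepth ((Finset.univ : Finset (Finset (Fin n'))) \ D') ≤ sdepth D' ∧
      (∀ B, MaxElt D' B → B.card = sdepth D') ∧
      (∀ x : Fin n', ∃ B, MaxElt D' B ∧ x ∈ B) ∧
      (∀ x : Fin n', ∃ B, MaxElt D' B ∧ x ∉ B) := by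
  intro n
  induction n using Nat.strong_induction_on with
  | _ n ih =>
  intro hn D hD h0 hU hle
  classical
  by_cases hI : ∃ x : Fin n, ∀ S ∈ D, x ∉ S
  · -- Case I : an unused variable
    obtain ⟨m, rfl⟩ : ∃ m, n = m + 1 := ⟨n - 1, by omega⟩
    obtain ⟨x, hx⟩ := hI
    set D₀ := (univ : Finset (Finset (Fin m))).filter (fun T => liftF x T ∈ D) with hD₀def
    have hD₀mem : ∀ T, T ∈ D₀ ↔ liftF x T ∈ D := by intro T; simp [hD₀def]
    have hD₀down : IsDownSet D₀ := fun B hB A hAB =>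
      (hD₀mem A).2 (hD _ ((hD₀mem B).1 hB) _ (liftF_mono hAB))
    have h0₀ : ∅ ∈ D₀ := (hD₀mem ∅).2 (by simpa [liftF] using h0)
    by_cases hU₀ : ((univ : Finset (Finset (Fin m))) \ D₀).Nonempty
    · -- recurse
      have hm1 : 1 ≤ m := by
        rcases Nat.eq_zero_or_pos m with rfl | h
        · obtain ⟨T, hT⟩ := hU₀
          rw [Finset.eq_empty_of_isEmpty T] at hT
          exact absurd h0₀ (mem_sdiff.1 hT).2
        · exact h
      obtain ⟨PD, hPD⟩ := sdepth_witness (⟨∅, h0⟩ : D.Nonempty)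
      obtain ⟨P₀D, hP₀D⟩ := del_partition D D₀ hD₀mem PD (sdepth D) (by
        intro p hp
        have hxp : x ∉ p.2 := hx _ (PD.sub p hp (Finset.mem_Icc.2 ⟨PD.le p hp, subset_rfl⟩))
        rw [erase_eq_of_notMem hxp]
        exact hPD p hp)
      have hDD₀ : sdepth D ≤ sdepth D₀ := le_sdepth ⟨∅, h0₀⟩ P₀D hP₀D
      have hU₀mem : ∀ T, T ∈ univ \ D₀ ↔ liftF x T ∉ D := by
        intro T
        rw [mem_sdiff]
        exact ⟨fun h hl => h.2 ((hD₀mem T).2 hl),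
          fun h => ⟨mem_univ _, fun hT => h ((hD₀mem T).1 hT)⟩⟩
      obtain ⟨PU₀, hPU₀⟩ := sdepth_witness hU₀
      obtain ⟨PU, hPU⟩ := unused_lift_partition D (univ \ D₀) hx hU₀mem PU₀
        (sdepth (univ \ D₀)) ((sdepth_le_card_top hU₀).trans (by omega)) hPU₀
      have hUU₀ : sdepth (univ \ D₀) ≤ sdepth (univ \ D) := le_sdepth hU PU hPU
      obtain ⟨n', hn', rest⟩ := ih m (by omega) hm1 D₀ hD₀down h0₀ hU₀
        (hUU₀.trans (hle.trans hDD₀))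
      exact ⟨n', by omega, rest⟩
    · -- contradiction : D = all x-free sets
      exfalso
      have hall : ∀ T : Finset (Fin m), liftF x T ∈ D := by
        intro T
        by_contra hT
        exact hU₀ ⟨T, mem_sdiff.2 ⟨mem_univ _, fun h => hT ((hD₀mem T).1 h)⟩⟩
      have hUge : m + 1 ≤ sdepth (univ \ D) := by
        refine le_sdepth hU ⟨{({x}, univ)}, ?_, ?_, ?_, ?_⟩ ?_
        · intro p hp; simp only [mem_singleton] at hp; subst hp; exact subset_univ _
        · intro p hp S hS
          simp only [mem_singleton] at hp; subst hp
          rw [Finset.mem_Icc] at hS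
          exact mem_sdiff.2 ⟨mem_univ _, fun hSD => hx S hSD (hS.1 (mem_singleton_self x))⟩
        · intro p hp q hq hpq
          simp only [mem_singleton] at hp hq
          subst hp; subst hq; exact absurd rfl hpq
        · intro S hS
          refine ⟨({x}, univ), mem_singleton_self _, ?_⟩
          rw [Finset.mem_Icc]
          refine ⟨singleton_subset_iff.2 ?_, subset_univ _⟩
          by_contra hxS
          refine (mem_sdiff.1 hS).2 ?_
          have := hall (shrinkF x S)
          rwa [liftF_shrinkF_of_not_mem hxS] at this
        · intro p hp; simp only [mem_singleton] at hp; subst hp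
          rw [card_univ, Fintype.card_fin]
      have hDle : sdepth D ≤ m := by
        refine sdepth_le fun P => ?_
        obtain ⟨p, hp, h0p⟩ := P.covers ∅ h0
        refine ⟨p, hp, ?_⟩
        have hp2D : p.2 ∈ D := P.sub p hp (Finset.mem_Icc.2 ⟨P.le p hp, subset_rfl⟩)
        have hxp2 : x ∉ p.2 := hx _ hp2D
        have hsub : p.2 ⊆ univ.erase x := fun y hy =>
          mem_erase.2 ⟨fun h => hxp2 (h ▸ hy), mem_univ _⟩
        calc p.2.card ≤ (univ.erase x).card := card_le_card hsub
          _ = m := by rw [card_erase_of_mem (mem_univ _)]; simp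
      omega
  by_cases hII : ∃ x : Fin n, ∀ S ∈ D, insert x S ∈ D
  · -- Case II : a cone point
    obtain ⟨m, rfl⟩ : ∃ m, n = m + 1 := ⟨n - 1, by omega⟩
    obtain ⟨x, hx⟩ := hII
    set D₀ := (univ : Finset (Finset (Fin m))).filter (fun T => liftF x T ∈ D) with hD₀def
    have hD₀mem : ∀ T, T ∈ D₀ ↔ liftF x T ∈ D := by intro T; simp [hD₀def]
    have hD₀down : IsDownSet D₀ := fun B hB A hAB =>
      (hD₀mem A).2 (hD _ ((hD₀mem B).1 hB) _ (liftF_mono hAB))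
    have h0₀ : ∅ ∈ D₀ := (hD₀mem ∅).2 (by simpa [liftF] using h0)
    have hUiff : ∀ S : Finset (Fin (m+1)), S ∈ univ \ D ↔ shrinkF x S ∈ univ \ D₀ := by
      intro S
      rw [mem_sdiff, mem_sdiff]
      simp only [mem_univ, true_and]
      constructor
      · intro hSD hsh
        have h1 : liftF x (shrinkF x S) ∈ D := (hD₀mem _).1 hsh
        rw [liftF_shrinkF] at h1
        have h2 : insert x (S.erase x) ∈ D := hx _ h1
        refine hSD (hD _ h2 S (fun y hy => ?_))
        by_cases hyx : y = x
        · exact hyx ▸ mem_insert_self _ _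
        · exact mem_insert_of_mem (mem_erase.2 ⟨hyx, hy⟩)
      · intro hsh hSD
        refine hsh ((hD₀mem _).2 ?_)
        rw [liftF_shrinkF]
        exact hD S hSD _ (erase_subset _ _)
    have hU₀ : ((univ : Finset (Finset (Fin m))) \ D₀).Nonempty := by
      obtain ⟨S, hS⟩ := hU
      exact ⟨shrinkF x S, (hUiff S).1 hS⟩
    have hm1 : 1 ≤ m := by
      rcases Nat.eq_zero_or_pos m with rfl | h
      · obtain ⟨T, hT⟩ := hU₀
        rw [Finset.eq_empty_of_isEmpty T] at hT
        exact absurd h0₀ (mem_sdiff.1 hT).2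
      · exact h
    obtain ⟨PD, hPD⟩ := sdepth_witness (⟨∅, h0⟩ : D.Nonempty)
    obtain ⟨P₀D, hP₀D⟩ := del_partition D D₀ hD₀mem PD (sdepth D - 1) (by
      intro p hp
      have h1 := hPD p hp
      have h2 : p.2.card - 1 ≤ (p.2.erase x).card := by
        rcases em (x ∈ p.2) with h | h
        · rw [card_erase_of_mem h]
        · rw [erase_eq_of_notMem h]; omega
      omega)
    have hDD₀ : sdepth D - 1 ≤ sdepth D₀ := le_sdepth ⟨∅, h0₀⟩ P₀D hP₀D
    obtain ⟨PU₀, hPU₀⟩ := sdepth_witness hU₀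
    obtain ⟨PU, hPU⟩ := cone_lift_partition (univ \ D) (univ \ D₀) hUiff PU₀
      (sdepth (univ \ D₀)) hPU₀
    have hUU₀ : sdepth (univ \ D₀) + 1 ≤ sdepth (univ \ D) := le_sdepth hU PU hPU
    have hle₀ : sdepth (univ \ D₀) ≤ sdepth D₀ := by omega
    obtain ⟨n', hn', rest⟩ := ih m (by omega) hm1 D₀ hD₀down h0₀ hU₀ hle₀
    exact ⟨n', by omega, rest⟩
  -- Case III : truncate
  push_neg at hI hII
  set k := sdepth D with hk
  have hx₀k : ∀ x : Fin n, ({x} : Finset (Fin n)) ∈ D := by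
    intro x
    obtain ⟨S, hS, hxS⟩ := hI x
    exact hD S hS {x} (singleton_subset_iff.2 hxS)
  have hk1 : 1 ≤ k := one_le_sdepth D hD h0 (hx₀k ⟨0, hn⟩)
  set D' := D.filter (fun S => S.card ≤ k) with hD'def
  have hD'mem : ∀ S, S ∈ D' ↔ S ∈ D ∧ S.card ≤ k := fun S => mem_filter
  have hD'down : IsDownSet D' := by
    intro B hB A hAB
    obtain ⟨hBD, hBk⟩ := (hD'mem B).1 hB
    exact (hD'mem A).2 ⟨hD B hBD A hAB, (card_le_card hAB).trans hBk⟩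
  have h0' : ∅ ∈ D' := (hD'mem ∅).2 ⟨h0, by simp⟩
  have hU'ne : ((univ : Finset (Finset (Fin n))) \ D').Nonempty := by
    obtain ⟨W, hW⟩ := hU
    exact ⟨W, mem_sdiff.2 ⟨mem_univ _, fun h => (mem_sdiff.1 hW).2 ((hD'mem W).1 h).1⟩⟩
  have hmax' : ∀ B, MaxElt D' B → B.card = k := by
    intro B hB
    have hBk : B.card ≤ k := ((hD'mem B).1 hB.1).2
    by_contra hne
    have hlt : B.card < k := lt_of_le_of_ne hBk hne
    have hmaxD : MaxElt D B := by
      refine ⟨((hD'mem B).1 hB.1).1, fun C hC hBC => ?_⟩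
      by_contra hBCne
      obtain ⟨y, hyC, hyB⟩ := exists_of_ssubset (ssubset_of_subset_of_ne hBC hBCne)
      have hyD : insert y B ∈ D := hD C hC _ (insert_subset hyC hBC)
      have hyD' : insert y B ∈ D' := (hD'mem _).2 ⟨hyD, by
        rw [card_insert_of_notMem hyB]; omega⟩
      have heq := hB.2 _ hyD' (subset_insert _ _)
      exact hyB (heq ▸ mem_insert_self y B)
    have := sdepth_le_maxElt hmaxD
    omega
  obtain ⟨PD, hPD⟩ := sdepth_witness (⟨∅, h0⟩ : D.Nonempty)
  obtain ⟨P', hP'⟩ := trunc_assemble D PD k hPD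
  have hD'ge : k ≤ sdepth D' := le_sdepth ⟨∅, h0'⟩ P' hP'
  have hD'le : sdepth D' ≤ k := by
    obtain ⟨F, hF, -⟩ := exists_maxElt h0'
    exact (sdepth_le_maxElt hF).trans_eq (hmax' F hF)
  have hD'k : sdepth D' = k := le_antisymm hD'le hD'ge
  have hU'le : sdepth ((univ : Finset (Finset (Fin n))) \ D') ≤ k := by
    by_contra hcon
    push_neg at hcon
    obtain ⟨P₀, hP₀⟩ := sdepth_witness hU'ne
    have hP₀' : ∀ p ∈ P₀.pairs, k + 1 ≤ p.2.card :=
      fun p hp => le_trans (Nat.succ_le_of_lt hcon) (hP₀ p hp)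
    have ladder : ∀ t, ∃ P : IntervalPartition n (univ \ D.filter (fun S => S.card ≤ k + t)),
        ∀ p ∈ P.pairs, k + 1 ≤ p.2.card := by
      intro t
      induction t with
      | zero => exact ⟨P₀, hP₀'⟩
      | succ t iht =>
        obtain ⟨P, hP⟩ := iht
        exact ladder_step D hD (k + t) k (by omega) P hP
    obtain ⟨PF, hPF⟩ := ladder n
    have hfilter : D.filter (fun S => S.card ≤ k + n) = D := by
      apply filter_true_of_mem
      intro S hS
      have : S.card ≤ n := (card_le_univ S).trans_eq (by simp)
      omega
    have hne2 : ((univ : Finset (Finset (Fin n))) \ D.filter (fun S => S.card ≤ k + n)).Nonempty := by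
      rw [hfilter]; exact hU
    have hfin : k + 1 ≤ sdepth ((univ : Finset (Finset (Fin n))) \ D.filter (fun S => S.card ≤ k + n)) :=
      le_sdepth hne2 PF hPF
    rw [hfilter] at hfin
    omega
  refine ⟨n, le_rfl, D', hD'down, h0', hU'ne, ?_, ?_, ?_, ?_⟩
  · rw [hD'k]; exact hU'le
  · intro B hB; rw [hD'k]; exact hmax' B hB
  · intro x
    have hxD' : ({x} : Finset (Fin n)) ∈ D' := (hD'mem _).2 ⟨hx₀k x, by simp [hk1]⟩
    obtain ⟨F, hF, hsub⟩ := exists_maxElt hxD'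
    exact ⟨F, hF, hsub (mem_singleton_self x)⟩
  · intro x
    obtain ⟨S, hS, hins⟩ := hII x
    obtain ⟨F, hF, hSF⟩ := exists_maxElt hS
    have hxF : x ∉ F := fun hxF => hins (hD F hF.1 _ (insert_subset hxF hSF))
    have hkF : k ≤ F.card := sdepth_le_maxElt hF
    obtain ⟨G, hGF, hGcard⟩ := Finset.exists_subset_card_eq hkF
    have hGD' : G ∈ D' := (hD'mem _).2 ⟨hD F hF.1 G hGF, le_of_eq hGcard⟩
    refine ⟨G, ⟨hGD', fun C hC hGC => ?_⟩, fun hxG => hxF (hGF hxG)⟩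
    exact eq_of_subset_of_card_le hGC (by rw [hGcard]; exact ((hD'mem C).1 hC).2)


/-- If some down set `D ⊆ 2^[n]` with `∅ ∈ D` and nonempty complement `U` satisfies
`sdepth(U) ≤ sdepth(D)`, then there is `n' ≤ n` and a down set `D' ⊆ 2^[n']` with
`∅ ∈ D'`, nonempty complement `U'`, `sdepth(U') ≤ sdepth(D')`, such that (with
`k = sdepth(D')`): every maximal element of `D'` has exactly `k` elements, the union
of the maximal elements of `D'` is `[n']`, and their intersection is empty. -/
theorem minimal_counterexample_reduction
    (n : ℕ) (hn : 1 ≤ n) (D : Finset (Finset (Fin n))) (hD : IsDownSet D)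
    (h0 : ∅ ∈ D) (hU : ((Finset.univ : Finset (Finset (Fin n))) \ D).Nonempty)
    (hle : sdepth ((Finset.univ : Finset (Finset (Fin n))) \ D) ≤ sdepth D) :
    ∃ (n' : ℕ), n' ≤ n ∧ ∃ D' : Finset (Finset (Fin n')),
      IsDownSet D' ∧ ∅ ∈ D' ∧
      ((Finset.univ : Finset (Finset (Fin n'))) \ D').Nonempty ∧
      sdepth ((Finset.univ : Finset (Finset (Fin n'))) \ D') ≤ sdepth D' ∧
      (∀ B, MaxElt D' B → B.card = sdepth D') ∧
      (∀ x : Fin n', ∃ B, MaxElt D' B ∧ x ∈ B) ∧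
      (∀ x : Fin n', ∃ B, MaxElt D' B ∧ x ∉ B) :=
  aux_reduction n hn D hD h0 hU hle
end

section
/- Let n ≥ 2 and let D ⊆ 2^[n] be a down set with ∅ ∈ D such that every maximal element of D has exactly n−1 elements. Then sdepth(2^[n] \ D) > sdepth(D). (Combinatorially: if all facets of the Stanley–Reisner complex of a squarefree monomial ideal I have size n−1, then sdepth I > sdepth S/I.) -/
open Finset

/-- If every maximal element of the down set `D ⊆ 2^[n]` has exactly `n-1` elements,
then `sdepth(2^[n] \ D) > sdepth(D)`. -/
theorem sdepth_gt_of_facets_card_pred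
    (n : ℕ) (hn : 2 ≤ n) (D : Finset (Finset (Fin n))) (hD : IsDownSet D)
    (h0 : ∅ ∈ D) (hmax : ∀ B, MaxElt D B → B.card = n - 1) :
    sdepth D < sdepth ((Finset.univ : Finset (Finset (Fin n))) \ D) := by
  classical
  have huniv : (univ : Finset (Fin n)) ∉ D := by
    intro h
    have := hmax univ ⟨h, fun C _ hsub => subset_antisymm hsub (subset_univ C)⟩
    rw [card_univ, Fintype.card_fin] at this
    omega
  set S : Finset (Fin n) := univ.filter (fun i => univ \ {i} ∈ D) with hSdef
  have hchar : ∀ C : Finset (Fin n), C ∈ D ↔ ¬ S ⊆ C := by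
    intro C
    constructor
    · intro hC
      set T : Finset (Finset (Fin n)) := D.filter (fun B => C ⊆ B) with hT
      have hTne : T.Nonempty := ⟨C, by simp [hT, hC]⟩
      obtain ⟨B, hBT, hBmax⟩ := T.exists_max_image Finset.card hTne
      have hBD : B ∈ D := (mem_filter.1 hBT).1
      have hCB : C ⊆ B := (mem_filter.1 hBT).2
      have hBM : MaxElt D B := by
        refine ⟨hBD, fun C' hC' hsub => ?_⟩
        refine eq_of_subset_of_card_le hsub (hBmax C' ?_)
        exact mem_filter.2 ⟨hC', hCB.trans hsub⟩
      have hcard : B.card = n - 1 := hmax B hBM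
      have hc1 : (univ \ B).card = 1 := by
        rw [card_sdiff_of_subset (subset_univ B), card_univ, Fintype.card_fin, hcard]
        omega
      obtain ⟨i, hi⟩ := card_eq_one.1 hc1
      have hB : B = univ \ {i} := by
        rw [← hi]; simp
      intro hSC
      have hiS : i ∈ S := by
        rw [hSdef, mem_filter]
        exact ⟨mem_univ i, hB ▸ hBD⟩
      have hiC : i ∈ C := hSC hiS
      have : i ∈ B := hCB hiC
      rw [hB] at this
      simp at this
    · intro hSC
      obtain ⟨i, hiS, hiC⟩ := Finset.not_subset.1 hSC
      have hDi : univ \ {i} ∈ D := (mem_filter.1 hiS).2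
      refine hD _ hDi C (fun x hx => ?_)
      simp only [mem_sdiff, mem_univ, mem_singleton, true_and]
      rintro rfl; exact hiC hx
  -- the complement is the interval [S, univ]
  have hQ : (univ : Finset (Finset (Fin n))) \ D = Finset.Icc S univ := by
    ext C
    simp only [mem_sdiff, mem_univ, true_and, Finset.mem_Icc, le_eq_subset]
    rw [hchar C]
    simp only [Finset.subset_univ, and_true]
    tauto
  -- sdepth of the complement is at least n
  have hmem : n ∈ {k | ∃ P : IntervalPartition n ((univ : Finset (Finset (Fin n))) \ D),
      ∀ p ∈ P.pairs, k ≤ p.2.card} := by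
    refine ⟨⟨{(S, univ)}, ?_, ?_, ?_, ?_⟩, ?_⟩
    · intro p hp; simp only [Finset.mem_singleton] at hp; subst hp
      exact subset_univ S
    · intro p hp; simp only [Finset.mem_singleton] at hp; subst hp
      rw [hQ]
    · intro p hp q hq hne
      simp only [Finset.mem_singleton] at hp hq
      exact absurd (hp.trans hq.symm) hne
    · intro C hC
      exact ⟨(S, univ), Finset.mem_singleton_self _, by rwa [← hQ]⟩
    · intro p hp
      simp only [Finset.mem_singleton] at hp
      subst hp
      simp [card_univ]
  have hbdd : BddAbove {k | ∃ P : IntervalPartition n ((univ : Finset (Finset (Fin n))) \ D),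
      ∀ p ∈ P.pairs, k ≤ p.2.card} := by
    refine ⟨n, fun k hk => ?_⟩
    obtain ⟨P, hP⟩ := hk
    have hU : (univ : Finset (Fin n)) ∈ (univ : Finset (Finset (Fin n))) \ D := by
      simp [huniv]
    obtain ⟨p, hp, _⟩ := P.covers univ hU
    calc k ≤ p.2.card := hP p hp
      _ ≤ n := by simpa using card_le_card (subset_univ p.2)
  have h2 : n ≤ sdepth ((univ : Finset (Finset (Fin n))) \ D) := le_csSup hbdd hmem
  have h1 : sdepth D ≤ n - 1 := by
    refine csSup_le' ?_
    rintro k ⟨P, hP⟩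
    obtain ⟨p, hp, hmem0⟩ := P.covers ∅ h0
    have hp2D : p.2 ∈ D := P.sub p hp (Finset.mem_Icc.2 ⟨P.le p hp, Finset.Subset.refl _⟩)
    have hne : p.2 ≠ univ := fun h => huniv (h ▸ hp2D)
    have : p.2.card < n := by
      have := card_lt_card ((ssubset_univ_iff).2 hne)
      simpa [card_univ] using this
    have := hP p hp
    omega
  omega
end

section
/- Let n and k be positive integers with 2k ≤ n−1. Let D ⊆ 2^[n] be a down set containing every subset of [n] of size k−1, and suppose U = 2^[n] \ D is nonempty. Then sdepth(U) ≥ k+1. (Combinatorially: if P_{S/I} contains all (k−1)-sets and k ≤ (n−1)/2, then sdepth(I) > k.) -/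
open Finset

lemma hall_match (n k : ℕ) (hnk : k + 1 ≤ n - k) (S : Finset (Finset (Fin n)))
    (hS : ∀ A ∈ S, A.card = k) :
    ∃ f : {A // A ∈ S} → Finset (Fin n), Function.Injective f ∧
      ∀ A : {A // A ∈ S}, (A : Finset (Fin n)) ⊆ f A ∧ (f A).card = k + 1 := by
  set t : {A // A ∈ S} → Finset (Finset (Fin n)) :=
    fun A => univ.filter (fun B => (A : Finset (Fin n)) ⊆ B ∧ B.card = k + 1) with ht
  have hall : ∀ s : Finset {A // A ∈ S}, s.card ≤ (s.biUnion t).card := by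
    intro s
    set W := s.biUnion t with hW
    set E := (s ×ˢ W).filter (fun p => (p.1 : Finset (Fin n)) ⊆ p.2) with hE
    have hWcard : ∀ B ∈ W, B.card = k + 1 := by
      intro B hB
      simp only [hW, mem_biUnion, ht, mem_filter] at hB
      obtain ⟨A, _, _, _, h⟩ := hB
      exact h
    have h1 : E.card = ∑ A ∈ s, (E.filter (fun p => p.1 = A)).card := by
      apply Finset.card_eq_sum_card_fiberwise
      intro p hp
      simp only [hE, mem_coe, mem_filter, mem_product] at hp
      exact hp.1.1
    have h2 : E.card = ∑ B ∈ W, (E.filter (fun p => p.2 = B)).card := by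
      apply Finset.card_eq_sum_card_fiberwise
      intro p hp
      simp only [hE, mem_coe, mem_filter, mem_product] at hp
      exact hp.1.2
    have hlow : ∀ A ∈ s, (n - k) ≤ (E.filter (fun p => p.1 = A)).card := by
      intro A hA
      have hAcard : (A : Finset (Fin n)).card = k := hS _ A.2
      have : ((A : Finset (Fin n))ᶜ).card = n - k := by
        rw [Finset.card_compl, hAcard, Fintype.card_fin]
      rw [← this]
      apply Finset.card_le_card_of_injOn (fun x => (A, insert x (A : Finset (Fin n))))
      · intro x hx
        simp only [Finset.coe_compl, Set.mem_compl_iff, mem_coe] at hx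
        have hins : insert x (A : Finset (Fin n)) ∈ t A := by
          simp only [ht, mem_filter, mem_univ, true_and]
          exact ⟨subset_insert _ _, by rw [card_insert_of_notMem hx, hAcard]⟩
        simp only [hE, mem_coe, mem_filter, mem_product]
        exact ⟨⟨⟨hA, mem_biUnion.mpr ⟨A, hA, hins⟩⟩, subset_insert _ _⟩, trivial⟩
      · intro x hx y hy hxy
        simp only [Finset.coe_compl, Set.mem_compl_iff, mem_coe] at hx hy
        have : insert x (A : Finset (Fin n)) = insert y (A : Finset (Fin n)) := by
          simpa using hxy
        have hxm : x ∈ insert y (A : Finset (Fin n)) := this ▸ mem_insert_self x _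
        rcases mem_insert.mp hxm with h | h
        · exact h
        · exact absurd h hx
    have hhigh : ∀ B ∈ W, (E.filter (fun p => p.2 = B)).card ≤ k + 1 := by
      intro B hB
      have : (B.powersetCard k).card = k + 1 := by
        rw [Finset.card_powersetCard, hWcard B hB, Nat.choose_succ_self_right]
      rw [← this]
      apply Finset.card_le_card_of_injOn (fun p => (p.1 : Finset (Fin n)))
      · intro p hp
        simp only [hE, mem_coe, mem_filter, mem_product] at hp
        rw [mem_coe, Finset.mem_powersetCard]
        exact ⟨hp.2 ▸ hp.1.2, hS _ p.1.2⟩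
      · intro p hp q hq hpq
        simp only [hE, coe_filter, Set.mem_setOf_eq, mem_product] at hp hq
        exact Prod.ext (Subtype.ext hpq) (hp.2 ▸ hq.2 ▸ rfl)
    have hA : s.card * (n - k) ≤ E.card := by
      rw [h1]
      calc s.card * (n - k) = ∑ _A ∈ s, (n - k) := by rw [sum_const, smul_eq_mul]
        _ ≤ _ := Finset.sum_le_sum hlow
    have hB : E.card ≤ W.card * (k + 1) := by
      rw [h2]
      calc ∑ B ∈ W, (E.filter (fun p => p.2 = B)).card ≤ ∑ _B ∈ W, (k+1) :=
            Finset.sum_le_sum hhigh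
        _ = W.card * (k + 1) := by rw [sum_const, smul_eq_mul]
    have : s.card * (n - k) ≤ W.card * (n - k) := by
      calc s.card * (n - k) ≤ W.card * (k + 1) := le_trans hA hB
        _ ≤ W.card * (n - k) := Nat.mul_le_mul_left _ hnk
    exact Nat.le_of_mul_le_mul_right this (by omega)
  obtain ⟨f, hinj, hf⟩ := (Finset.all_card_le_biUnion_card_iff_exists_injective t).mp hall
  refine ⟨f, hinj, fun A => ?_⟩
  have := hf A
  simp only [ht, mem_filter, mem_univ, true_and] at this
  exact this

lemma Icc_pair_of_card {n : ℕ} (A B : Finset (Fin n)) (hAB : A ⊆ B)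
    (h : B.card = A.card + 1) : Finset.Icc A B = {A, B} := by
  ext C
  simp only [Finset.mem_Icc, Finset.mem_insert, Finset.mem_singleton]
  constructor
  · rintro ⟨h1, h2⟩
    have c1 := Finset.card_le_card h1
    have c2 := Finset.card_le_card h2
    rcases Nat.lt_or_ge C.card B.card with hlt | hge
    · exact Or.inl (Finset.eq_of_subset_of_card_le h1 (by omega)).symm
    · exact Or.inr (Finset.eq_of_subset_of_card_le h2 (by omega))
  · rintro (rfl | rfl)
    · exact ⟨Finset.Subset.refl _, hAB⟩
    · exact ⟨hAB, Finset.Subset.refl _⟩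

/-- If the down set `D ⊆ 2^[n]` contains every `(k-1)`-set, `2k ≤ n-1`, and
`U = 2^[n] \ D` is nonempty, then `sdepth(U) ≥ k+1`. -/
theorem sdepth_ge_succ_of_all_small_sets
    (n k : ℕ) (hn : 1 ≤ n) (hk : 1 ≤ k) (hkn : 2 * k ≤ n - 1)
    (D : Finset (Finset (Fin n))) (hD : IsDownSet D)
    (hall : ∀ A : Finset (Fin n), A.card = k - 1 → A ∈ D)
    (hU : ((Finset.univ : Finset (Finset (Fin n))) \ D).Nonempty) :
    k + 1 ≤ sdepth ((Finset.univ : Finset (Finset (Fin n))) \ D) := by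
  set U := (Finset.univ : Finset (Finset (Fin n))) \ D with hUdef
  have hmemU : ∀ C : Finset (Fin n), C ∈ U ↔ C ∉ D := by
    intro C; simp [hUdef]
  have hup : ∀ A, A ∈ U → ∀ B, A ⊆ B → B ∈ U := by
    intro A hA B hAB
    rw [hmemU] at hA ⊢
    exact fun hB => hA (hD B hB A hAB)
  have hkn' : k ≤ n - 1 := by omega
  have hcard : ∀ C ∈ U, k ≤ C.card := by
    intro C hC
    by_contra h
    push_neg at h
    have h1 : C.card ≤ k - 1 := by omega
    have h2 : k - 1 ≤ Fintype.card (Fin n) := by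
      rw [Fintype.card_fin]; omega
    obtain ⟨B, hCB, hBcard⟩ := Finset.exists_superset_card_eq h1 h2
    exact (hmemU C).mp hC (hD B (hall B hBcard) C hCB)
  set S := U.filter (fun A => A.card = k) with hSdef
  have hnk : k + 1 ≤ n - k := by omega
  obtain ⟨f, hfinj, hf⟩ := hall_match n k hnk S
    (fun A hA => (Finset.mem_filter.mp hA).2)
  have hSU : ∀ A : {A // A ∈ S}, (A : Finset (Fin n)) ∈ U :=
    fun A => (Finset.mem_filter.mp A.2).1
  have hSk : ∀ A : {A // A ∈ S}, (A : Finset (Fin n)).card = k :=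
    fun A => (Finset.mem_filter.mp A.2).2
  have hfU : ∀ A : {A // A ∈ S}, f A ∈ U :=
    fun A => hup _ (hSU A) (f A) (hf A).1
  classical
  set Im := S.attach.image f with hImdef
  set P1 : Finset (Finset (Fin n) × Finset (Fin n)) :=
    S.attach.image (fun (A : {A // A ∈ S}) => (↑A, f A)) with hP1def
  set P2 := ((U.filter (fun C => k + 1 ≤ C.card)) \ Im).image
    (fun C => (C, C)) with hP2def
  -- representation lemmas
  have hrep1 : ∀ p ∈ P1, ∃ A : {A // A ∈ S}, p = ((A : Finset (Fin n)), f A) := by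
    intro p hp
    rw [hP1def, Finset.mem_image] at hp
    obtain ⟨A, _, hA⟩ := hp
    exact ⟨A, hA.symm⟩
  have hrep2 : ∀ p ∈ P2, p.1 = p.2 ∧ p.1 ∈ U ∧ k + 1 ≤ p.1.card ∧ p.1 ∉ Im := by
    intro p hp
    rw [hP2def, Finset.mem_image] at hp
    obtain ⟨C, hC, hCp⟩ := hp
    rw [Finset.mem_sdiff, Finset.mem_filter] at hC
    subst hCp
    exact ⟨rfl, hC.1.1, hC.1.2, hC.2⟩
  have hIcc1 : ∀ A : {A // A ∈ S},
      Finset.Icc (A : Finset (Fin n)) (f A) = {(A : Finset (Fin n)), f A} := by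
    intro A
    exact Icc_pair_of_card _ _ (hf A).1 (by rw [(hf A).2, hSk A])
  have hfIm : ∀ A : {A // A ∈ S}, f A ∈ Im := by
    intro A
    rw [hImdef, Finset.mem_image]
    exact ⟨A, Finset.mem_attach _ _, rfl⟩
  -- build the partition
  refine le_csSup ?_ ?_
  · refine ⟨n, fun m hm => ?_⟩
    obtain ⟨P, hP⟩ := hm
    obtain ⟨C, hC⟩ := hU
    obtain ⟨p, hp, _⟩ := P.covers C hC
    have h1 := hP p hp
    have h2 : p.2.card ≤ n := by
      have := Finset.card_le_univ p.2
      simpa using this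
    omega
  · refine ⟨⟨P1 ∪ P2, ?_, ?_, ?_, ?_⟩, ?_⟩
    · -- le
      intro p hp
      rcases Finset.mem_union.mp hp with h | h
      · obtain ⟨A, rfl⟩ := hrep1 p h
        exact (hf A).1
      · rw [(hrep2 p h).1]
    · -- sub
      intro p hp C hC
      rw [Finset.mem_Icc] at hC
      rcases Finset.mem_union.mp hp with h | h
      · obtain ⟨A, rfl⟩ := hrep1 p h
        exact hup _ (hSU A) C hC.1
      · exact hup _ (hrep2 p h).2.1 C hC.1
    · -- disj
      have key : ∀ p ∈ P1, ∀ q ∈ P2,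
          Disjoint (Finset.Icc p.1 p.2) (Finset.Icc q.1 q.2) := by
        intro p hp q hq
        obtain ⟨A, rfl⟩ := hrep1 p hp
        obtain ⟨hq1, hq2, hq3, hq4⟩ := hrep2 q hq
        rw [hIcc1 A, ← hq1, Finset.Icc_self]
        rw [Finset.disjoint_singleton_right]
        simp only [Finset.mem_insert, Finset.mem_singleton]
        push_neg
        constructor
        · intro hqA
          have := hSk A
          rw [← hqA] at this
          omega
        · intro hqf
          exact hq4 (hqf ▸ hfIm A)
      intro p hp q hq hpq
      rcases Finset.mem_union.mp hp with h1 | h1 <;>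
        rcases Finset.mem_union.mp hq with h2 | h2
      · obtain ⟨A, rfl⟩ := hrep1 p h1
        obtain ⟨B, rfl⟩ := hrep1 q h2
        have hAB : A ≠ B := by
          rintro rfl; exact hpq rfl
        have hAB' : (A : Finset (Fin n)) ≠ (B : Finset (Fin n)) :=
          fun h => hAB (Subtype.ext h)
        have hfAB : f A ≠ f B := fun h => hAB (hfinj h)
        rw [hIcc1 A, hIcc1 B, Finset.disjoint_left]
        intro x hx
        simp only [Finset.mem_insert, Finset.mem_singleton] at hx ⊢
        push_neg
        rcases hx with rfl | rfl
        · refine ⟨hAB', fun h => ?_⟩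
          have h1 := hSk A
          have h2 := (hf B).2
          rw [h] at h1
          omega
        · refine ⟨fun h => ?_, hfAB⟩
          have h1 := (hf A).2
          have h2 := hSk B
          rw [h] at h1
          omega
      · exact key p h1 q h2
      · exact (key q h2 p h1).symm
      · obtain ⟨hp1, _, _, _⟩ := hrep2 p h1
        obtain ⟨hq1, _, _, _⟩ := hrep2 q h2
        rw [← hp1, ← hq1, Finset.Icc_self, Finset.Icc_self,
          Finset.disjoint_singleton]
        intro h
        apply hpq
        exact Prod.ext h (by rw [← hp1, ← hq1, h])
    · -- covers
      intro C hC
      rcases eq_or_lt_of_le (hcard C hC) with hCk | hCk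
      · have hCS : C ∈ S := Finset.mem_filter.mpr ⟨hC, hCk.symm⟩
        refine ⟨(C, f (⟨C, hCS⟩ : {A // A ∈ S})), ?_, ?_⟩
        · exact Finset.mem_union_left _
            (Finset.mem_image.mpr ⟨(⟨C, hCS⟩ : {A // A ∈ S}), Finset.mem_attach _ _, rfl⟩)
        · rw [Finset.mem_Icc]
          exact ⟨Finset.Subset.refl _, (hf (⟨C, hCS⟩ : {A // A ∈ S})).1⟩
      · by_cases hCIm : C ∈ Im
        · rw [hImdef, Finset.mem_image] at hCIm
          obtain ⟨A, _, rfl⟩ := hCIm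
          refine ⟨((A : Finset (Fin n)), f A), ?_, ?_⟩
          · exact Finset.mem_union_left _
              (Finset.mem_image.mpr ⟨A, Finset.mem_attach _ _, rfl⟩)
          · rw [Finset.mem_Icc]
            exact ⟨(hf A).1, Finset.Subset.refl _⟩
        · refine ⟨(C, C), ?_, ?_⟩
          · refine Finset.mem_union_right _ (Finset.mem_image.mpr ⟨C, ?_, rfl⟩)
            rw [Finset.mem_sdiff, Finset.mem_filter]
            exact ⟨⟨hC, hCk⟩, hCIm⟩
          · rw [Finset.mem_Icc]
            exact ⟨Finset.Subset.refl _, Finset.Subset.refl _⟩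
    · -- cardinality bound
      intro p hp
      rcases Finset.mem_union.mp hp with h | h
      · obtain ⟨A, rfl⟩ := hrep1 p h
        rw [(hf A).2]
      · obtain ⟨hp1, _, hp3, _⟩ := hrep2 p h
        rw [← hp1]
        exact hp3
end

section
/- Let D ⊆ 2^[n] be a down set with ∅ ∈ D and U = 2^[n] \ D nonempty, let k = sdepth(D), and suppose sdepth(U) ≤ k. Let X be a maximal element of D of maximum cardinality, and suppose |X| ≥ k+1. Then sdepth(D \ {X}) ≥ k and sdepth(U ∪ {X}) ≤ k. (This is the step in the minimal-counterexample reduction that moves a too-large facet X from P_{S/I} to P_I while preserving the inequality sdepth I ≤ sdepth S/I.) -/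
open Finset

namespace StanleyAux

variable {n : ℕ}

/-- remove-top chain partition of `Icc A B \ {B}` -/
def rt (B : Finset (Fin n)) : Finset (Fin n) → List (Fin n) →
    List (Finset (Fin n) × Finset (Fin n))
  | _, [] => []
  | A, x :: xs => (A, B.erase x) :: rt B (insert x A) xs

/-- remove-bottom chain partition of `Icc A B \ {A}` -/
def rb (A : Finset (Fin n)) : Finset (Fin n) → List (Fin n) →
    List (Finset (Fin n) × Finset (Fin n))
  | _, [] => []
  | B, x :: xs => (insert x A, B) :: rb A (B.erase x) xs

lemma toFinset_step {x : Fin n} {xs : List (Fin n)} {A B : Finset (Fin n)}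
    (hN : (x :: xs).Nodup) (hT : (x :: xs).toFinset = B \ A) :
    x ∈ B ∧ x ∉ A ∧ xs.toFinset = B \ insert x A ∧ xs.toFinset = (B.erase x) \ A := by
  have hx : x ∈ B \ A := by rw [← hT]; simp
  have hxxs : x ∉ xs := (List.nodup_cons.1 hN).1
  obtain ⟨hxB, hxA⟩ := mem_sdiff.1 hx
  have h1 : xs.toFinset = B \ insert x A := by
    ext y
    simp only [List.mem_toFinset, mem_sdiff, mem_insert]
    constructor
    · intro hy
      have hyBA : y ∈ B \ A := by rw [← hT]; simp [hy]
      have hyx : y ≠ x := fun h => hxxs (h ▸ hy)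
      obtain ⟨h1, h2⟩ := mem_sdiff.1 hyBA
      exact ⟨h1, by push_neg; exact ⟨hyx, h2⟩⟩
    · rintro ⟨hyB, hy⟩
      push_neg at hy
      have : y ∈ (x :: xs).toFinset := by rw [hT]; exact mem_sdiff.2 ⟨hyB, hy.2⟩
      simp only [List.toFinset_cons, mem_insert, List.mem_toFinset] at this
      rcases this with h | h
      · exact absurd h hy.1
      · exact h
  have h2 : xs.toFinset = (B.erase x) \ A := by
    rw [h1]; ext y
    simp only [mem_sdiff, mem_insert, mem_erase]
    constructor
    · rintro ⟨hyB, hy⟩; push_neg at hy; exact ⟨⟨hy.1, hyB⟩, hy.2⟩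
    · rintro ⟨⟨hyx, hyB⟩, hyA⟩; exact ⟨hyB, by push_neg; exact ⟨hyx, hyA⟩⟩
  exact ⟨hxB, hxA, h1, h2⟩

lemma rt_spec (B : Finset (Fin n)) (l : List (Fin n)) :
    ∀ (A : Finset (Fin n)), l.Nodup → l.toFinset = B \ A → A ⊆ B →
    ∀ p ∈ rt B A l, A ⊆ p.1 ∧ p.1 ⊆ p.2 ∧ ∃ x ∈ B, p.2 = B.erase x := by
  induction l with
  | nil => intro A _ _ _ p hp; simp [rt] at hp
  | cons x xs ih =>
    intro A hN hT hA p hp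
    obtain ⟨hxB, hxA, hT', _⟩ := toFinset_step hN hT
    have hA' : insert x A ⊆ B := insert_subset hxB hA
    rcases List.mem_cons.1 hp with h | h
    · subst h
      exact ⟨Subset.rfl, fun y hy => mem_erase.2 ⟨fun he => hxA (he ▸ hy), hA hy⟩,
        x, hxB, rfl⟩
    · obtain ⟨h1, h2, h3⟩ := ih (insert x A) (List.nodup_cons.1 hN).2 hT' hA' p h
      exact ⟨(subset_insert x A).trans h1, h2, h3⟩

lemma rt_cover (B : Finset (Fin n)) (l : List (Fin n)) :
    ∀ (A : Finset (Fin n)), l.Nodup → l.toFinset = B \ A → A ⊆ B →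
    ∀ C, A ⊆ C → C ⊆ B → C ≠ B → ∃ p ∈ rt B A l, p.1 ⊆ C ∧ C ⊆ p.2 := by
  induction l with
  | nil =>
    intro A _ hT hA C hAC hCB hCne
    have : B \ A = ∅ := by rw [← hT]; simp
    have hBA : B ⊆ A := sdiff_eq_empty_iff_subset.1 this
    exact absurd (Subset.antisymm hCB (hBA.trans hAC)) hCne
  | cons x xs ih =>
    intro A hN hT hA C hAC hCB hCne
    obtain ⟨hxB, hxA, hT', _⟩ := toFinset_step hN hT
    by_cases hxC : x ∈ C
    · obtain ⟨p, hp, h1, h2⟩ := ih (insert x A) (List.nodup_cons.1 hN).2 hT'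
        (insert_subset hxB hA) C (insert_subset hxC hAC) hCB hCne
      exact ⟨p, List.mem_cons_of_mem _ hp, h1, h2⟩
    · exact ⟨(A, B.erase x), List.mem_cons_self, hAC,
        fun y hy => mem_erase.2 ⟨fun he => hxC (he ▸ hy), hCB hy⟩⟩

lemma rt_disj (B : Finset (Fin n)) (l : List (Fin n)) :
    ∀ (A : Finset (Fin n)), l.Nodup → l.toFinset = B \ A → A ⊆ B →
    ∀ p ∈ rt B A l, ∀ q ∈ rt B A l, p ≠ q →
      Disjoint (Finset.Icc p.1 p.2) (Finset.Icc q.1 q.2) := by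
  induction l with
  | nil => intro A _ _ _ p hp; simp [rt] at hp
  | cons x xs ih =>
    intro A hN hT hA p hp q hq hne
    obtain ⟨hxB, hxA, hT', _⟩ := toFinset_step hN hT
    have hN' := (List.nodup_cons.1 hN).2
    have hA' : insert x A ⊆ B := insert_subset hxB hA
    have key : ∀ r ∈ rt B (insert x A) xs,
        Disjoint (Finset.Icc A (B.erase x)) (Finset.Icc r.1 r.2) := by
      intro r hr
      have hbot : insert x A ⊆ r.1 := (rt_spec B xs (insert x A) hN' hT' hA' r hr).1
      rw [Finset.disjoint_left]
      intro C hC hC'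
      have h1 : x ∉ C := fun hxc =>
        (mem_erase.1 ((Finset.mem_Icc.1 hC).2 hxc)).1 rfl
      exact h1 ((Finset.mem_Icc.1 hC').1 (hbot (mem_insert_self x A)))
    rcases List.mem_cons.1 hp with h1 | h1 <;> rcases List.mem_cons.1 hq with h2 | h2
    · exact absurd (h1.trans h2.symm) hne
    · subst h1; exact key q h2
    · subst h2; exact (key p h1).symm
    · exact ih (insert x A) hN' hT' hA' p h1 q h2 hne

lemma rb_spec (A : Finset (Fin n)) (l : List (Fin n)) :
    ∀ (B : Finset (Fin n)), l.Nodup → l.toFinset = B \ A → A ⊆ B →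
    ∀ p ∈ rb A B l, A ⊆ p.1 ∧ p.1 ≠ A ∧ p.1 ⊆ p.2 ∧ p.2 ⊆ B := by
  induction l with
  | nil => intro B _ _ _ p hp; simp [rb] at hp
  | cons x xs ih =>
    intro B hN hT hA p hp
    obtain ⟨hxB, hxA, _, hT'⟩ := toFinset_step hN hT
    have hA' : A ⊆ B.erase x := fun y hy =>
      mem_erase.2 ⟨fun he => hxA (he ▸ hy), hA hy⟩
    rcases List.mem_cons.1 hp with h | h
    · subst h
      exact ⟨subset_insert x A, fun he => hxA (he ▸ mem_insert_self x A),
        insert_subset hxB hA, Subset.rfl⟩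
    · obtain ⟨h1, h2, h3, h4⟩ := ih (B.erase x) (List.nodup_cons.1 hN).2 hT' hA' p h
      exact ⟨h1, h2, h3, h4.trans (erase_subset x B)⟩

lemma rb_cover (A : Finset (Fin n)) (l : List (Fin n)) :
    ∀ (B : Finset (Fin n)), l.Nodup → l.toFinset = B \ A → A ⊆ B →
    ∀ C, A ⊆ C → C ⊆ B → C ≠ A → ∃ p ∈ rb A B l, p.1 ⊆ C ∧ C ⊆ p.2 := by
  induction l with
  | nil =>
    intro B _ hT hA C hAC hCB hCne
    have : B \ A = ∅ := by rw [← hT]; simp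
    have hBA : B ⊆ A := sdiff_eq_empty_iff_subset.1 this
    exact absurd (Subset.antisymm (hCB.trans hBA) hAC) hCne
  | cons x xs ih =>
    intro B hN hT hA C hAC hCB hCne
    obtain ⟨hxB, hxA, _, hT'⟩ := toFinset_step hN hT
    have hA' : A ⊆ B.erase x := fun y hy =>
      mem_erase.2 ⟨fun he => hxA (he ▸ hy), hA hy⟩
    by_cases hxC : x ∈ C
    · exact ⟨(insert x A, B), List.mem_cons_self, insert_subset hxC hAC, hCB⟩
    · obtain ⟨p, hp, h1, h2⟩ := ih (B.erase x) (List.nodup_cons.1 hN).2 hT' hA' C hAC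
        (fun y hy => mem_erase.2 ⟨fun he => hxC (he ▸ hy), hCB hy⟩) hCne
      exact ⟨p, List.mem_cons_of_mem _ hp, h1, h2⟩

lemma rb_disj (A : Finset (Fin n)) (l : List (Fin n)) :
    ∀ (B : Finset (Fin n)), l.Nodup → l.toFinset = B \ A → A ⊆ B →
    ∀ p ∈ rb A B l, ∀ q ∈ rb A B l, p ≠ q →
      Disjoint (Finset.Icc p.1 p.2) (Finset.Icc q.1 q.2) := by
  induction l with
  | nil => intro B _ _ _ p hp; simp [rb] at hp
  | cons x xs ih =>
    intro B hN hT hA p hp q hq hne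
    obtain ⟨hxB, hxA, _, hT'⟩ := toFinset_step hN hT
    have hN' := (List.nodup_cons.1 hN).2
    have hA' : A ⊆ B.erase x := fun y hy =>
      mem_erase.2 ⟨fun he => hxA (he ▸ hy), hA hy⟩
    have key : ∀ r ∈ rb A (B.erase x) xs,
        Disjoint (Finset.Icc (insert x A) B) (Finset.Icc r.1 r.2) := by
      intro r hr
      have htop : r.2 ⊆ B.erase x := (rb_spec A xs (B.erase x) hN' hT' hA' r hr).2.2.2
      rw [Finset.disjoint_left]
      intro C hC hC'
      have h1 : x ∈ C := (Finset.mem_Icc.1 hC).1 (mem_insert_self x A)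
      exact (mem_erase.1 (htop ((Finset.mem_Icc.1 hC').2 h1))).1 rfl
    rcases List.mem_cons.1 hp with h1 | h1 <;> rcases List.mem_cons.1 hq with h2 | h2
    · exact absurd (h1.trans h2.symm) hne
    · subst h1; exact key q h2
    · subst h2; exact (key p h1).symm
    · exact ih (B.erase x) hN' hT' hA' p h1 q h2 hne

lemma glue {Q : Finset (Finset (Fin n))} (P : IntervalPartition n Q)
    (p0 : Finset (Fin n) × Finset (Fin n)) (hp0 : p0 ∈ P.pairs)
    (t : Finset (Fin n)) (ht : t ∈ Finset.Icc p0.1 p0.2)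
    (R : List (Finset (Fin n) × Finset (Fin n)))
    (hRle : ∀ r ∈ R, r.1 ⊆ r.2)
    (hRsub : ∀ r ∈ R, Finset.Icc r.1 r.2 ⊆ (Finset.Icc p0.1 p0.2).erase t)
    (hRdisj : ∀ r ∈ R, ∀ s ∈ R, r ≠ s →
      Disjoint (Finset.Icc r.1 r.2) (Finset.Icc s.1 s.2))
    (hRcov : ∀ C ∈ (Finset.Icc p0.1 p0.2).erase t, ∃ r ∈ R, C ∈ Finset.Icc r.1 r.2) :
    ∃ P' : IntervalPartition n (Q.erase t),
      ∀ p ∈ P'.pairs, (p ∈ P.pairs ∧ p ≠ p0) ∨ p ∈ R := by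
  have hmem : ∀ p, p ∈ (P.pairs.erase p0) ∪ R.toFinset ↔
      (p ∈ P.pairs ∧ p ≠ p0) ∨ p ∈ R := by
    intro p
    simp only [mem_union, mem_erase, List.mem_toFinset]
    tauto
  have holdD : ∀ p ∈ P.pairs, p ≠ p0 →
      Disjoint (Finset.Icc p.1 p.2) (Finset.Icc p0.1 p0.2) :=
    fun p hp hne => P.disj p hp p0 hp0 hne
  refine ⟨⟨(P.pairs.erase p0) ∪ R.toFinset, ?_, ?_, ?_, ?_⟩, fun p hp => (hmem p).1 hp⟩
  · intro p hp
    rcases (hmem p).1 hp with ⟨h, _⟩ | h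
    · exact P.le p h
    · exact hRle p h
  · intro p hp
    rcases (hmem p).1 hp with ⟨h, hne⟩ | h
    · intro C hC
      refine mem_erase.2 ⟨fun he => ?_, P.sub p h hC⟩
      exact (Finset.disjoint_left.1 (holdD p h hne)) hC (he ▸ ht)
    · intro C hC
      have := hRsub p h hC
      exact mem_erase.2 ⟨(mem_erase.1 this).1, P.sub p0 hp0 (mem_erase.1 this).2⟩
  · intro p hp q hq hne
    have hsubR : ∀ r ∈ R, Finset.Icc r.1 r.2 ⊆ Finset.Icc p0.1 p0.2 :=
      fun r hr C hC => (mem_erase.1 (hRsub r hr hC)).2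
    rcases (hmem p).1 hp with ⟨h1, h1'⟩ | h1 <;> rcases (hmem q).1 hq with ⟨h2, h2'⟩ | h2
    · exact P.disj p h1 q h2 hne
    · exact (holdD p h1 h1').mono_right (hsubR q h2)
    · exact ((holdD q h2 h2').mono_right (hsubR p h1)).symm
    · exact hRdisj p h1 q h2 hne
  · intro C hC
    obtain ⟨hCne, hCQ⟩ := mem_erase.1 hC
    obtain ⟨p, hp, hCp⟩ := P.covers C hCQ
    by_cases hpe : p = p0
    · subst hpe
      obtain ⟨r, hr, hCr⟩ := hRcov C (mem_erase.2 ⟨hCne, hCp⟩)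
      exact ⟨r, (hmem r).2 (Or.inr hr), hCr⟩
    · exact ⟨p, (hmem p).2 (Or.inl ⟨hp, hpe⟩), hCp⟩

lemma sdepth_bdd {Q : Finset (Finset (Fin n))} (hQ : Q.Nonempty) :
    BddAbove {k | ∃ P : IntervalPartition n Q, ∀ p ∈ P.pairs, k ≤ p.2.card} := by
  refine ⟨n, fun k hk => ?_⟩
  obtain ⟨P, hP⟩ := hk
  obtain ⟨C, hC⟩ := hQ
  obtain ⟨p, hp, _⟩ := P.covers C hC
  exact (hP p hp).trans ((card_le_univ p.2).trans_eq (by simp))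

def trivialP (Q : Finset (Finset (Fin n))) : IntervalPartition n Q where
  pairs := Q.image fun C => (C, C)
  le := by intro p hp; obtain ⟨C, _, rfl⟩ := mem_image.1 hp; exact Subset.rfl
  sub := by
    intro p hp; obtain ⟨C, hC, rfl⟩ := mem_image.1 hp
    simp only [Finset.Icc_self]
    exact singleton_subset_iff.2 hC
  disj := by
    intro p hp q hq hne
    obtain ⟨C, _, rfl⟩ := mem_image.1 hp
    obtain ⟨C', _, rfl⟩ := mem_image.1 hq
    simp only [Finset.Icc_self, disjoint_singleton]
    exact fun h => hne (by rw [h])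
  covers := fun C hC => ⟨(C, C), mem_image_of_mem _ hC, by simp⟩

lemma zero_mem (Q : Finset (Finset (Fin n))) :
    0 ∈ {k | ∃ P : IntervalPartition n Q, ∀ p ∈ P.pairs, k ≤ p.2.card} :=
  ⟨trivialP Q, fun _ _ => Nat.zero_le _⟩

lemma sdepth_attained {Q : Finset (Finset (Fin n))} (hQ : Q.Nonempty) :
    ∃ P : IntervalPartition n Q, ∀ p ∈ P.pairs, sdepth Q ≤ p.2.card :=
  Nat.sSup_mem ⟨0, zero_mem Q⟩ (sdepth_bdd hQ)

lemma le_sdepth {Q : Finset (Finset (Fin n))} (hQ : Q.Nonempty) {k : ℕ}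
    (P : IntervalPartition n Q) (h : ∀ p ∈ P.pairs, k ≤ p.2.card) : k ≤ sdepth Q :=
  le_csSup (sdepth_bdd hQ) ⟨P, h⟩

lemma sdepth_le {Q : Finset (Finset (Fin n))} {m : ℕ}
    (h : ∀ k, (∃ P : IntervalPartition n Q, ∀ p ∈ P.pairs, k ≤ p.2.card) → k ≤ m) :
    sdepth Q ≤ m :=
  csSup_le ⟨0, zero_mem Q⟩ h

end StanleyAux

/-- Moving a maximal element `X` of maximum cardinality `|X| ≥ k+1` from the down
set `D` (with `k = sdepth D ≥ sdepth U`, `U = 2^[n] \ D`) to `U` preserves the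
inequality: `sdepth(D \ {X}) ≥ k` and `sdepth(U ∪ {X}) ≤ k`. -/
theorem move_large_facet
    (n : ℕ) (D : Finset (Finset (Fin n))) (hD : IsDownSet D) (h0 : ∅ ∈ D)
    (hUne : ((Finset.univ : Finset (Finset (Fin n))) \ D).Nonempty)
    (hle : sdepth ((Finset.univ : Finset (Finset (Fin n))) \ D) ≤ sdepth D)
    (X : Finset (Fin n)) (hX : MaxElt D X) (hXmax : ∀ B ∈ D, B.card ≤ X.card)
    (hXcard : sdepth D + 1 ≤ X.card) :
    sdepth D ≤ sdepth (D.erase X) ∧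
      sdepth (insert X ((Finset.univ : Finset (Finset (Fin n))) \ D)) ≤ sdepth D := by
  set U : Finset (Finset (Fin n)) := (Finset.univ : Finset (Finset (Fin n))) \ D with hU
  set k := sdepth D with hk
  have hXne : X ≠ ∅ := by
    intro h
    rw [h] at hXcard
    simp at hXcard
  have hXU : X ∉ U := by simp [hU, hX.1]
  constructor
  · -- Part 1 : k ≤ sdepth (D.erase X)
    obtain ⟨P, hP⟩ := StanleyAux.sdepth_attained (n := n) ⟨∅, h0⟩
    obtain ⟨p0, hp0, hXmem⟩ := P.covers X hX.1
    rw [Finset.mem_Icc] at hXmem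
    have hle0 : p0.1 ⊆ p0.2 := P.le p0 hp0
    have hp2D : p0.2 ∈ D := P.sub p0 hp0 (Finset.mem_Icc.2 ⟨hle0, Subset.rfl⟩)
    have hXp2 : X = p0.2 := hX.2 p0.2 hp2D hXmem.2
    set l := (p0.2 \ p0.1).toList with hl
    have hN : l.Nodup := Finset.nodup_toList _
    have hT : l.toFinset = p0.2 \ p0.1 := Finset.toList_toFinset _
    have hR := StanleyAux.rt_spec p0.2 l p0.1 hN hT hle0
    obtain ⟨P', hP'⟩ := StanleyAux.glue P p0 hp0 X
      (Finset.mem_Icc.2 ⟨hXmem.1, hXmem.2⟩)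
      (StanleyAux.rt p0.2 p0.1 l)
      (fun r hr => (hR r hr).2.1)
      (fun r hr C hC => by
        obtain ⟨hb, hl2, x, hxB, htop⟩ := hR r hr
        rw [Finset.mem_Icc] at hC
        have hCtop : C ⊆ p0.2.erase x := htop ▸ hC.2
        refine Finset.mem_erase.2 ⟨?_, Finset.mem_Icc.2
          ⟨hb.trans hC.1, hCtop.trans (Finset.erase_subset x p0.2)⟩⟩
        intro hCX
        have hxC : x ∈ C := by rw [hCX, hXp2]; exact hxB
        exact (Finset.mem_erase.1 (hCtop hxC)).1 rfl)
      (StanleyAux.rt_disj p0.2 l p0.1 hN hT hle0)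
      (fun C hC => by
        obtain ⟨hCne, hCI⟩ := Finset.mem_erase.1 hC
        rw [Finset.mem_Icc] at hCI
        obtain ⟨r, hr, h1, h2⟩ := StanleyAux.rt_cover p0.2 l p0.1 hN hT hle0 C
          hCI.1 hCI.2 (fun h => hCne (h.trans hXp2.symm))
        exact ⟨r, hr, Finset.mem_Icc.2 ⟨h1, h2⟩⟩)
    refine StanleyAux.le_sdepth ⟨∅, Finset.mem_erase.2 ⟨Ne.symm hXne, h0⟩⟩ P' ?_
    intro p hp
    rcases hP' p hp with ⟨h1, _⟩ | h1
    · exact hP p h1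
    · obtain ⟨_, _, x, hxB, htop⟩ := hR p h1
      rw [htop, Finset.card_erase_of_mem hxB, ← hXp2]
      omega
  · -- Part 2 : sdepth (insert X U) ≤ k
    refine StanleyAux.sdepth_le ?_
    rintro k' ⟨P, hP⟩
    by_contra hgt
    push_neg at hgt
    obtain ⟨p0, hp0, hXmem⟩ := P.covers X (Finset.mem_insert_self X U)
    rw [Finset.mem_Icc] at hXmem
    have hle0 : p0.1 ⊆ p0.2 := P.le p0 hp0
    have hbot : p0.1 = X := by
      by_contra hne
      have h1 : p0.1 ∈ insert X U :=
        P.sub p0 hp0 (Finset.mem_Icc.2 ⟨Subset.rfl, hle0⟩)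
      have h2 : p0.1 ∈ U := (Finset.mem_insert.1 h1).resolve_left hne
      have h3 := hD X hX.1 p0.1 hXmem.1
      simp [hU] at h2
      exact h2 h3
    set l := (p0.2 \ p0.1).toList with hl
    have hN : l.Nodup := Finset.nodup_toList _
    have hT : l.toFinset = p0.2 \ p0.1 := Finset.toList_toFinset _
    have hR := StanleyAux.rb_spec p0.1 l p0.2 hN hT hle0
    obtain ⟨P', hP'⟩ := StanleyAux.glue P p0 hp0 X
      (Finset.mem_Icc.2 ⟨hbot.le, hbot ▸ hle0⟩)
      (StanleyAux.rb p0.1 p0.2 l)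
      (fun r hr => (hR r hr).2.2.1)
      (fun r hr C hC => by
        obtain ⟨hb, hbne, hl2, htop⟩ := hR r hr
        rw [Finset.mem_Icc] at hC
        refine Finset.mem_erase.2 ⟨?_, Finset.mem_Icc.2
          ⟨hb.trans hC.1, hC.2.trans htop⟩⟩
        intro hCX
        refine hbne (Subset.antisymm ?_ hb)
        rw [← hbot] at hCX
        exact hCX ▸ hC.1)
      (StanleyAux.rb_disj p0.1 l p0.2 hN hT hle0)
      (fun C hC => by
        obtain ⟨hCne, hCI⟩ := Finset.mem_erase.1 hC
        rw [Finset.mem_Icc] at hCI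
        obtain ⟨r, hr, h1, h2⟩ := StanleyAux.rb_cover p0.1 l p0.2 hN hT hle0 C
          hCI.1 hCI.2 (fun h => hCne (h.trans hbot))
        exact ⟨r, hr, Finset.mem_Icc.2 ⟨h1, h2⟩⟩)
    have hQE : (insert X U).erase X = U := Finset.erase_insert hXU
    have hUlow : k + 1 ≤ sdepth ((insert X U).erase X) := by
      obtain ⟨u, hu⟩ := hUne
      refine StanleyAux.le_sdepth ⟨u, Finset.mem_erase.2
        ⟨fun he => hXU (by rwa [he] at hu), Finset.mem_insert_of_mem hu⟩⟩ P' ?_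
      intro p hp
      rcases hP' p hp with ⟨h1, _⟩ | h1
      · exact (hP p h1).trans' (by omega)
      · obtain ⟨hb, _, hl2, _⟩ := hR p h1
        calc k + 1 ≤ X.card := hXcard
        _ ≤ p.2.card := Finset.card_le_card (hbot ▸ hb.trans hl2)
    rw [hQE] at hUlow
    omega
end

section
/- Let n ≥ 2 and let D ⊆ 2^[n] be a down set with ∅ ∈ D such that every maximal element of D contains the element n. Let D' = {A ∈ D : n ∉ A}, regarded as a down set in 2^[n−1], and let U = 2^[n] \ D and U' = 2^[n−1] \ D'. If U' is nonempty, then sdepth(U) ≥ sdepth(U') + 1 and sdepth(D) ≥ sdepth(D') + 1. (This is the reduction step showing a minimal counterexample has no vertex common to all facets.) -/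
open Finset

/-- The trivial interval partition of `Q` into singletons. -/
def trivialPartition (n : ℕ) (Q : Finset (Finset (Fin n))) : IntervalPartition n Q where
  pairs := Q.image (fun A => (A, A))
  le := by
    intro p hp
    obtain ⟨A, _, rfl⟩ := Finset.mem_image.mp hp
    exact subset_rfl
  sub := by
    intro p hp
    obtain ⟨A, hA, rfl⟩ := Finset.mem_image.mp hp
    simp [Finset.Icc_self, hA]
  disj := by
    intro p hp q hq hpq
    obtain ⟨A, hA, rfl⟩ := Finset.mem_image.mp hp
    obtain ⟨B, hB, rfl⟩ := Finset.mem_image.mp hq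
    simp only [Finset.Icc_self]
    simp only [ne_eq, Prod.mk.injEq] at hpq
    rw [Finset.disjoint_singleton]
    exact fun h => hpq ⟨h, h⟩
  covers := by
    intro C hC
    exact ⟨(C, C), Finset.mem_image.mpr ⟨C, hC, rfl⟩, by simp⟩

lemma sdepth_bddAbove {n : ℕ} (Q : Finset (Finset (Fin n))) (h : Q.Nonempty) :
    BddAbove {k | ∃ P : IntervalPartition n Q, ∀ p ∈ P.pairs, k ≤ p.2.card} := by
  refine ⟨n, fun k hk => ?_⟩
  obtain ⟨P, hP⟩ := hk
  obtain ⟨C, hC⟩ := h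
  obtain ⟨p, hp, -⟩ := P.covers C hC
  exact (hP p hp).trans ((Finset.card_le_univ _).trans (by simp))

/-- In a down set all of whose maximal elements contain `x`, one may insert `x`
into any member. -/
lemma insert_mem_of_downset {n : ℕ} (x : Fin n) (D : Finset (Finset (Fin n)))
    (hD : IsDownSet D) (hfacets : ∀ B, MaxElt D B → x ∈ B)
    {A : Finset (Fin n)} (hA : A ∈ D) : insert x A ∈ D := by
  obtain ⟨B, hB, hBmax⟩ := Finset.exists_max_image (D.filter (fun C => A ⊆ C))
      Finset.card ⟨A, by simp [hA]⟩
  simp only [Finset.mem_filter] at hB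
  have hmax : MaxElt D B := by
    refine ⟨hB.1, fun C hC hBC => ?_⟩
    exact Finset.eq_of_subset_of_card_le hBC
      (hBmax C (by simp [hC, hB.2.trans hBC]))
  exact hD B hB.1 _ (Finset.insert_subset (hfacets B hmax) hB.2)

/-- The key reduction step: if `Q'` avoids `x`, is nonempty, and `Q` is exactly the
family of sets whose `x`-erasure lies in `Q'`, then `sdepth Q' + 1 ≤ sdepth Q`. -/
lemma sdepth_step {n : ℕ} (x : Fin n) (Q' Q : Finset (Finset (Fin n)))
    (hQ'x : ∀ A ∈ Q', x ∉ A) (hne : Q'.Nonempty)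
    (hQ : ∀ C : Finset (Fin n), C ∈ Q ↔ C.erase x ∈ Q') :
    sdepth Q' + 1 ≤ sdepth Q := by
  have hQne : Q.Nonempty := by
    obtain ⟨A, hA⟩ := hne
    exact ⟨A, (hQ A).2 (by rwa [Finset.erase_eq_of_notMem (hQ'x A hA)])⟩
  have hmem : sdepth Q' ∈ {k | ∃ P : IntervalPartition n Q', ∀ p ∈ P.pairs, k ≤ p.2.card} :=
    Nat.sSup_mem ⟨0, trivialPartition n Q', fun p _ => Nat.zero_le _⟩ (sdepth_bddAbove Q' hne)
  obtain ⟨P, hP⟩ := hmem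
  have hx2 : ∀ p ∈ P.pairs, x ∉ p.2 := fun p hp =>
    hQ'x p.2 (P.sub p hp (Finset.mem_Icc.mpr ⟨P.le p hp, subset_rfl⟩))
  have hx1 : ∀ p ∈ P.pairs, x ∉ p.1 := fun p hp h => hx2 p hp (P.le p hp h)
  -- a set is in the new interval iff its erasure is in the old interval
  have hkey : ∀ p ∈ P.pairs, ∀ C : Finset (Fin n),
      C ∈ Finset.Icc p.1 (insert x p.2) ↔ C.erase x ∈ Finset.Icc p.1 p.2 := by
    intro p hp C
    simp only [Finset.mem_Icc, Finset.le_iff_subset]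
    constructor
    · rintro ⟨h1, h2⟩
      exact ⟨Finset.subset_erase.mpr ⟨h1, hx1 p hp⟩, Finset.subset_insert_iff.mp h2⟩
    · rintro ⟨h1, h2⟩
      exact ⟨h1.trans (Finset.erase_subset _ _), Finset.subset_insert_iff.mpr h2⟩
  refine le_csSup (sdepth_bddAbove Q hQne) ?_
  refine ⟨⟨P.pairs.image (fun p => (p.1, insert x p.2)), ?_, ?_, ?_, ?_⟩, ?_⟩
  · intro p hp
    obtain ⟨q, hq, rfl⟩ := Finset.mem_image.mp hp
    exact (P.le q hq).trans (Finset.subset_insert _ _)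
  · intro p hp C hC
    obtain ⟨q, hq, rfl⟩ := Finset.mem_image.mp hp
    exact (hQ C).2 (P.sub q hq ((hkey q hq C).mp hC))
  · intro p hp q hq hpq
    obtain ⟨p', hp', rfl⟩ := Finset.mem_image.mp hp
    obtain ⟨q', hq', rfl⟩ := Finset.mem_image.mp hq
    have hne' : p' ≠ q' := by rintro rfl; exact hpq rfl
    rw [Finset.disjoint_left]
    intro C hC1 hC2
    exact Finset.disjoint_left.mp (P.disj p' hp' q' hq' hne')
      ((hkey p' hp' C).mp hC1) ((hkey q' hq' C).mp hC2)
  · intro C hC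
    obtain ⟨p, hp, hCp⟩ := P.covers (C.erase x) ((hQ C).mp hC)
    exact ⟨(p.1, insert x p.2), Finset.mem_image.mpr ⟨p, hp, rfl⟩,
      (hkey p hp C).mpr hCp⟩
  · intro p hp
    obtain ⟨q, hq, rfl⟩ := Finset.mem_image.mp hp
    simp only [Finset.card_insert_of_notMem (hx2 q hq)]
    exact Nat.add_le_add_right (hP q hq) 1

/-- If every maximal element of the down set `D ⊆ 2^[n]` contains the element `x`
(playing the role of `n`), then with `D' = {A ∈ D : x ∉ A}` regarded as a down set
in `2^([n] \ {x})`, `U = 2^[n] \ D`, and `U' = 2^([n] \ {x}) \ D'` nonempty, we have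
`sdepth(U) ≥ sdepth(U') + 1` and `sdepth(D) ≥ sdepth(D') + 1`. -/
theorem reduction_vertex_in_all_facets
    (n : ℕ) (hn : 2 ≤ n) (x : Fin n)
    (D : Finset (Finset (Fin n))) (hD : IsDownSet D) (h0 : ∅ ∈ D)
    (hfacets : ∀ B, MaxElt D B → x ∈ B)
    (hU' : ((Finset.univ.erase x).powerset \ D.filter (fun A => x ∉ A)).Nonempty) :
    sdepth (D.filter (fun A => x ∉ A)) + 1 ≤ sdepth D ∧
      sdepth ((Finset.univ.erase x).powerset \ D.filter (fun A => x ∉ A)) + 1 ≤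
        sdepth ((Finset.univ : Finset (Finset (Fin n))) \ D) := by
  have hins : ∀ A ∈ D, insert x A ∈ D := fun A hA => insert_mem_of_downset x D hD hfacets hA
  -- C ∈ D ↔ erase x C ∈ D
  have hequiv : ∀ C : Finset (Fin n), C ∈ D ↔ C.erase x ∈ D := by
    intro C
    constructor
    · intro h; exact hD C h _ (Finset.erase_subset _ _)
    · intro h
      exact hD _ (hins _ h) C (Finset.subset_insert_iff.mpr subset_rfl)
  constructor
  · refine sdepth_step x _ D (fun A hA => (Finset.mem_filter.mp hA).2)
      ⟨∅, Finset.mem_filter.mpr ⟨h0, Finset.notMem_empty x⟩⟩ ?_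
    intro C
    rw [hequiv C]
    simp [Finset.mem_filter]
  · refine sdepth_step x _ _ (fun A hA => ?_) hU' ?_
    · have := (Finset.mem_sdiff.mp hA).1
      rw [Finset.mem_powerset] at this
      exact fun hx => (Finset.mem_erase.mp (this hx)).1 rfl
    · intro C
      simp only [Finset.mem_sdiff, Finset.mem_filter, Finset.mem_powerset,
        Finset.mem_univ, true_and]
      have hpow : C.erase x ⊆ Finset.univ.erase x :=
        Finset.erase_subset_erase x (Finset.subset_univ C)
      have : (C.erase x ∈ D ∧ x ∉ C.erase x) ↔ C ∈ D := by
        simp [Finset.notMem_erase, ← hequiv C]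
      simp only [hpow, true_and]
      exact not_congr this.symm
end

section
/- Let n ≥ 2 and let D ⊆ 2^[n] be a down set with ∅ ∈ D such that no member of D contains the element n (so D ⊆ 2^[n−1]). Let U = 2^[n] \ D and U' = 2^[n−1] \ D, and suppose U' is nonempty. Then sdepth(U) ≥ sdepth(U'). (This is the reduction step showing a minimal counterexample has every element of [n] in some facet: the sets containing n form the single interval [{n},[n]], which is appended to a partition of U'.) -/
open Finset

/-- If no member of the down set `D ⊆ 2^[n]` contains the element `x` (playing the
role of `n`), so `D ⊆ 2^([n] \ {x})`, then with `U = 2^[n] \ D` and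
`U' = 2^([n] \ {x}) \ D` nonempty, we have `sdepth(U) ≥ sdepth(U')`. -/
theorem reduction_vertex_in_no_facet
    (n : ℕ) (hn : 2 ≤ n) (x : Fin n)
    (D : Finset (Finset (Fin n))) (hD : IsDownSet D) (h0 : ∅ ∈ D)
    (hx : ∀ A ∈ D, x ∉ A)
    (hU' : ((Finset.univ.erase x).powerset \ D).Nonempty) :
    sdepth ((Finset.univ.erase x).powerset \ D) ≤
      sdepth ((Finset.univ : Finset (Finset (Fin n))) \ D) := by
  set U' : Finset (Finset (Fin n)) := (Finset.univ.erase x).powerset \ D with hU'def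
  set U : Finset (Finset (Fin n)) := (Finset.univ : Finset (Finset (Fin n))) \ D with hUdef
  obtain ⟨C0, hC0⟩ := hU'
  have hC0U : C0 ∈ U :=
    Finset.mem_sdiff.mpr ⟨Finset.mem_univ _, (Finset.mem_sdiff.mp hC0).2⟩
  unfold sdepth
  apply csSup_le_csSup
  · refine ⟨n, fun k hk => ?_⟩
    obtain ⟨P, hP⟩ := hk
    obtain ⟨p, hp, -⟩ := P.covers C0 hC0U
    calc k ≤ p.2.card := hP p hp
      _ ≤ n := by simpa using Finset.card_le_univ p.2
  · refine ⟨0, ⟨⟨U'.image (fun B => (B, B)), ?_, ?_, ?_, ?_⟩, fun p _ => Nat.zero_le _⟩⟩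
    · intro p hp; obtain ⟨B, -, rfl⟩ := Finset.mem_image.mp hp; exact subset_rfl
    · intro p hp; obtain ⟨B, hB, rfl⟩ := Finset.mem_image.mp hp
      intro C hC
      simp only [Finset.Icc_self, Finset.mem_singleton] at hC
      subst hC; exact hB
    · intro p hp q hq hne
      obtain ⟨B, -, rfl⟩ := Finset.mem_image.mp hp
      obtain ⟨C, -, rfl⟩ := Finset.mem_image.mp hq
      simp only [Finset.Icc_self]
      rw [Finset.disjoint_singleton]
      intro h; exact hne (by simp [h])
    · intro C hC; exact ⟨(C, C), Finset.mem_image_of_mem _ hC, by simp⟩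
  · rintro k ⟨P, hP⟩
    have hxnot : ∀ p ∈ P.pairs, x ∉ p.2 := by
      intro p hp
      have h2 : p.2 ∈ U' := P.sub p hp (Finset.mem_Icc.mpr ⟨P.le p hp, subset_rfl⟩)
      have hsub := Finset.mem_powerset.mp (Finset.mem_sdiff.mp h2).1
      intro hxin
      exact (Finset.mem_erase.mp (hsub hxin)).1 rfl
    refine ⟨⟨insert ({x}, Finset.univ) P.pairs, ?_, ?_, ?_, ?_⟩, ?_⟩
    · intro p hp
      rcases Finset.mem_insert.mp hp with rfl | hp
      · exact Finset.subset_univ _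
      · exact P.le p hp
    · intro p hp
      rcases Finset.mem_insert.mp hp with rfl | hp
      · intro C hC
        simp only [Finset.mem_Icc] at hC
        refine Finset.mem_sdiff.mpr ⟨Finset.mem_univ _, fun hCD => ?_⟩
        exact hx C hCD (hC.1 (Finset.mem_singleton_self x))
      · intro C hC
        have hCU' := P.sub p hp hC
        exact Finset.mem_sdiff.mpr ⟨Finset.mem_univ _, (Finset.mem_sdiff.mp hCU').2⟩
    · intro p hp q hq hne
      have key : ∀ r ∈ P.pairs,
          Disjoint (Finset.Icc ({x} : Finset (Fin n)) Finset.univ) (Finset.Icc r.1 r.2) := by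
        intro r hr
        rw [Finset.disjoint_left]
        intro C hC hC'
        have hxC : x ∈ C := (Finset.mem_Icc.mp hC).1 (Finset.mem_singleton_self x)
        exact hxnot r hr ((Finset.mem_Icc.mp hC').2 hxC)
      rcases Finset.mem_insert.mp hp with rfl | hp <;>
        rcases Finset.mem_insert.mp hq with rfl | hq
      · exact absurd rfl hne
      · exact key q hq
      · exact (key p hp).symm
      · exact P.disj p hp q hq hne
    · intro C hC
      by_cases hxC : x ∈ C
      · exact ⟨({x}, Finset.univ), Finset.mem_insert_self _ _,
          Finset.mem_Icc.mpr ⟨Finset.singleton_subset_iff.mpr hxC, Finset.subset_univ _⟩⟩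
      · have hCU' : C ∈ U' := by
          refine Finset.mem_sdiff.mpr ⟨Finset.mem_powerset.mpr ?_, (Finset.mem_sdiff.mp hC).2⟩
          intro a ha
          exact Finset.mem_erase.mpr ⟨fun h => hxC (h ▸ ha), Finset.mem_univ _⟩
        obtain ⟨p, hp, hmem⟩ := P.covers C hCU'
        exact ⟨p, Finset.mem_insert_of_mem hp, hmem⟩
    · intro p hp
      rcases Finset.mem_insert.mp hp with rfl | hp
      · obtain ⟨q, hq, -⟩ := P.covers C0 hC0
        calc k ≤ q.2.card := hP q hq
          _ ≤ (Finset.univ : Finset (Fin n)).card := Finset.card_le_univ _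
      · exact hP p hp
end

section
/- Let 0 ≤ k ≤ n and let Q ⊆ 2^[n] be a family that admits an interval partition in which the maximal element of every interval has exactly k elements. For 0 ≤ i ≤ k let f_i = |{A ∈ Q : |A| = i}|. Then for every m with 0 ≤ m ≤ k, the alternating sum Σ_{i=0}^{m} (−1)^{m−i} · C(k−i, m−i) · f_i is nonnegative. (This is the necessity of the combinatorial criterion: the quantity equals the number of intervals of the partition whose minimal element has size m, since an interval with minimal element of size i contains exactly C(k−i, j−i) sets of size j.) -/
open Finset

lemma icc_filter_card {n : ℕ} (A B : Finset (Fin n)) (hAB : A ⊆ B) (i : ℕ) :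
    ((Finset.Icc A B).filter (fun C => C.card = i)).card =
      if A.card ≤ i then (B.card - A.card).choose (i - A.card) else 0 := by
  split_ifs with h
  · rw [← Finset.card_sdiff_of_subset hAB, ← Finset.card_powersetCard (i - A.card) (B \ A)]
    apply Finset.card_bij' (fun C _ => C \ A) (fun S _ => S ∪ A)
    · intro C hC
      simp only [mem_filter, Finset.mem_Icc] at hC
      simp only [Finset.mem_powersetCard]
      exact ⟨Finset.sdiff_subset_sdiff hC.1.2 le_rfl,
        by rw [Finset.card_sdiff_of_subset hC.1.1, hC.2]⟩
    · intro S hS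
      simp only [Finset.mem_powersetCard] at hS
      have hdisj : Disjoint S A := Finset.disjoint_of_subset_left hS.1 (Finset.sdiff_disjoint)
      simp only [mem_filter, Finset.mem_Icc]
      refine ⟨⟨Finset.subset_union_right, Finset.union_subset (hS.1.trans (Finset.sdiff_subset)) hAB⟩, ?_⟩
      rw [Finset.card_union_of_disjoint hdisj, hS.2]
      omega
    · intro C hC
      simp only [mem_filter, Finset.mem_Icc] at hC
      exact Finset.sdiff_union_of_subset hC.1.1
    · intro S hS
      simp only [Finset.mem_powersetCard] at hS
      have hdisj : Disjoint S A := Finset.disjoint_of_subset_left hS.1 (Finset.sdiff_disjoint)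
      rw [Finset.union_sdiff_cancel_right hdisj]
  · rw [Finset.card_eq_zero, Finset.filter_eq_empty_iff]
    intro C hC hCi
    rw [Finset.mem_Icc] at hC
    have := Finset.card_le_card hC.1
    omega

lemma ident (k m j : ℕ) (hm : m ≤ k) (hj : j ≤ k) :
    ∑ i ∈ Finset.range (m + 1),
      (-1 : ℤ) ^ (m - i) * ((k - i).choose (m - i) : ℤ) *
        (if j ≤ i then ((k - j).choose (i - j) : ℤ) else 0) =
    if j = m then 1 else 0 := by
  by_cases hjm : j ≤ m
  · have h0 : ∀ i ∈ Finset.range j, (-1 : ℤ) ^ (m - i) * ((k - i).choose (m - i) : ℤ) *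
        (if j ≤ i then ((k - j).choose (i - j) : ℤ) else 0) = 0 := by
      intro i hi
      rw [Finset.mem_range] at hi
      rw [if_neg (by omega)]; ring
    rw [Finset.range_eq_Ico, ← Finset.sum_Ico_consecutive _ (Nat.zero_le j) (by omega),
      ← Finset.range_eq_Ico, Finset.sum_eq_zero h0, zero_add,
      Finset.sum_Ico_eq_sum_range]
    have hd : m + 1 - j = (m - j) + 1 := by omega
    rw [hd]
    set d := m - j with hdd
    set K := k - j with hKK
    have hdK : d ≤ K := by omega
    have key : ∀ t ∈ Finset.range (d + 1),
        (-1 : ℤ) ^ (m - (j + t)) * ((k - (j + t)).choose (m - (j + t)) : ℤ) *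
          (if j ≤ j + t then ((k - j).choose (j + t - j) : ℤ) else 0) =
        (K.choose d : ℤ) * ((-1 : ℤ) ^ (d - t) * (d.choose t : ℤ)) := by
      intro t ht
      rw [Finset.mem_range] at ht
      rw [if_pos (by omega)]
      have h1 : m - (j + t) = d - t := by omega
      have h2 : k - (j + t) = K - t := by omega
      have h3 : j + t - j = t := by omega
      rw [h1, h2, h3]
      have := Nat.choose_mul (n := K) (show t ≤ d by omega)
      -- K.choose d * d.choose t = K.choose t * (K - t).choose (d - t)
      have hcast : ((K - t).choose (d - t) : ℤ) * (K.choose t : ℤ) =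
          (K.choose d : ℤ) * (d.choose t : ℤ) := by
        rw [mul_comm]
        exact_mod_cast this.symm
      calc (-1 : ℤ) ^ (d - t) * ((K - t).choose (d - t) : ℤ) * (K.choose t : ℤ)
          = (-1 : ℤ) ^ (d - t) * (((K - t).choose (d - t) : ℤ) * (K.choose t : ℤ)) := by ring
        _ = (-1 : ℤ) ^ (d - t) * ((K.choose d : ℤ) * (d.choose t : ℤ)) := by rw [hcast]
        _ = (K.choose d : ℤ) * ((-1 : ℤ) ^ (d - t) * (d.choose t : ℤ)) := by ring
    rw [Finset.sum_congr rfl key, ← Finset.mul_sum]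
    have hrefl : ∑ t ∈ Finset.range (d + 1), (-1 : ℤ) ^ (d - t) * (d.choose t : ℤ) =
        ∑ t ∈ Finset.range (d + 1), (-1 : ℤ) ^ t * (d.choose t : ℤ) := by
      conv_rhs => rw [← Finset.sum_range_reflect]
      apply Finset.sum_congr rfl
      intro t ht
      rw [Finset.mem_range] at ht
      have h1 : d + 1 - 1 - t = d - t := by omega
      rw [h1, Nat.choose_symm (by omega)]
    rw [hrefl, Int.alternating_sum_range_choose]
    by_cases hd0 : d = 0
    · have : j = m := by omega
      simp [hd0, this]
    · have : j ≠ m := by omega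
      simp [hd0, this]
  · rw [if_neg (by omega)]
    apply Finset.sum_eq_zero
    intro i hi
    rw [Finset.mem_range] at hi
    rw [if_neg (by omega)]; ring

/-- Necessity of the combinatorial criterion: if `Q` admits an interval partition
in which every interval's maximal element has exactly `k` elements, then for
`0 ≤ m ≤ k` the alternating sum `Σ_{i=0}^m (-1)^(m-i) C(k-i, m-i) f_i` is
nonnegative, where `f_i` is the number of `i`-element members of `Q`. -/
theorem combinatorial_criterion_necessary
    (n k : ℕ) (hk : k ≤ n) (Q : Finset (Finset (Fin n)))
    (P : IntervalPartition n Q) (hP : ∀ p ∈ P.pairs, p.2.card = k)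
    (m : ℕ) (hm : m ≤ k) :
    0 ≤ ∑ i ∈ Finset.range (m + 1),
      (-1 : ℤ) ^ (m - i) * (Nat.choose (k - i) (m - i) : ℤ) *
        ((Q.filter (fun A => A.card = i)).card : ℤ) := by
  have hQ : ∀ i : ℕ, (Q.filter (fun A => A.card = i)).card =
      ∑ p ∈ P.pairs, ((Finset.Icc p.1 p.2).filter (fun A => A.card = i)).card := by
    intro i
    rw [← Finset.card_biUnion]
    · congr 1
      ext A
      simp only [Finset.mem_biUnion, Finset.mem_filter]
      constructor
      · rintro ⟨hAQ, hAi⟩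
        obtain ⟨p, hp, hAp⟩ := P.covers A hAQ
        exact ⟨p, hp, hAp, hAi⟩
      · rintro ⟨p, hp, hAp, hAi⟩
        exact ⟨P.sub p hp hAp, hAi⟩
    · intro p hp q hq hpq
      exact (P.disj p hp q hq hpq).mono (Finset.filter_subset _ _) (Finset.filter_subset _ _)
  have key : ∑ i ∈ Finset.range (m + 1),
      (-1 : ℤ) ^ (m - i) * (Nat.choose (k - i) (m - i) : ℤ) *
        ((Q.filter (fun A => A.card = i)).card : ℤ) =
      ∑ p ∈ P.pairs, (if p.1.card = m then 1 else 0 : ℤ) := by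
    have step1 : ∀ i ∈ Finset.range (m + 1),
        (-1 : ℤ) ^ (m - i) * (Nat.choose (k - i) (m - i) : ℤ) *
          ((Q.filter (fun A => A.card = i)).card : ℤ) =
        ∑ p ∈ P.pairs, (-1 : ℤ) ^ (m - i) * (Nat.choose (k - i) (m - i) : ℤ) *
          (if p.1.card ≤ i then ((k - p.1.card).choose (i - p.1.card) : ℤ) else 0) := by
      intro i _
      rw [hQ i, Nat.cast_sum, Finset.mul_sum]
      apply Finset.sum_congr rfl
      intro p hp
      congr 1
      rw [icc_filter_card _ _ (P.le p hp) i, hP p hp]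
      split_ifs <;> simp
    rw [Finset.sum_congr rfl step1, Finset.sum_comm]
    apply Finset.sum_congr rfl
    intro p hp
    have hj : p.1.card ≤ k := hP p hp ▸ Finset.card_le_card (P.le p hp)
    exact ident k m p.1.card hm hj
  rw [key]
  apply Finset.sum_nonneg
  intro p _
  split_ifs <;> norm_num
end

section
/- Let 0 ≤ k ≤ n and let Q ⊆ 2^[n] be a family that admits an interval partition in which the maximal element of every interval has exactly k elements. Then for every A ∈ Q and every m with 0 ≤ m ≤ k − |A|, the alternating sum Σ_{i=0}^{m} (−1)^{m−i} · C(k−|A|−i, m−i) · g_i is nonnegative, where g_i = |{B ∈ Q : A ⊆ B and |B| = |A| + i}|. (This is the necessity of the strong combinatorial criterion: restricting the partition to the closed up set of A inside Q again yields an interval partition with all maximal elements of size k.) -/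
open Finset

lemma key_ident (N s : ℕ) (hs : s ≤ N) :
    ∑ t ∈ Finset.range (s+1),
      (-1:ℤ)^(s-t) * ((N-t).choose (s-t) : ℤ) * (N.choose t : ℤ)
      = if s = 0 then 1 else 0 := by
  have h1 : ∀ t ∈ Finset.range (s+1),
      (-1:ℤ)^(s-t) * ((N-t).choose (s-t) : ℤ) * (N.choose t : ℤ)
      = (N.choose s : ℤ) * ((-1:ℤ)^(s-t) * (s.choose t : ℤ)) := by
    intro t ht
    have htles : t ≤ s := Nat.lt_succ_iff.mp (Finset.mem_range.mp ht)
    have := Nat.choose_mul (n := N) htles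
    have h2 : (N.choose t : ℤ) * ((N-t).choose (s-t) : ℤ) = (N.choose s : ℤ) * (s.choose t : ℤ) := by
      exact_mod_cast congrArg (Nat.cast : ℕ → ℤ) this.symm
    rw [mul_right_comm, mul_assoc, h2]; ring
  rw [Finset.sum_congr rfl h1, ← Finset.mul_sum]
  have h3 : ∑ t ∈ Finset.range (s+1), (-1:ℤ)^(s-t) * (s.choose t : ℤ)
      = ∑ t ∈ Finset.range (s+1), (-1:ℤ)^t * (s.choose t : ℤ) := by
    rw [← Finset.sum_range_reflect]
    apply Finset.sum_congr rfl
    intro t ht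
    have htles : t ≤ s := Nat.lt_succ_iff.mp (Finset.mem_range.mp ht)
    rw [Nat.add_sub_cancel, Nat.sub_sub_self htles, Nat.choose_symm htles]
  rw [h3, Int.alternating_sum_range_choose]
  split <;> simp_all [Nat.choose_zero_right]

lemma count_Icc {n : ℕ} (L D : Finset (Fin n)) (hLD : L ⊆ D) (s : ℕ) :
    ((Finset.Icc L D).filter (fun B => B.card = s)).card
      = if L.card ≤ s then (D.card - L.card).choose (s - L.card) else 0 := by
  split
  case isFalse h =>
    rw [Finset.card_eq_zero]
    rw [Finset.filter_eq_empty_iff]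
    intro B hB hBs
    rw [Finset.mem_Icc] at hB
    exact h (hBs ▸ Finset.card_le_card hB.1)
  case isTrue h =>
    rw [← Finset.card_sdiff_of_subset hLD, ← Finset.card_powersetCard (s - L.card) (D \ L)]
    apply Finset.card_bij' (fun B _ => B \ L) (fun S _ => S ∪ L)
    · intro B hB
      simp only [Finset.mem_filter, Finset.mem_Icc] at hB
      rw [Finset.mem_powersetCard]
      refine ⟨Finset.sdiff_subset_sdiff hB.1.2 (le_refl L), ?_⟩
      rw [Finset.card_sdiff_of_subset hB.1.1, hB.2]
    · intro S hS
      rw [Finset.mem_powersetCard] at hS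
      have hdisj : Disjoint S L := Finset.disjoint_left.mpr fun a haS haL =>
        (Finset.mem_sdiff.mp (hS.1 haS)).2 haL
      simp only [Finset.mem_filter, Finset.mem_Icc]
      refine ⟨⟨Finset.subset_union_right, Finset.union_subset
        (fun a ha => (Finset.mem_sdiff.mp (hS.1 ha)).1) hLD⟩, ?_⟩
      rw [Finset.card_union_of_disjoint hdisj, hS.2, Nat.sub_add_cancel h]
    · intro B hB
      simp only [Finset.mem_filter, Finset.mem_Icc] at hB
      exact Finset.sdiff_union_of_subset hB.1.1
    · intro S hS
      rw [Finset.mem_powersetCard] at hS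
      have hdisj : Disjoint S L := Finset.disjoint_left.mpr fun a haS haL =>
        (Finset.mem_sdiff.mp (hS.1 haS)).2 haL
      rw [Finset.union_sdiff_right, Finset.sdiff_eq_self_of_disjoint hdisj]

lemma per_pair {n : ℕ} (A C D : Finset (Fin n)) (hCD : C ⊆ D) (k m : ℕ)
    (hk : D.card = k) (hm : m ≤ k - A.card) :
    0 ≤ ∑ i ∈ Finset.range (m + 1),
      (-1 : ℤ) ^ (m - i) * (Nat.choose (k - A.card - i) (m - i) : ℤ) *
        (((Finset.Icc C D).filter (fun B => A ⊆ B ∧ B.card = A.card + i)).card : ℤ) := by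
  by_cases hAD : A ⊆ D
  · set a := A.card with ha
    set L := C ∪ A with hL
    have hLD : L ⊆ D := Finset.union_subset hCD hAD
    set l := L.card with hl
    have haL : a ≤ l := Finset.card_le_card Finset.subset_union_right
    have hlk : l ≤ k := hk ▸ Finset.card_le_card hLD
    set j := l - a with hj
    have hlaj : l = a + j := (Nat.add_sub_cancel' haL).symm
    set d := k - a with hd
    have hkl : k - l = d - j := by omega
    have hmd : m ≤ d := hm
    have hfilter : ∀ i : ℕ,
        ((Finset.Icc C D).filter (fun B => A ⊆ B ∧ B.card = a + i))
          = ((Finset.Icc L D).filter (fun B => B.card = a + i)) := by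
      intro i
      ext B
      simp only [Finset.mem_filter, Finset.mem_Icc, Finset.le_eq_subset, hL,
        Finset.union_subset_iff]
      tauto
    have hcard : ∀ i : ℕ,
        ((((Finset.Icc C D).filter (fun B => A ⊆ B ∧ B.card = a + i)).card : ℤ))
          = if j ≤ i then ((d - j).choose (i - j) : ℤ) else 0 := by
      intro i
      rw [hfilter i, count_Icc L D hLD (a + i), hk, ← hl]
      by_cases hji : j ≤ i
      · rw [if_pos (by omega), if_pos hji]
        norm_cast
        congr 1 <;> omega
      · rw [if_neg (by omega), if_neg hji]
        norm_num
    have hS : ∑ i ∈ Finset.range (m + 1),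
        (-1 : ℤ) ^ (m - i) * (Nat.choose (d - i) (m - i) : ℤ) *
          (((Finset.Icc C D).filter (fun B => A ⊆ B ∧ B.card = a + i)).card : ℤ)
        = ∑ i ∈ Finset.range (m + 1),
        (-1 : ℤ) ^ (m - i) * (Nat.choose (d - i) (m - i) : ℤ) *
          (if j ≤ i then ((d - j).choose (i - j) : ℤ) else 0) :=
      Finset.sum_congr rfl fun i _ => by rw [hcard i]
    rw [hS]
    by_cases hjm : j ≤ m
    · rw [Finset.range_eq_Ico,
        ← Finset.sum_Ico_consecutive _ (Nat.zero_le j) (by omega : j ≤ m + 1)]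
      have h0 : ∑ i ∈ Finset.Ico 0 j,
          (-1 : ℤ) ^ (m - i) * (Nat.choose (d - i) (m - i) : ℤ) *
            (if j ≤ i then ((d - j).choose (i - j) : ℤ) else 0) = 0 := by
        apply Finset.sum_eq_zero
        intro i hi
        rw [Finset.mem_Ico] at hi
        rw [if_neg (by omega)]
        ring
      rw [h0, zero_add, Finset.sum_Ico_eq_sum_range]
      have hrange : m + 1 - j = (m - j) + 1 := by omega
      rw [hrange]
      have h2 : ∑ t ∈ Finset.range ((m - j) + 1),
          (-1 : ℤ) ^ (m - (j + t)) * (Nat.choose (d - (j + t)) (m - (j + t)) : ℤ) *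
            (if j ≤ j + t then ((d - j).choose (j + t - j) : ℤ) else 0)
          = ∑ t ∈ Finset.range ((m - j) + 1),
          (-1 : ℤ) ^ ((m - j) - t) * (Nat.choose ((d - j) - t) ((m - j) - t) : ℤ) *
            (((d - j).choose t : ℤ)) := by
        apply Finset.sum_congr rfl
        intro t _
        have e1 : m - (j + t) = (m - j) - t := by omega
        have e2 : d - (j + t) = (d - j) - t := by omega
        have e3 : j + t - j = t := by omega
        rw [if_pos (Nat.le_add_right j t), e1, e2, e3]
      rw [h2, key_ident (d - j) (m - j) (by omega)]
      split <;> norm_num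
    · apply le_of_eq
      symm
      apply Finset.sum_eq_zero
      intro i hi
      rw [Finset.mem_range] at hi
      rw [if_neg (by omega)]
      ring
  · have hzero : ∀ i : ℕ,
        ((Finset.Icc C D).filter (fun B => A ⊆ B ∧ B.card = A.card + i)) = ∅ := by
      intro i
      rw [Finset.filter_eq_empty_iff]
      intro B hB hcontra
      rw [Finset.mem_Icc] at hB
      exact hAD (hcontra.1.trans hB.2)
    simp [hzero]

/-- Necessity of the strong combinatorial criterion: if `Q` admits an interval
partition in which every interval's maximal element has exactly `k` elements, then
for every `A ∈ Q` and `0 ≤ m ≤ k - |A|`, the alternating sum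
`Σ_{i=0}^m (-1)^(m-i) C(k-|A|-i, m-i) g_i` is nonnegative, where `g_i` is the
number of members `B` of `Q` with `A ⊆ B` and `|B| = |A| + i`. -/
theorem strong_combinatorial_criterion_necessary
    (n k : ℕ) (hk : k ≤ n) (Q : Finset (Finset (Fin n)))
    (P : IntervalPartition n Q) (hP : ∀ p ∈ P.pairs, p.2.card = k)
    (A : Finset (Fin n)) (hA : A ∈ Q) (m : ℕ) (hm : m ≤ k - A.card) :
    0 ≤ ∑ i ∈ Finset.range (m + 1),
      (-1 : ℤ) ^ (m - i) * (Nat.choose (k - A.card - i) (m - i) : ℤ) *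
        ((Q.filter (fun B => A ⊆ B ∧ B.card = A.card + i)).card : ℤ) := by
  have hQ : Q = P.pairs.biUnion (fun p => Finset.Icc p.1 p.2) := by
    ext B
    simp only [Finset.mem_biUnion]
    constructor
    · intro hB
      exact P.covers B hB
    · rintro ⟨p, hp, hBp⟩
      exact P.sub p hp hBp
  have hcard : ∀ i : ℕ,
      ((Q.filter (fun B => A ⊆ B ∧ B.card = A.card + i)).card : ℤ)
        = ∑ p ∈ P.pairs,
          ((((Finset.Icc p.1 p.2).filter (fun B => A ⊆ B ∧ B.card = A.card + i)).card : ℤ)) := by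
    intro i
    have hfb : Q.filter (fun B => A ⊆ B ∧ B.card = A.card + i)
        = P.pairs.biUnion (fun p =>
            (Finset.Icc p.1 p.2).filter (fun B => A ⊆ B ∧ B.card = A.card + i)) := by
      ext B
      simp only [Finset.mem_filter, Finset.mem_biUnion, hQ]
      tauto
    rw [hfb, Finset.card_biUnion, Nat.cast_sum]
    intro p hp q hq hpq
    exact Disjoint.mono (Finset.filter_subset _ _) (Finset.filter_subset _ _)
      (P.disj p hp q hq hpq)
  calc (0:ℤ) ≤ ∑ p ∈ P.pairs, ∑ i ∈ Finset.range (m + 1),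
        (-1 : ℤ) ^ (m - i) * (Nat.choose (k - A.card - i) (m - i) : ℤ) *
          (((Finset.Icc p.1 p.2).filter (fun B => A ⊆ B ∧ B.card = A.card + i)).card : ℤ) := by
        apply Finset.sum_nonneg
        intro p hp
        exact per_pair A p.1 p.2 (P.le p hp) k m (hP p hp) hm
    _ = _ := by
        rw [Finset.sum_comm]
        apply Finset.sum_congr rfl
        intro i _
        rw [hcard i, Finset.mul_sum]
end

section
/- Let D ⊆ 2^[5] be the down set generated by the antichain {{1,2,3},{1,2,4},{1,2,5},{1,3,4},{3,4,5},{2,3,4}}, i.e., D consists of all subsets of these six 3-element sets. Then every interval partition of D contains an interval whose maximal element has fewer than 3 elements; equivalently, sdepth(D) < 3. (The obstruction is the up set of {5} inside D, namely {{5},{1,5},{2,5},{3,5},{4,5},{1,2,5},{3,4,5}}: the interval covering {5} consumes two 2-sets and one 3-set from it, and the remaining two 2-sets and one 3-set cannot be covered by a single interval avoiding {5}. This shows the combinatorial criterion is not sufficient for sdepth(D) = 3.) -/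
open Finset

abbrev Gens : Finset (Finset (Fin 5)) := {{0,1,2}, {0,1,3}, {0,1,4}, {0,2,3}, {2,3,4}, {1,2,3}}

lemma key4 : ∀ B : Finset (Fin 5), (∃ a ∈ Gens, B ⊆ a) → 3 ≤ B.card →
    ({4} : Finset (Fin 5)) ⊆ B → B = {0,1,4} ∨ B = {2,3,4} := by decide
lemma key24 : ∀ B : Finset (Fin 5), (∃ a ∈ Gens, B ⊆ a) → 3 ≤ B.card →
    ({2,4} : Finset (Fin 5)) ⊆ B → B = {2,3,4} := by decide
lemma key34 : ∀ B : Finset (Fin 5), (∃ a ∈ Gens, B ⊆ a) → 3 ≤ B.card →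
    ({3,4} : Finset (Fin 5)) ⊆ B → B = {2,3,4} := by decide
lemma key04 : ∀ B : Finset (Fin 5), (∃ a ∈ Gens, B ⊆ a) → 3 ≤ B.card →
    ({0,4} : Finset (Fin 5)) ⊆ B → B = {0,1,4} := by decide
lemma key14 : ∀ B : Finset (Fin 5), (∃ a ∈ Gens, B ⊆ a) → 3 ≤ B.card →
    ({1,4} : Finset (Fin 5)) ⊆ B → B = {0,1,4} := by decide

theorem main_aux :
    ∀ D : Finset (Finset (Fin 5)),
      D = (Finset.univ : Finset (Finset (Fin 5))).filter
        (fun C => ∃ a ∈ ({{0,1,2}, {0,1,3}, {0,1,4}, {0,2,3}, {2,3,4}, {1,2,3}} :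
          Finset (Finset (Fin 5))), C ⊆ a) →
      (∀ P : IntervalPartition 5 D, ∃ p ∈ P.pairs, p.2.card < 3) := by
  intro D hD P
  by_contra hcon
  push_neg at hcon
  have memD : ∀ C : Finset (Fin 5), (∃ a ∈ Gens, C ⊆ a) → C ∈ D := by
    intro C hC; rw [hD, mem_filter]; exact ⟨mem_univ _, hC⟩
  have memD' : ∀ C ∈ D, ∃ a ∈ Gens, C ⊆ a := by
    intro C hC; rw [hD, mem_filter] at hC; exact hC.2
  -- top of any interval is in D and has card ≥ 3
  have top : ∀ p ∈ P.pairs, (∃ a ∈ Gens, p.2 ⊆ a) ∧ 3 ≤ p.2.card := by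
    intro p hp
    refine ⟨memD' _ (P.sub p hp (mem_Icc.mpr ⟨P.le p hp, subset_rfl⟩)), hcon p hp⟩
  obtain ⟨p, hp, hpc⟩ := P.covers {4} (memD _ (by decide))
  rw [mem_Icc] at hpc
  obtain ⟨q, hq, hqc⟩ := P.covers {2,4} (memD _ (by decide))
  rw [mem_Icc] at hqc
  obtain ⟨r, hr, hrc⟩ := P.covers {3,4} (memD _ (by decide))
  rw [mem_Icc] at hrc
  obtain ⟨q', hq', hqc'⟩ := P.covers {0,4} (memD _ (by decide))
  rw [mem_Icc] at hqc'
  obtain ⟨r', hr', hrc'⟩ := P.covers {1,4} (memD _ (by decide))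
  rw [mem_Icc] at hrc'
  have hq2 := key24 q.2 (top q hq).1 (top q hq).2 hqc.2
  have hr2 := key34 r.2 (top r hr).1 (top r hr).2 hrc.2
  have hq2' := key04 q'.2 (top q' hq').1 (top q' hq').2 hqc'.2
  have hr2' := key14 r'.2 (top r' hr').1 (top r' hr').2 hrc'.2
  rcases key4 p.2 (top p hp).1 (top p hp).2 hpc.2 with hp2 | hp2
  · -- p.2 = {0,1,4}; q,r have top {2,3,4}
    by_cases hqr : q = r
    · -- q.1 ⊆ {4}, so {4} ∈ Icc q.1 q.2, also in Icc p.1 p.2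
      subst hqr
      have h1 : q.1 ⊆ ({4} : Finset (Fin 5)) := by
        have := subset_inter hqc.1 hrc.1
        simpa using this.trans (by decide : ({2,4} ∩ {3,4} : Finset (Fin 5)) ⊆ {4})
      have hpq : p ≠ q := by
        intro h; rw [h] at hp2; rw [hp2] at hq2; exact absurd hq2 (by decide)
      have h4q : ({4} : Finset (Fin 5)) ∈ Finset.Icc q.1 q.2 :=
        mem_Icc.mpr ⟨h1, hq2 ▸ (by decide)⟩
      exact (Finset.disjoint_left.mp (P.disj p hp q hq hpq)
        (mem_Icc.mpr hpc)) h4q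
    · have h234q : ({2,3,4} : Finset (Fin 5)) ∈ Finset.Icc q.1 q.2 :=
        mem_Icc.mpr ⟨hqc.1.trans (by decide), hq2 ▸ subset_rfl⟩
      have h234r : ({2,3,4} : Finset (Fin 5)) ∈ Finset.Icc r.1 r.2 :=
        mem_Icc.mpr ⟨hrc.1.trans (by decide), hr2 ▸ subset_rfl⟩
      exact (Finset.disjoint_left.mp (P.disj q hq r hr hqr) h234q) h234r
  · -- p.2 = {2,3,4}; q',r' have top {0,1,4}
    by_cases hqr : q' = r'
    · subst hqr
      have h1 : q'.1 ⊆ ({4} : Finset (Fin 5)) := by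
        have := subset_inter hqc'.1 hrc'.1
        simpa using this.trans (by decide : ({0,4} ∩ {1,4} : Finset (Fin 5)) ⊆ {4})
      have hpq : p ≠ q' := by
        intro h; rw [h] at hp2; rw [hp2] at hq2'; exact absurd hq2' (by decide)
      have h4q : ({4} : Finset (Fin 5)) ∈ Finset.Icc q'.1 q'.2 :=
        mem_Icc.mpr ⟨h1, hq2' ▸ (by decide)⟩
      exact (Finset.disjoint_left.mp (P.disj p hp q' hq' hpq)
        (mem_Icc.mpr hpc)) h4q
    · have h014q : ({0,1,4} : Finset (Fin 5)) ∈ Finset.Icc q'.1 q'.2 :=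
        mem_Icc.mpr ⟨hqc'.1.trans (by decide), hq2' ▸ subset_rfl⟩
      have h014r : ({0,1,4} : Finset (Fin 5)) ∈ Finset.Icc r'.1 r'.2 :=
        mem_Icc.mpr ⟨hrc'.1.trans (by decide), hr2' ▸ subset_rfl⟩
      exact (Finset.disjoint_left.mp (P.disj q' hq' r' hr' hqr) h014q) h014r

/-- The down set of `2^[5]` generated by the antichain
`{{1,2,3},{1,2,4},{1,2,5},{1,3,4},{3,4,5},{2,3,4}}` (here with `[5]` identified with
`Fin 5`, so `i ∈ [5]` corresponds to `i - 1 : Fin 5`) has Stanley depth less than 3: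
every interval partition of it contains an interval whose maximal element has fewer
than 3 elements. -/
theorem example_criterion_not_sufficient :
    ∀ D : Finset (Finset (Fin 5)),
      D = (Finset.univ : Finset (Finset (Fin 5))).filter
        (fun C => ∃ a ∈ ({{0,1,2}, {0,1,3}, {0,1,4}, {0,2,3}, {2,3,4}, {1,2,3}} :
          Finset (Finset (Fin 5))), C ⊆ a) →
      (∀ P : IntervalPartition 5 D, ∃ p ∈ P.pairs, p.2.card < 3) ∧ sdepth D < 3 := by
  intro D hD
  have h1 := main_aux D hD
  refine ⟨h1, ?_⟩
  have h2 : sdepth D ≤ 2 := by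
    apply csSup_le'
    rintro k ⟨P, hP⟩
    obtain ⟨p, hp, hc⟩ := h1 P
    exact le_trans (hP p hp) (Nat.lt_succ_iff.mp hc)
  omega
end
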